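/- arXiv:1607.00278 — 4 statements merged into one kernel-verified Lean document; each statement's English description precedes it below -/
import Mathlib

section
/- The graph B_11 has an inside-obstacle representation. -/
noncomputable section

/-- The plane ℝ². -/
abbrev Plane : Type := EuclideanSpace ℝ (Fin 2)

/-- A point set is in general position if no three of its points are collinear. -/
def InGenPos (P : Set Plane) : Prop :=
  ∀ p ∈ P, ∀ q ∈ P, ∀ r ∈ P, p ≠ q → p ≠ r → q ≠ r →
    ¬ Collinear ℝ ({p, q, r} : Set Plane)

/-- The union of the closed segments corresponding to the edges of `G`
in the straight-line drawing given by `f`. -/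
def edgeUnion {V : Type} (G : SimpleGraph V) (f : V → Plane) : Set Plane :=
  ⋃ (u : V) (v : V) (_ : G.Adj u v), segment ℝ (f u) (f v)

/-- The unbounded connected component of the complement of the drawing. -/
def outsideRegion {V : Type} (G : SimpleGraph V) (f : V → Plane) : Set Plane :=
  {p | p ∈ (edgeUnion G f)ᶜ ∧
       ¬ Bornology.IsBounded (connectedComponentIn (edgeUnion G f)ᶜ p)}

/-- `(f, C)` is a single-obstacle representation of `G`. -/
def IsObstacleRep {V : Type} (G : SimpleGraph V) (f : V → Plane) (C : Set Plane) : Prop :=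
  Function.Injective f ∧ InGenPos (Set.range f) ∧
  IsOpen C ∧ IsConnected C ∧ Disjoint C (Set.range f) ∧
  ∀ u v : V, u ≠ v → (G.Adj u v ↔ Disjoint (segment ℝ (f u) (f v)) C)

/-- An outside-obstacle representation: the obstacle lies in the unbounded component. -/
def IsOutsideObstacleRep {V : Type} (G : SimpleGraph V) (f : V → Plane) (C : Set Plane) : Prop :=
  IsObstacleRep G f C ∧ C ⊆ outsideRegion G f

/-- An inside-obstacle representation: the obstacle avoids the unbounded component. -/
def IsInsideObstacleRep {V : Type} (G : SimpleGraph V) (f : V → Plane) (C : Set Plane) : Prop :=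
  IsObstacleRep G f C ∧ Disjoint C (outsideRegion G f)

/-- An exposed outside-obstacle representation: every vertex lies on the boundary of
the unbounded component. -/
def IsExposedOutsideObstacleRep {V : Type} (G : SimpleGraph V) (f : V → Plane)
    (C : Set Plane) : Prop :=
  IsOutsideObstacleRep G f C ∧ ∀ v : V, f v ∈ closure (outsideRegion G f)

/-- `p` is an extreme point ("on the convex hull") of the point set `P`. -/
def IsExtremePt (p : Plane) (P : Set Plane) : Prop :=
  p ∉ convexHull ℝ (P \ {p})

/-- `S` has at least `n` connected components. -/
def AtLeastNComponents (S : Set Plane) (n : ℕ) : Prop :=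
  ∃ p : Fin n → Plane, (∀ i, p i ∈ S) ∧
    ∀ i j : Fin n, i ≠ j →
      connectedComponentIn S (p i) ≠ connectedComponentIn S (p j)

/-- `S` has exactly `n` connected components. -/
def ExactlyNComponents (S : Set Plane) (n : ℕ) : Prop :=
  ∃ p : Fin n → Plane, (∀ i, p i ∈ S) ∧
    (∀ i j : Fin n, i ≠ j →
      connectedComponentIn S (p i) ≠ connectedComponentIn S (p j)) ∧
    ∀ q ∈ S, ∃ i : Fin n, connectedComponentIn S q = connectedComponentIn S (p i)

/-- The convex hulls of `A` and `B` are at least `t`-crossing. -/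
def AtLeastCrossing (A B : Set Plane) (t : ℕ) : Prop :=
  ((convexHull ℝ A) ∩ (convexHull ℝ B)).Nonempty ∧
    AtLeastNComponents ((convexHull ℝ A) \ (convexHull ℝ B)) (t + 1)

/-- The convex hulls of `A` and `B` are exactly `t`-crossing. -/
def ExactlyCrossing (A B : Set Plane) (t : ℕ) : Prop :=
  ((convexHull ℝ A) ∩ (convexHull ℝ B)).Nonempty ∧
    ExactlyNComponents ((convexHull ℝ A) \ (convexHull ℝ B)) (t + 1)


/-- Non-edge pairs of `B₁₁` (one orientation): the matching `zᵢzᵢ'` and the pairs `w zᵢ'`. -/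
def b11NonEdge (i j : Fin 11) : Prop :=
  (i.val < 5 ∧ j.val = i.val + 5) ∨ (i.val = 10 ∧ 5 ≤ j.val ∧ j.val ≤ 9)

/-- The graph `B₁₁`: vertices `0,…,4` are `z₁,…,z₅`, vertices `5,…,9` are `z₁',…,z₅'`,
vertex `10` is `w`.  The first ten vertices induce `K₁₀` minus the perfect matching
`{zᵢzᵢ' : i = 1,…,5}`, and `w` is adjacent exactly to `z₁,…,z₅`. -/
def B11 : SimpleGraph (Fin 11) where
  Adj i j := i ≠ j ∧ ¬ (b11NonEdge i j ∨ b11NonEdge j i)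
  symm := by
    constructor
    intro i j h
    exact ⟨h.1.symm, fun hc => h.2 hc.symm⟩
  loopless := by
    constructor
    intro i h
    exact h.1 rfl



namespace B11X

def cZ : Fin 11 → ℤ × ℤ :=
  ![(-8700,49250),(-15450,47550),(-21900,44950),(-27950,41450),(-33450,37150),(8700,-49250),(15450,-47550),(21900,-44950),(27950,-41450),(33450,-37150),(0,-1000)]
def HZ : ℤ × ℤ := (1000,-1000)
def EZ : Fin 6 → ℤ × ℤ := ![(0,0),(174,-1965),(309,-1931),(438,-1879),(559,-1809),(669,-1723)]
def dotZ (a b : ℤ × ℤ) : ℤ := a.1*b.1 + a.2*b.2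

def pt (a b : ℝ) : Plane := WithLp.toLp 2 (fun i : Fin 2 => if i = 0 then a else b)
def ptZ (p : ℤ × ℤ) : Plane := pt p.1 p.2
def fpt : Fin 11 → Plane := fun i => ptZ (cZ i)
def Hp : Plane := ptZ HZ
def Ep : Fin 6 → Plane := fun m => ptZ (EZ m)
def eps : ℝ := 25
def K : Set Plane := ⋃ m : Fin 6, segment ℝ Hp (Ep m)
def C : Set Plane := ⋃ k ∈ K, Metric.ball k eps
def dot (n x : Plane) : ℝ := inner ℝ n x

lemma pt0 (a b : ℝ) : pt a b 0 = a := rfl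
lemma pt1 (a b : ℝ) : pt a b 1 = b := rfl
lemma ptZ0 (p : ℤ × ℤ) : ptZ p 0 = (p.1 : ℝ) := rfl
lemma ptZ1 (p : ℤ × ℤ) : ptZ p 1 = (p.2 : ℝ) := rfl
lemma fpt0 (i : Fin 11) : fpt i 0 = ((cZ i).1 : ℝ) := rfl
lemma fpt1 (i : Fin 11) : fpt i 1 = ((cZ i).2 : ℝ) := rfl

lemma dot_eval (n x : Plane) : dot n x = n 0 * x 0 + n 1 * x 1 := by
  simp [dot, PiLp.inner_apply, Fin.sum_univ_two, RCLike.inner_apply]; ring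

lemma dot_ptZ (a b : ℤ × ℤ) : dot (ptZ a) (ptZ b) = (dotZ a b : ℝ) := by
  rw [dot_eval, ptZ0, ptZ1, ptZ0, ptZ1, dotZ]; push_cast; ring

lemma norm_sq_eval (x : Plane) : ‖x‖^2 = x 0^2 + x 1^2 := by
  rw [EuclideanSpace.norm_sq_eq, Fin.sum_univ_two, Real.norm_eq_abs, Real.norm_eq_abs, sq_abs, sq_abs]

lemma norm_ptZ_sq (p : ℤ × ℤ) : ‖ptZ p‖^2 = ((dotZ p p : ℤ) : ℝ) := by
  rw [norm_sq_eval, ptZ0, ptZ1, dotZ]; push_cast; ring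

lemma normZ_le (p : ℤ × ℤ) (r : ℝ) (hr : 0 ≤ r) (h : ((dotZ p p : ℤ) : ℝ) ≤ r^2) :
    ‖ptZ p‖ ≤ r := by
  nlinarith [norm_ptZ_sq p, norm_nonneg (ptZ p)]

lemma dot_le_max {a b : Plane} (n : Plane) {x : Plane} (h : x ∈ segment ℝ a b) :
    dot n x ≤ max (dot n a) (dot n b) := by
  obtain ⟨s, t, hs, ht, hst, rfl⟩ := h
  have : dot n (s • a + t • b) = s * dot n a + t * dot n b := by
    simp [dot, inner_add_right, real_inner_smul_right]
  rw [this]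
  have h1 := mul_le_mul_of_nonneg_left (le_max_left (dot n a) (dot n b)) hs
  have h2 := mul_le_mul_of_nonneg_left (le_max_right (dot n a) (dot n b)) ht
  have h3 : s * max (dot n a) (dot n b) + t * max (dot n a) (dot n b)
      = max (dot n a) (dot n b) := by rw [← add_mul, hst, one_mul]
  linarith

lemma min_le_dot {a b : Plane} (n : Plane) {x : Plane} (h : x ∈ segment ℝ a b) :
    min (dot n a) (dot n b) ≤ dot n x := by
  obtain ⟨s, t, hs, ht, hst, rfl⟩ := h
  have : dot n (s • a + t • b) = s * dot n a + t * dot n b := by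
    simp [dot, inner_add_right, real_inner_smul_right]
  rw [this]
  have h1 := mul_le_mul_of_nonneg_left (min_le_left (dot n a) (dot n b)) hs
  have h2 := mul_le_mul_of_nonneg_left (min_le_right (dot n a) (dot n b)) ht
  have h3 : s * min (dot n a) (dot n b) + t * min (dot n a) (dot n b)
      = min (dot n a) (dot n b) := by rw [← add_mul, hst, one_mul]
  linarith

lemma norm_le_max {a b x : Plane} (h : x ∈ segment ℝ a b) : ‖x‖ ≤ max ‖a‖ ‖b‖ := by
  obtain ⟨s, t, hs, ht, hst, rfl⟩ := h
  calc ‖s • a + t • b‖ ≤ ‖s • a‖ + ‖t • b‖ := norm_add_le _ _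
    _ = s * ‖a‖ + t * ‖b‖ := by rw [norm_smul, norm_smul, Real.norm_eq_abs, Real.norm_eq_abs,
        abs_of_nonneg hs, abs_of_nonneg ht]
    _ ≤ max ‖a‖ ‖b‖ := by
        have h1 := mul_le_mul_of_nonneg_left (le_max_left ‖a‖ ‖b‖) hs
        have h2 := mul_le_mul_of_nonneg_left (le_max_right ‖a‖ ‖b‖) ht
        have h3 : s * max ‖a‖ ‖b‖ + t * max ‖a‖ ‖b‖ = max ‖a‖ ‖b‖ := by
          rw [← add_mul, hst, one_mul]
        linarith

lemma dist_le_seg {y k z : Plane} (h : z ∈ segment ℝ y k) : dist z k ≤ dist y k := by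
  obtain ⟨s, t, hs, ht, hst, rfl⟩ := h
  have hz : s • y + t • k - k = s • (y - k) := by
    have ht' : t = 1 - s := by linarith
    rw [ht', sub_smul, one_smul, smul_sub]; abel
  rw [dist_eq_norm, dist_eq_norm, hz, norm_smul, Real.norm_eq_abs, abs_of_nonneg hs]
  nlinarith [norm_nonneg (y - k)]

lemma mem_seg_ptZ (a b x : ℤ × ℤ) (num den : ℤ) (h0 : 0 ≤ num) (h1 : num ≤ den)
    (hden : 0 < den) (e0 : den * x.1 = (den - num) * a.1 + num * b.1)
    (e1 : den * x.2 = (den - num) * a.2 + num * b.2) :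
    ptZ x ∈ segment ℝ (ptZ a) (ptZ b) := by
  have hd : (0:ℝ) < (den : ℝ) := by exact_mod_cast hden
  refine ⟨1 - (num : ℝ)/(den : ℝ), (num : ℝ)/(den : ℝ), by
      rw [sub_nonneg]; apply div_le_one_of_le₀; exact_mod_cast h1; positivity,
    by positivity, by ring, ?_⟩
  have he0 : (den:ℝ) * (x.1:ℝ) = ((den:ℝ) - num) * a.1 + num * b.1 := by exact_mod_cast e0
  have he1 : (den:ℝ) * (x.2:ℝ) = ((den:ℝ) - num) * a.2 + num * b.2 := by exact_mod_cast e1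
  ext i
  fin_cases i
  · show (_ : Plane) 0 = ptZ x 0
    simp only [PiLp.add_apply, PiLp.smul_apply, ptZ0, smul_eq_mul]
    field_simp
    linarith
  · show (_ : Plane) 1 = ptZ x 1
    simp only [PiLp.add_apply, PiLp.smul_apply, ptZ1, smul_eq_mul]
    field_simp
    linarith



instance : ∀ i j : Fin 11, Decidable (b11NonEdge i j) := fun i j =>
  inferInstanceAs (Decidable ((i.val < 5 ∧ j.val = i.val + 5) ∨ _))
instance : DecidableRel B11.Adj := fun i j =>
  inferInstanceAs (Decidable (i ≠ j ∧ ¬ (b11NonEdge i j ∨ b11NonEdge j i)))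

def certZ : Fin 11 → Fin 11 → ℤ × ℤ :=
  ![![(0,0),(-34,135),(-43,132),(-156,385),(-22,45),(0,0),(1936,483),(157,51),(1814,733),(576,281),(-655,-58)],
    ![(-34,135),(0,0),(-52,129),(-61,125),(-26,45),(-1936,-483),(0,0),(1850,747),(445,217),(847,489),(-655,-58)],
    ![(-43,132),(-52,129),(0,0),(-70,121),(-52,77),(-157,-51),(-1850,-747),(0,0),(1728,997),(1642,1107),(-655,-58)],
    ![(-156,385),(-61,125),(-70,121),(0,0),(-43,55),(-1814,-733),(-445,-217),(-1728,-997),(0,0),(393,307),(-655,-58)],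
    ![(-22,45),(-26,45),(-52,77),(-43,55),(0,0),(-576,-281),(-847,-489),(-1642,-1107),(-393,-307),(0,0),(-655,-58)],
    ![(0,0),(-1936,-483),(-157,-51),(-1814,-733),(-576,-281),(0,0),(34,-135),(43,-132),(156,-385),(22,-45),(0,0)],
    ![(1936,483),(0,0),(-1850,-747),(-445,-217),(-847,-489),(34,-135),(0,0),(52,-129),(61,-125),(26,-45),(0,0)],
    ![(157,51),(1850,747),(0,0),(-1728,-997),(-1642,-1107),(43,-132),(52,-129),(0,0),(70,-121),(52,-77),(0,0)],
    ![(1814,733),(445,217),(1728,997),(0,0),(-393,-307),(156,-385),(61,-125),(70,-121),(0,0),(43,-55),(0,0)],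
    ![(576,281),(847,489),(1642,1107),(393,307),(0,0),(22,-45),(26,-45),(52,-77),(43,-55),(0,0),(0,0)],
    ![(-655,-58),(-655,-58),(-655,-58),(-655,-58),(-655,-58),(0,0),(0,0),(0,0),(0,0),(0,0),(0,0)]]

def maxKZ (n : ℤ × ℤ) : ℤ :=
  max (dotZ n HZ) (max (dotZ n (EZ 0)) (max (dotZ n (EZ 1)) (max (dotZ n (EZ 2))
    (max (dotZ n (EZ 3)) (max (dotZ n (EZ 4)) (dotZ n (EZ 5)))))))
def sZ (u v : Fin 11) : ℤ :=
  min (dotZ (certZ u v) (cZ u)) (dotZ (certZ u v) (cZ v)) - maxKZ (certZ u v)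
def certOK (u v : Fin 11) : Prop :=
  0 < sZ u v ∧ 625 * dotZ (certZ u v) (certZ u v) ≤ (sZ u v)^2

instance (u v : Fin 11) : Decidable (certOK u v) :=
  inferInstanceAs (Decidable (_ ∧ _))

lemma hcerts : ∀ u v : Fin 11, B11.Adj u v → certOK u v := by decide

lemma maxKZ_ge (n : ℤ × ℤ) (m : Fin 6) : dotZ n (EZ m) ≤ maxKZ n := by
  fin_cases m <;> simp [maxKZ] <;> omega
lemma maxKZ_geH (n : ℤ × ℤ) : dotZ n HZ ≤ maxKZ n := by simp [maxKZ]

lemma mem_C_iff {x : Plane} :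
    x ∈ C ↔ ∃ m : Fin 6, ∃ k ∈ segment ℝ Hp (Ep m), dist x k < eps := by
  simp only [C, K, Set.mem_iUnion, Metric.mem_ball, exists_prop]
  constructor
  · rintro ⟨k, ⟨m, hk⟩, hd⟩; exact ⟨m, k, hk, hd⟩
  · rintro ⟨m, k, hk, hd⟩; exact ⟨k, ⟨m, hk⟩, hd⟩

lemma K_sub_C : K ⊆ C := fun k hk =>
  Set.mem_biUnion hk (Metric.mem_ball_self (by norm_num [eps]))
lemma Ep_mem_C (m : Fin 6) : Ep m ∈ C :=
  K_sub_C (Set.mem_iUnion.2 ⟨m, right_mem_segment ℝ Hp (Ep m)⟩)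
lemma Hp_mem_K : Hp ∈ K := Set.mem_iUnion.2 ⟨0, left_mem_segment ℝ Hp (Ep 0)⟩

lemma edge_disjoint (u v : Fin 11) (h : certOK u v) :
    Disjoint (segment ℝ (fpt u) (fpt v)) C := by
  rw [Set.disjoint_left]
  intro x hx hxC
  rw [mem_C_iff] at hxC
  obtain ⟨m, k, hk, hd⟩ := hxC
  obtain ⟨hs, hsq⟩ := h
  set n := ptZ (certZ u v) with hn
  have h1 : min (dot n (fpt u)) (dot n (fpt v)) ≤ dot n x := min_le_dot n hx
  have h2 : dot n k ≤ max (dot n Hp) (dot n (Ep m)) := dot_le_max n hk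
  have hu : dot n (fpt u) = ((dotZ (certZ u v) (cZ u) : ℤ) : ℝ) := dot_ptZ _ _
  have hv : dot n (fpt v) = ((dotZ (certZ u v) (cZ v) : ℤ) : ℝ) := dot_ptZ _ _
  have hH : dot n Hp = ((dotZ (certZ u v) HZ : ℤ) : ℝ) := dot_ptZ _ _
  have hE : dot n (Ep m) = ((dotZ (certZ u v) (EZ m) : ℤ) : ℝ) := dot_ptZ _ _
  have hmax : dot n k ≤ ((maxKZ (certZ u v) : ℤ) : ℝ) := by
    rw [hH, hE] at h2
    refine h2.trans (max_le ?_ ?_) <;> exact_mod_cast (by first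
      | exact maxKZ_geH (certZ u v) | exact maxKZ_ge (certZ u v) m)
  have hZ : sZ u v + maxKZ (certZ u v)
      = min (dotZ (certZ u v) (cZ u)) (dotZ (certZ u v) (cZ v)) := by rw [sZ]; ring
  have h1' : min ((dotZ (certZ u v) (cZ u) : ℤ) : ℝ) ((dotZ (certZ u v) (cZ v) : ℤ) : ℝ)
      ≤ dot n x := by rw [hu, hv] at h1; exact h1
  have hgap : ((sZ u v : ℤ) : ℝ) ≤ dot n x - dot n k := by
    have := congrArg (fun z : ℤ => (z : ℝ)) hZ
    push_cast at this
    linarith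
  have hds : dot n x - dot n k = dot n (x - k) := by
    simp [dot, inner_sub_right]
  have hcs : dot n (x - k) ≤ ‖n‖ * ‖x - k‖ := real_inner_le_norm n (x - k)
  have hnorm : ‖x - k‖ < eps := by rw [← dist_eq_norm]; exact hd
  have hnn : ‖n‖^2 = ((dotZ (certZ u v) (certZ u v) : ℤ) : ℝ) := norm_ptZ_sq _
  have hs' : (0:ℝ) < ((sZ u v : ℤ) : ℝ) := by exact_mod_cast hs
  have hsq' : 625 * ((dotZ (certZ u v) (certZ u v) : ℤ) : ℝ) ≤ ((sZ u v : ℤ) : ℝ)^2 := by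
    exact_mod_cast hsq
  have heps : eps = 25 := rfl
  rw [hds] at hgap
  have hA : ((sZ u v : ℤ) : ℝ) ≤ ‖n‖ * ‖x - k‖ := le_trans hgap hcs
  have hnpos : 0 < ‖n‖ := by
    by_contra hcon
    push_neg at hcon
    nlinarith [norm_nonneg (x - k)]
  have hB : ((sZ u v : ℤ) : ℝ) < 25 * ‖n‖ := by
    have := mul_lt_mul_of_pos_left (heps ▸ hnorm) hnpos
    nlinarith
  nlinarith [hs', hsq', hnn]

lemma isOpen_C : IsOpen C := isOpen_biUnion fun _ _ => Metric.isOpen_ball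

lemma K_preconn : IsPreconnected K := by
  apply isPreconnected_of_forall Hp
  intro y hy
  obtain ⟨m, hm⟩ := Set.mem_iUnion.1 hy
  exact ⟨segment ℝ Hp (Ep m), fun z hz => Set.mem_iUnion.2 ⟨m, hz⟩, left_mem_segment ℝ _ _, hm,
    (convex_segment _ _).isPreconnected⟩

lemma isConnected_C : IsConnected C := by
  refine ⟨⟨Ep 0, Ep_mem_C 0⟩, ?_⟩
  apply isPreconnected_of_forall (Hp)
  intro y hy
  rw [mem_C_iff] at hy
  obtain ⟨m, k, hk, hd⟩ := hy
  have hkK : k ∈ K := Set.mem_iUnion.2 ⟨m, hk⟩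
  refine ⟨segment ℝ y k ∪ K, ?_, Or.inr Hp_mem_K, Or.inl (left_mem_segment ℝ _ _), ?_⟩
  · rintro z (hz | hz)
    · have : dist z k ≤ dist y k := dist_le_seg hz
      exact Set.mem_biUnion hkK (Metric.mem_ball.2 (lt_of_le_of_lt this hd))
    · exact K_sub_C hz
  · exact IsPreconnected.union k (right_mem_segment ℝ _ _) hkK
      (convex_segment _ _).isPreconnected K_preconn

lemma not_collinear_pts (p q r : Plane)
    (h : (q 0 - p 0) * (r 1 - p 1) - (q 1 - p 1) * (r 0 - p 0) ≠ 0) :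
    ¬ Collinear ℝ ({p, q, r} : Set Plane) := by
  intro hc
  rw [collinear_iff_of_mem (Set.mem_insert p _)] at hc
  obtain ⟨v, hv⟩ := hc
  obtain ⟨a, ha⟩ := hv q (by simp)
  obtain ⟨b, hb⟩ := hv r (by simp)
  apply h
  have ha0 : q 0 - p 0 = a * v 0 := by rw [ha]; simp [PiLp.add_apply, PiLp.smul_apply]
  have ha1 : q 1 - p 1 = a * v 1 := by rw [ha]; simp [PiLp.add_apply, PiLp.smul_apply]
  have hb0 : r 0 - p 0 = b * v 0 := by rw [hb]; simp [PiLp.add_apply, PiLp.smul_apply]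
  have hb1 : r 1 - p 1 = b * v 1 := by rw [hb]; simp [PiLp.add_apply, PiLp.smul_apply]
  rw [ha0, ha1, hb0, hb1]; ring

def crZ (i j k : Fin 11) : ℤ :=
  ((cZ j).1 - (cZ i).1) * ((cZ k).2 - (cZ i).2) - ((cZ j).2 - (cZ i).2) * ((cZ k).1 - (cZ i).1)

lemma hcross : ∀ i j k : Fin 11, i ≠ j → i ≠ k → j ≠ k → crZ i j k ≠ 0 := by decide

lemma not_collinear_fpt (i j k : Fin 11) (hij : i ≠ j) (hik : i ≠ k) (hjk : j ≠ k) :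
    ¬ Collinear ℝ ({fpt i, fpt j, fpt k} : Set Plane) := by
  apply not_collinear_pts
  rw [fpt0, fpt0, fpt0, fpt1, fpt1, fpt1]
  have h := hcross i j k hij hik hjk
  intro hcon
  apply h
  rw [crZ]
  apply Int.cast_injective (α := ℝ); push_cast; linarith [hcon]

lemma cZ_inj : ∀ i j : Fin 11, i ≠ j → cZ i ≠ cZ j := by decide

lemma fpt_inj : Function.Injective fpt := by
  intro i j h
  by_contra hne
  apply cZ_inj i j hne
  have h0 : ((cZ i).1 : ℝ) = ((cZ j).1 : ℝ) := by
    rw [← fpt0, ← fpt0, h]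
  have h1 : ((cZ i).2 : ℝ) = ((cZ j).2 : ℝ) := by
    rw [← fpt1, ← fpt1, h]
  exact Prod.ext (by exact_mod_cast h0) (by exact_mod_cast h1)

lemma genpos : ∀ p ∈ Set.range fpt, ∀ q ∈ Set.range fpt, ∀ r ∈ Set.range fpt,
    p ≠ q → p ≠ r → q ≠ r → ¬ Collinear ℝ ({p, q, r} : Set Plane) := by
  rintro p ⟨i, rfl⟩ q ⟨j, rfl⟩ r ⟨k, rfl⟩ hpq hpr hqr
  exact not_collinear_fpt i j k (fun h => hpq (by rw [h])) (fun h => hpr (by rw [h]))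
    (fun h => hqr (by rw [h]))

lemma range_disj : Disjoint C (Set.range fpt) := by
  rw [Set.disjoint_right]
  rintro y ⟨v, rfl⟩
  have hex : ∀ v : Fin 11, ∃ u, B11.Adj v u := by decide
  obtain ⟨u, hadj⟩ := hex v
  exact Set.disjoint_left.1 (edge_disjoint v u (hcerts v u hadj))
    (left_mem_segment ℝ (fpt v) (fpt u))


def nvZ : Fin 10 → ℤ × ℤ :=
  ![(-1700,6750),(-2600,6450),(-3500,6050),(-4300,5500),(-86400,-42150),(1700,-6750),(2600,-6450),(3500,-6050),(4300,-5500),(86400,42150)]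
def cvZ : Fin 10 → ℤ :=
  ![347227500,346867500,348597500,348160000,1324207500,347227500,346867500,348597500,348160000,1324207500]

lemma param_ex (d0 d1 X Y : ℝ) (h : d1 * X = d0 * Y) (hd : d0 ≠ 0 ∨ d1 ≠ 0) :
    ∃ t, X = t * d0 ∧ Y = t * d1 := by
  rcases hd with hd | hd
  · refine ⟨X / d0, by field_simp, ?_⟩
    field_simp
    nlinarith [h]
  · refine ⟨Y / d1, ?_, by field_simp⟩
    field_simp
    nlinarith [h]

lemma mem_seg_real (a b x : Plane) (t : ℝ) (h0 : 0 ≤ t) (h1 : t ≤ 1)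
    (e0 : x 0 = (1 - t) * a 0 + t * b 0) (e1 : x 1 = (1 - t) * a 1 + t * b 1) :
    x ∈ segment ℝ a b := by
  refine ⟨1 - t, t, by linarith, h0, by ring, ?_⟩
  ext i
  fin_cases i
  · show (_ : Plane) 0 = x 0
    simp only [PiLp.add_apply, PiLp.smul_apply, smul_eq_mul]
    linarith
  · show (_ : Plane) 1 = x 1
    simp only [PiLp.add_apply, PiLp.smul_apply, smul_eq_mul]
    linarith



lemma face0 (x : Plane)
    (he : dot (ptZ (nvZ 0)) x = ((cvZ 0 : ℤ) : ℝ))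
    (hp : dot (ptZ (nvZ 9)) x ≤ ((cvZ 9 : ℤ) : ℝ))
    (hn : dot (ptZ (nvZ 1)) x ≤ ((cvZ 1 : ℤ) : ℝ)) :
    x ∈ segment ℝ (fpt 0) (fpt 1) := by
  rw [dot_eval] at he hp hn
  have r1 : ptZ (nvZ 0) 0 = ((-1700:ℤ):ℝ) := rfl
  have r2 : ptZ (nvZ 0) 1 = ((6750:ℤ):ℝ) := rfl
  have r3 : ((cvZ 0 : ℤ):ℝ) = ((347227500:ℤ):ℝ) := rfl
  have r4 : ptZ (nvZ 9) 0 = ((86400:ℤ):ℝ) := rfl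
  have r5 : ptZ (nvZ 9) 1 = ((42150:ℤ):ℝ) := rfl
  have r6 : ((cvZ 9 : ℤ):ℝ) = ((1324207500:ℤ):ℝ) := rfl
  have r7 : ptZ (nvZ 1) 0 = ((-2600:ℤ):ℝ) := rfl
  have r8 : ptZ (nvZ 1) 1 = ((6450:ℤ):ℝ) := rfl
  have r9 : ((cvZ 1 : ℤ):ℝ) = ((346867500:ℤ):ℝ) := rfl
  rw [r1, r2, r3] at he
  rw [r4, r5, r6] at hp
  rw [r7, r8, r9] at hn
  push_cast at he hp hn
  obtain ⟨t, ht0, ht1⟩ := param_ex (-6750:ℝ) (-1700) (x 0 - (-8700)) (x 1 - (49250))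
    (by linarith) (by norm_num)
  have h0t : (0:ℝ) ≤ t := by linarith
  have h1t : t ≤ 1 := by linarith
  refine mem_seg_real (fpt 0) (fpt 1) x t h0t h1t ?_ ?_
  · have a1 : fpt 0 0 = ((-8700:ℤ):ℝ) := rfl
    have a2 : fpt 1 0 = ((-15450:ℤ):ℝ) := rfl
    rw [a1, a2]; push_cast; linarith
  · have a1 : fpt 0 1 = ((49250:ℤ):ℝ) := rfl
    have a2 : fpt 1 1 = ((47550:ℤ):ℝ) := rfl
    rw [a1, a2]; push_cast; linarith

lemma face1 (x : Plane)
    (he : dot (ptZ (nvZ 1)) x = ((cvZ 1 : ℤ) : ℝ))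
    (hp : dot (ptZ (nvZ 0)) x ≤ ((cvZ 0 : ℤ) : ℝ))
    (hn : dot (ptZ (nvZ 2)) x ≤ ((cvZ 2 : ℤ) : ℝ)) :
    x ∈ segment ℝ (fpt 1) (fpt 2) := by
  rw [dot_eval] at he hp hn
  have r1 : ptZ (nvZ 1) 0 = ((-2600:ℤ):ℝ) := rfl
  have r2 : ptZ (nvZ 1) 1 = ((6450:ℤ):ℝ) := rfl
  have r3 : ((cvZ 1 : ℤ):ℝ) = ((346867500:ℤ):ℝ) := rfl
  have r4 : ptZ (nvZ 0) 0 = ((-1700:ℤ):ℝ) := rfl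
  have r5 : ptZ (nvZ 0) 1 = ((6750:ℤ):ℝ) := rfl
  have r6 : ((cvZ 0 : ℤ):ℝ) = ((347227500:ℤ):ℝ) := rfl
  have r7 : ptZ (nvZ 2) 0 = ((-3500:ℤ):ℝ) := rfl
  have r8 : ptZ (nvZ 2) 1 = ((6050:ℤ):ℝ) := rfl
  have r9 : ((cvZ 2 : ℤ):ℝ) = ((348597500:ℤ):ℝ) := rfl
  rw [r1, r2, r3] at he
  rw [r4, r5, r6] at hp
  rw [r7, r8, r9] at hn
  push_cast at he hp hn
  obtain ⟨t, ht0, ht1⟩ := param_ex (-6450:ℝ) (-2600) (x 0 - (-15450)) (x 1 - (47550))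
    (by linarith) (by norm_num)
  have h0t : (0:ℝ) ≤ t := by linarith
  have h1t : t ≤ 1 := by linarith
  refine mem_seg_real (fpt 1) (fpt 2) x t h0t h1t ?_ ?_
  · have a1 : fpt 1 0 = ((-15450:ℤ):ℝ) := rfl
    have a2 : fpt 2 0 = ((-21900:ℤ):ℝ) := rfl
    rw [a1, a2]; push_cast; linarith
  · have a1 : fpt 1 1 = ((47550:ℤ):ℝ) := rfl
    have a2 : fpt 2 1 = ((44950:ℤ):ℝ) := rfl
    rw [a1, a2]; push_cast; linarith

lemma face2 (x : Plane)
    (he : dot (ptZ (nvZ 2)) x = ((cvZ 2 : ℤ) : ℝ))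
    (hp : dot (ptZ (nvZ 1)) x ≤ ((cvZ 1 : ℤ) : ℝ))
    (hn : dot (ptZ (nvZ 3)) x ≤ ((cvZ 3 : ℤ) : ℝ)) :
    x ∈ segment ℝ (fpt 2) (fpt 3) := by
  rw [dot_eval] at he hp hn
  have r1 : ptZ (nvZ 2) 0 = ((-3500:ℤ):ℝ) := rfl
  have r2 : ptZ (nvZ 2) 1 = ((6050:ℤ):ℝ) := rfl
  have r3 : ((cvZ 2 : ℤ):ℝ) = ((348597500:ℤ):ℝ) := rfl
  have r4 : ptZ (nvZ 1) 0 = ((-2600:ℤ):ℝ) := rfl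
  have r5 : ptZ (nvZ 1) 1 = ((6450:ℤ):ℝ) := rfl
  have r6 : ((cvZ 1 : ℤ):ℝ) = ((346867500:ℤ):ℝ) := rfl
  have r7 : ptZ (nvZ 3) 0 = ((-4300:ℤ):ℝ) := rfl
  have r8 : ptZ (nvZ 3) 1 = ((5500:ℤ):ℝ) := rfl
  have r9 : ((cvZ 3 : ℤ):ℝ) = ((348160000:ℤ):ℝ) := rfl
  rw [r1, r2, r3] at he
  rw [r4, r5, r6] at hp
  rw [r7, r8, r9] at hn
  push_cast at he hp hn
  obtain ⟨t, ht0, ht1⟩ := param_ex (-6050:ℝ) (-3500) (x 0 - (-21900)) (x 1 - (44950))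
    (by linarith) (by norm_num)
  have h0t : (0:ℝ) ≤ t := by linarith
  have h1t : t ≤ 1 := by linarith
  refine mem_seg_real (fpt 2) (fpt 3) x t h0t h1t ?_ ?_
  · have a1 : fpt 2 0 = ((-21900:ℤ):ℝ) := rfl
    have a2 : fpt 3 0 = ((-27950:ℤ):ℝ) := rfl
    rw [a1, a2]; push_cast; linarith
  · have a1 : fpt 2 1 = ((44950:ℤ):ℝ) := rfl
    have a2 : fpt 3 1 = ((41450:ℤ):ℝ) := rfl
    rw [a1, a2]; push_cast; linarith

lemma face3 (x : Plane)
    (he : dot (ptZ (nvZ 3)) x = ((cvZ 3 : ℤ) : ℝ))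
    (hp : dot (ptZ (nvZ 2)) x ≤ ((cvZ 2 : ℤ) : ℝ))
    (hn : dot (ptZ (nvZ 4)) x ≤ ((cvZ 4 : ℤ) : ℝ)) :
    x ∈ segment ℝ (fpt 3) (fpt 4) := by
  rw [dot_eval] at he hp hn
  have r1 : ptZ (nvZ 3) 0 = ((-4300:ℤ):ℝ) := rfl
  have r2 : ptZ (nvZ 3) 1 = ((5500:ℤ):ℝ) := rfl
  have r3 : ((cvZ 3 : ℤ):ℝ) = ((348160000:ℤ):ℝ) := rfl
  have r4 : ptZ (nvZ 2) 0 = ((-3500:ℤ):ℝ) := rfl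
  have r5 : ptZ (nvZ 2) 1 = ((6050:ℤ):ℝ) := rfl
  have r6 : ((cvZ 2 : ℤ):ℝ) = ((348597500:ℤ):ℝ) := rfl
  have r7 : ptZ (nvZ 4) 0 = ((-86400:ℤ):ℝ) := rfl
  have r8 : ptZ (nvZ 4) 1 = ((-42150:ℤ):ℝ) := rfl
  have r9 : ((cvZ 4 : ℤ):ℝ) = ((1324207500:ℤ):ℝ) := rfl
  rw [r1, r2, r3] at he
  rw [r4, r5, r6] at hp
  rw [r7, r8, r9] at hn
  push_cast at he hp hn
  obtain ⟨t, ht0, ht1⟩ := param_ex (-5500:ℝ) (-4300) (x 0 - (-27950)) (x 1 - (41450))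
    (by linarith) (by norm_num)
  have h0t : (0:ℝ) ≤ t := by linarith
  have h1t : t ≤ 1 := by linarith
  refine mem_seg_real (fpt 3) (fpt 4) x t h0t h1t ?_ ?_
  · have a1 : fpt 3 0 = ((-27950:ℤ):ℝ) := rfl
    have a2 : fpt 4 0 = ((-33450:ℤ):ℝ) := rfl
    rw [a1, a2]; push_cast; linarith
  · have a1 : fpt 3 1 = ((41450:ℤ):ℝ) := rfl
    have a2 : fpt 4 1 = ((37150:ℤ):ℝ) := rfl
    rw [a1, a2]; push_cast; linarith

lemma face4 (x : Plane)
    (he : dot (ptZ (nvZ 4)) x = ((cvZ 4 : ℤ) : ℝ))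
    (hp : dot (ptZ (nvZ 3)) x ≤ ((cvZ 3 : ℤ) : ℝ))
    (hn : dot (ptZ (nvZ 5)) x ≤ ((cvZ 5 : ℤ) : ℝ)) :
    x ∈ segment ℝ (fpt 4) (fpt 5) := by
  rw [dot_eval] at he hp hn
  have r1 : ptZ (nvZ 4) 0 = ((-86400:ℤ):ℝ) := rfl
  have r2 : ptZ (nvZ 4) 1 = ((-42150:ℤ):ℝ) := rfl
  have r3 : ((cvZ 4 : ℤ):ℝ) = ((1324207500:ℤ):ℝ) := rfl
  have r4 : ptZ (nvZ 3) 0 = ((-4300:ℤ):ℝ) := rfl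
  have r5 : ptZ (nvZ 3) 1 = ((5500:ℤ):ℝ) := rfl
  have r6 : ((cvZ 3 : ℤ):ℝ) = ((348160000:ℤ):ℝ) := rfl
  have r7 : ptZ (nvZ 5) 0 = ((1700:ℤ):ℝ) := rfl
  have r8 : ptZ (nvZ 5) 1 = ((-6750:ℤ):ℝ) := rfl
  have r9 : ((cvZ 5 : ℤ):ℝ) = ((347227500:ℤ):ℝ) := rfl
  rw [r1, r2, r3] at he
  rw [r4, r5, r6] at hp
  rw [r7, r8, r9] at hn
  push_cast at he hp hn
  obtain ⟨t, ht0, ht1⟩ := param_ex (42150:ℝ) (-86400) (x 0 - (-33450)) (x 1 - (37150))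
    (by linarith) (by norm_num)
  have h0t : (0:ℝ) ≤ t := by linarith
  have h1t : t ≤ 1 := by linarith
  refine mem_seg_real (fpt 4) (fpt 5) x t h0t h1t ?_ ?_
  · have a1 : fpt 4 0 = ((-33450:ℤ):ℝ) := rfl
    have a2 : fpt 5 0 = ((8700:ℤ):ℝ) := rfl
    rw [a1, a2]; push_cast; linarith
  · have a1 : fpt 4 1 = ((37150:ℤ):ℝ) := rfl
    have a2 : fpt 5 1 = ((-49250:ℤ):ℝ) := rfl
    rw [a1, a2]; push_cast; linarith

lemma face5 (x : Plane)
    (he : dot (ptZ (nvZ 5)) x = ((cvZ 5 : ℤ) : ℝ))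
    (hp : dot (ptZ (nvZ 4)) x ≤ ((cvZ 4 : ℤ) : ℝ))
    (hn : dot (ptZ (nvZ 6)) x ≤ ((cvZ 6 : ℤ) : ℝ)) :
    x ∈ segment ℝ (fpt 5) (fpt 6) := by
  rw [dot_eval] at he hp hn
  have r1 : ptZ (nvZ 5) 0 = ((1700:ℤ):ℝ) := rfl
  have r2 : ptZ (nvZ 5) 1 = ((-6750:ℤ):ℝ) := rfl
  have r3 : ((cvZ 5 : ℤ):ℝ) = ((347227500:ℤ):ℝ) := rfl
  have r4 : ptZ (nvZ 4) 0 = ((-86400:ℤ):ℝ) := rfl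
  have r5 : ptZ (nvZ 4) 1 = ((-42150:ℤ):ℝ) := rfl
  have r6 : ((cvZ 4 : ℤ):ℝ) = ((1324207500:ℤ):ℝ) := rfl
  have r7 : ptZ (nvZ 6) 0 = ((2600:ℤ):ℝ) := rfl
  have r8 : ptZ (nvZ 6) 1 = ((-6450:ℤ):ℝ) := rfl
  have r9 : ((cvZ 6 : ℤ):ℝ) = ((346867500:ℤ):ℝ) := rfl
  rw [r1, r2, r3] at he
  rw [r4, r5, r6] at hp
  rw [r7, r8, r9] at hn
  push_cast at he hp hn
  obtain ⟨t, ht0, ht1⟩ := param_ex (6750:ℝ) (1700) (x 0 - (8700)) (x 1 - (-49250))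
    (by linarith) (by norm_num)
  have h0t : (0:ℝ) ≤ t := by linarith
  have h1t : t ≤ 1 := by linarith
  refine mem_seg_real (fpt 5) (fpt 6) x t h0t h1t ?_ ?_
  · have a1 : fpt 5 0 = ((8700:ℤ):ℝ) := rfl
    have a2 : fpt 6 0 = ((15450:ℤ):ℝ) := rfl
    rw [a1, a2]; push_cast; linarith
  · have a1 : fpt 5 1 = ((-49250:ℤ):ℝ) := rfl
    have a2 : fpt 6 1 = ((-47550:ℤ):ℝ) := rfl
    rw [a1, a2]; push_cast; linarith

lemma face6 (x : Plane)
    (he : dot (ptZ (nvZ 6)) x = ((cvZ 6 : ℤ) : ℝ))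
    (hp : dot (ptZ (nvZ 5)) x ≤ ((cvZ 5 : ℤ) : ℝ))
    (hn : dot (ptZ (nvZ 7)) x ≤ ((cvZ 7 : ℤ) : ℝ)) :
    x ∈ segment ℝ (fpt 6) (fpt 7) := by
  rw [dot_eval] at he hp hn
  have r1 : ptZ (nvZ 6) 0 = ((2600:ℤ):ℝ) := rfl
  have r2 : ptZ (nvZ 6) 1 = ((-6450:ℤ):ℝ) := rfl
  have r3 : ((cvZ 6 : ℤ):ℝ) = ((346867500:ℤ):ℝ) := rfl
  have r4 : ptZ (nvZ 5) 0 = ((1700:ℤ):ℝ) := rfl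
  have r5 : ptZ (nvZ 5) 1 = ((-6750:ℤ):ℝ) := rfl
  have r6 : ((cvZ 5 : ℤ):ℝ) = ((347227500:ℤ):ℝ) := rfl
  have r7 : ptZ (nvZ 7) 0 = ((3500:ℤ):ℝ) := rfl
  have r8 : ptZ (nvZ 7) 1 = ((-6050:ℤ):ℝ) := rfl
  have r9 : ((cvZ 7 : ℤ):ℝ) = ((348597500:ℤ):ℝ) := rfl
  rw [r1, r2, r3] at he
  rw [r4, r5, r6] at hp
  rw [r7, r8, r9] at hn
  push_cast at he hp hn
  obtain ⟨t, ht0, ht1⟩ := param_ex (6450:ℝ) (2600) (x 0 - (15450)) (x 1 - (-47550))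
    (by linarith) (by norm_num)
  have h0t : (0:ℝ) ≤ t := by linarith
  have h1t : t ≤ 1 := by linarith
  refine mem_seg_real (fpt 6) (fpt 7) x t h0t h1t ?_ ?_
  · have a1 : fpt 6 0 = ((15450:ℤ):ℝ) := rfl
    have a2 : fpt 7 0 = ((21900:ℤ):ℝ) := rfl
    rw [a1, a2]; push_cast; linarith
  · have a1 : fpt 6 1 = ((-47550:ℤ):ℝ) := rfl
    have a2 : fpt 7 1 = ((-44950:ℤ):ℝ) := rfl
    rw [a1, a2]; push_cast; linarith

lemma face7 (x : Plane)
    (he : dot (ptZ (nvZ 7)) x = ((cvZ 7 : ℤ) : ℝ))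
    (hp : dot (ptZ (nvZ 6)) x ≤ ((cvZ 6 : ℤ) : ℝ))
    (hn : dot (ptZ (nvZ 8)) x ≤ ((cvZ 8 : ℤ) : ℝ)) :
    x ∈ segment ℝ (fpt 7) (fpt 8) := by
  rw [dot_eval] at he hp hn
  have r1 : ptZ (nvZ 7) 0 = ((3500:ℤ):ℝ) := rfl
  have r2 : ptZ (nvZ 7) 1 = ((-6050:ℤ):ℝ) := rfl
  have r3 : ((cvZ 7 : ℤ):ℝ) = ((348597500:ℤ):ℝ) := rfl
  have r4 : ptZ (nvZ 6) 0 = ((2600:ℤ):ℝ) := rfl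
  have r5 : ptZ (nvZ 6) 1 = ((-6450:ℤ):ℝ) := rfl
  have r6 : ((cvZ 6 : ℤ):ℝ) = ((346867500:ℤ):ℝ) := rfl
  have r7 : ptZ (nvZ 8) 0 = ((4300:ℤ):ℝ) := rfl
  have r8 : ptZ (nvZ 8) 1 = ((-5500:ℤ):ℝ) := rfl
  have r9 : ((cvZ 8 : ℤ):ℝ) = ((348160000:ℤ):ℝ) := rfl
  rw [r1, r2, r3] at he
  rw [r4, r5, r6] at hp
  rw [r7, r8, r9] at hn
  push_cast at he hp hn
  obtain ⟨t, ht0, ht1⟩ := param_ex (6050:ℝ) (3500) (x 0 - (21900)) (x 1 - (-44950))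
    (by linarith) (by norm_num)
  have h0t : (0:ℝ) ≤ t := by linarith
  have h1t : t ≤ 1 := by linarith
  refine mem_seg_real (fpt 7) (fpt 8) x t h0t h1t ?_ ?_
  · have a1 : fpt 7 0 = ((21900:ℤ):ℝ) := rfl
    have a2 : fpt 8 0 = ((27950:ℤ):ℝ) := rfl
    rw [a1, a2]; push_cast; linarith
  · have a1 : fpt 7 1 = ((-44950:ℤ):ℝ) := rfl
    have a2 : fpt 8 1 = ((-41450:ℤ):ℝ) := rfl
    rw [a1, a2]; push_cast; linarith

lemma face8 (x : Plane)
    (he : dot (ptZ (nvZ 8)) x = ((cvZ 8 : ℤ) : ℝ))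
    (hp : dot (ptZ (nvZ 7)) x ≤ ((cvZ 7 : ℤ) : ℝ))
    (hn : dot (ptZ (nvZ 9)) x ≤ ((cvZ 9 : ℤ) : ℝ)) :
    x ∈ segment ℝ (fpt 8) (fpt 9) := by
  rw [dot_eval] at he hp hn
  have r1 : ptZ (nvZ 8) 0 = ((4300:ℤ):ℝ) := rfl
  have r2 : ptZ (nvZ 8) 1 = ((-5500:ℤ):ℝ) := rfl
  have r3 : ((cvZ 8 : ℤ):ℝ) = ((348160000:ℤ):ℝ) := rfl
  have r4 : ptZ (nvZ 7) 0 = ((3500:ℤ):ℝ) := rfl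
  have r5 : ptZ (nvZ 7) 1 = ((-6050:ℤ):ℝ) := rfl
  have r6 : ((cvZ 7 : ℤ):ℝ) = ((348597500:ℤ):ℝ) := rfl
  have r7 : ptZ (nvZ 9) 0 = ((86400:ℤ):ℝ) := rfl
  have r8 : ptZ (nvZ 9) 1 = ((42150:ℤ):ℝ) := rfl
  have r9 : ((cvZ 9 : ℤ):ℝ) = ((1324207500:ℤ):ℝ) := rfl
  rw [r1, r2, r3] at he
  rw [r4, r5, r6] at hp
  rw [r7, r8, r9] at hn
  push_cast at he hp hn
  obtain ⟨t, ht0, ht1⟩ := param_ex (5500:ℝ) (4300) (x 0 - (27950)) (x 1 - (-41450))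
    (by linarith) (by norm_num)
  have h0t : (0:ℝ) ≤ t := by linarith
  have h1t : t ≤ 1 := by linarith
  refine mem_seg_real (fpt 8) (fpt 9) x t h0t h1t ?_ ?_
  · have a1 : fpt 8 0 = ((27950:ℤ):ℝ) := rfl
    have a2 : fpt 9 0 = ((33450:ℤ):ℝ) := rfl
    rw [a1, a2]; push_cast; linarith
  · have a1 : fpt 8 1 = ((-41450:ℤ):ℝ) := rfl
    have a2 : fpt 9 1 = ((-37150:ℤ):ℝ) := rfl
    rw [a1, a2]; push_cast; linarith

lemma face9 (x : Plane)
    (he : dot (ptZ (nvZ 9)) x = ((cvZ 9 : ℤ) : ℝ))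
    (hp : dot (ptZ (nvZ 8)) x ≤ ((cvZ 8 : ℤ) : ℝ))
    (hn : dot (ptZ (nvZ 0)) x ≤ ((cvZ 0 : ℤ) : ℝ)) :
    x ∈ segment ℝ (fpt 9) (fpt 0) := by
  rw [dot_eval] at he hp hn
  have r1 : ptZ (nvZ 9) 0 = ((86400:ℤ):ℝ) := rfl
  have r2 : ptZ (nvZ 9) 1 = ((42150:ℤ):ℝ) := rfl
  have r3 : ((cvZ 9 : ℤ):ℝ) = ((1324207500:ℤ):ℝ) := rfl
  have r4 : ptZ (nvZ 8) 0 = ((4300:ℤ):ℝ) := rfl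
  have r5 : ptZ (nvZ 8) 1 = ((-5500:ℤ):ℝ) := rfl
  have r6 : ((cvZ 8 : ℤ):ℝ) = ((348160000:ℤ):ℝ) := rfl
  have r7 : ptZ (nvZ 0) 0 = ((-1700:ℤ):ℝ) := rfl
  have r8 : ptZ (nvZ 0) 1 = ((6750:ℤ):ℝ) := rfl
  have r9 : ((cvZ 0 : ℤ):ℝ) = ((347227500:ℤ):ℝ) := rfl
  rw [r1, r2, r3] at he
  rw [r4, r5, r6] at hp
  rw [r7, r8, r9] at hn
  push_cast at he hp hn
  obtain ⟨t, ht0, ht1⟩ := param_ex (-42150:ℝ) (86400) (x 0 - (33450)) (x 1 - (-37150))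
    (by linarith) (by norm_num)
  have h0t : (0:ℝ) ≤ t := by linarith
  have h1t : t ≤ 1 := by linarith
  refine mem_seg_real (fpt 9) (fpt 0) x t h0t h1t ?_ ?_
  · have a1 : fpt 9 0 = ((33450:ℤ):ℝ) := rfl
    have a2 : fpt 0 0 = ((-8700:ℤ):ℝ) := rfl
    rw [a1, a2]; push_cast; linarith
  · have a1 : fpt 9 1 = ((-37150:ℤ):ℝ) := rfl
    have a2 : fpt 0 1 = ((49250:ℤ):ℝ) := rfl
    rw [a1, a2]; push_cast; linarith

lemma nonedge_wit (u v : Fin 11) (h : b11NonEdge u v) :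
    ∃ m : Fin 6, Ep m ∈ segment ℝ (fpt u) (fpt v) := by
  rcases h with ⟨h1, h2⟩ | ⟨h1, h2, h3⟩
  · fin_cases u
    · have hv : v = 5 := by apply Fin.ext; rw [h2]; rfl
      subst hv
      exact ⟨0, mem_seg_ptZ _ _ _ 1 2 (by decide) (by decide) (by decide) (by decide) (by decide)⟩
    · have hv : v = 6 := by apply Fin.ext; rw [h2]; rfl
      subst hv
      exact ⟨0, mem_seg_ptZ _ _ _ 1 2 (by decide) (by decide) (by decide) (by decide) (by decide)⟩
    · have hv : v = 7 := by apply Fin.ext; rw [h2]; rfl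
      subst hv
      exact ⟨0, mem_seg_ptZ _ _ _ 1 2 (by decide) (by decide) (by decide) (by decide) (by decide)⟩
    · have hv : v = 8 := by apply Fin.ext; rw [h2]; rfl
      subst hv
      exact ⟨0, mem_seg_ptZ _ _ _ 1 2 (by decide) (by decide) (by decide) (by decide) (by decide)⟩
    · have hv : v = 9 := by apply Fin.ext; rw [h2]; rfl
      subst hv
      exact ⟨0, mem_seg_ptZ _ _ _ 1 2 (by decide) (by decide) (by decide) (by decide) (by decide)⟩
    · exact absurd h1 (by decide)
    · exact absurd h1 (by decide)
    · exact absurd h1 (by decide)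
    · exact absurd h1 (by decide)
    · exact absurd h1 (by decide)
    · exact absurd h1 (by decide)
  · have hu : u = 10 := by apply Fin.ext; rw [h1]; rfl
    subst hu
    fin_cases v
    · exact absurd h2 (by decide)
    · exact absurd h2 (by decide)
    · exact absurd h2 (by decide)
    · exact absurd h2 (by decide)
    · exact absurd h2 (by decide)
    · exact ⟨1, mem_seg_ptZ _ _ _ 1 50 (by decide) (by decide) (by decide) (by decide) (by decide)⟩
    · exact ⟨2, mem_seg_ptZ _ _ _ 1 50 (by decide) (by decide) (by decide) (by decide) (by decide)⟩
    · exact ⟨3, mem_seg_ptZ _ _ _ 1 50 (by decide) (by decide) (by decide) (by decide) (by decide)⟩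
    · exact ⟨4, mem_seg_ptZ _ _ _ 1 50 (by decide) (by decide) (by decide) (by decide) (by decide)⟩
    · exact ⟨5, mem_seg_ptZ _ _ _ 1 50 (by decide) (by decide) (by decide) (by decide) (by decide)⟩
    · exact absurd h3 (by decide)

lemma nonedge_hit (u v : Fin 11) (h : b11NonEdge u v) :
    ¬ Disjoint (segment ℝ (fpt u) (fpt v)) C := by
  obtain ⟨m, hm⟩ := nonedge_wit u v h
  intro hd
  exact Set.disjoint_left.1 hd hm (Ep_mem_C m)

lemma adj_iff : ∀ u v : Fin 11, u ≠ v →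
    (B11.Adj u v ↔ Disjoint (segment ℝ (fpt u) (fpt v)) C) := by
  intro u v huv
  constructor
  · intro h
    exact edge_disjoint u v (hcerts u v h)
  · intro hd
    by_contra hadj
    have hne : b11NonEdge u v ∨ b11NonEdge v u := by
      by_contra hor
      exact hadj ⟨huv, hor⟩
    rcases hne with h | h
    · exact nonedge_hit u v h hd
    · exact nonedge_hit v u h (by rwa [segment_symm] at hd)

def IntS : Set Plane := {x | ∀ i : Fin 10, dot (ptZ (nvZ i)) x < ((cvZ i : ℤ) : ℝ)}
def ExtS : Set Plane := {x | ∃ i : Fin 10, ((cvZ i : ℤ) : ℝ) < dot (ptZ (nvZ i)) x}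

lemma cont_dot (n : Plane) : Continuous (dot n) := continuous_const.inner continuous_id

lemma isOpen_IntS : IsOpen IntS := by
  have h : IntS = ⋂ i : Fin 10, {x : Plane | dot (ptZ (nvZ i)) x < ((cvZ i : ℤ) : ℝ)} := by
    ext x; simp [IntS, Set.mem_iInter]
  rw [h]
  exact isOpen_iInter_of_finite fun i => isOpen_lt (cont_dot _) continuous_const

lemma isOpen_ExtS : IsOpen ExtS := by
  have h : ExtS = ⋃ i : Fin 10, {x : Plane | ((cvZ i : ℤ) : ℝ) < dot (ptZ (nvZ i)) x} := by
    ext x; simp [ExtS, Set.mem_iUnion]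
  rw [h]
  exact isOpen_iUnion fun i => isOpen_lt continuous_const (cont_dot _)

lemma IntExt_disj : Disjoint IntS ExtS := by
  rw [Set.disjoint_left]
  rintro x hI ⟨i, hi⟩
  exact absurd (hI i) (not_lt.2 hi.le)

lemma cv_pos : ∀ i : Fin 10, 0 < cvZ i := by decide
lemma side_cert : ∀ i : Fin 10, 1998^2 * dotZ (nvZ i) (nvZ i) ≤ (cvZ i)^2 := by decide
lemma nv_pos : ∀ i : Fin 10, 0 < dotZ (nvZ i) (nvZ i) := by decide

lemma side_in (n : ℤ × ℤ) (c : ℤ) {x : Plane} (hx : ‖x‖ < 1998)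
    (hc : 0 < c) (hcc : 1998^2 * dotZ n n ≤ c^2) (hnz : 0 < dotZ n n) :
    dot (ptZ n) x < ((c : ℤ) : ℝ) := by
  have hnn : ‖ptZ n‖^2 = ((dotZ n n : ℤ) : ℝ) := norm_ptZ_sq n
  have hnzr : (0:ℝ) < ((dotZ n n : ℤ) : ℝ) := by exact_mod_cast hnz
  have hnpos : 0 < ‖ptZ n‖ := by nlinarith [norm_nonneg (ptZ n)]
  have hcr : (0:ℝ) < ((c : ℤ) : ℝ) := by exact_mod_cast hc
  have hccr : (1998:ℝ)^2 * ((dotZ n n : ℤ) : ℝ) ≤ ((c : ℤ) : ℝ)^2 := by exact_mod_cast hcc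
  have h1 : ‖ptZ n‖ * 1998 ≤ ((c : ℤ) : ℝ) := by nlinarith [norm_nonneg (ptZ n)]
  calc dot (ptZ n) x ≤ ‖ptZ n‖ * ‖x‖ := real_inner_le_norm _ _
    _ < ‖ptZ n‖ * 1998 := mul_lt_mul_of_pos_left hx hnpos
    _ ≤ ((c : ℤ) : ℝ) := h1

lemma EZ_norm : ∀ m : Fin 6, dotZ (EZ m) (EZ m) ≤ 1973^2 := by decide

lemma C_sub_IntS : C ⊆ IntS := by
  intro x hx
  rw [mem_C_iff] at hx
  obtain ⟨m, k, hk, hd⟩ := hx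
  have hH : ‖Hp‖ ≤ 1973 := by
    refine normZ_le _ _ (by norm_num) ?_
    norm_num [HZ, dotZ]
  have hE : ‖Ep m‖ ≤ 1973 := by
    refine normZ_le _ _ (by norm_num) ?_
    have h := EZ_norm m
    exact_mod_cast (by exact_mod_cast h : ((dotZ (EZ m) (EZ m) : ℤ) : ℝ) ≤ ((1973^2 : ℤ) : ℝ))
  have hk' : ‖k‖ ≤ 1973 := le_trans (norm_le_max hk) (max_le hH hE)
  have hxk : ‖x - k‖ < 25 := by rw [← dist_eq_norm]; exact hd
  have hxn : ‖x‖ < 1998 := by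
    have h2 := norm_add_le k (x - k)
    have e : k + (x - k) = x := by abel
    rw [e] at h2
    linarith
  intro i
  exact side_in (nvZ i) (cvZ i) hxn (cv_pos i) (side_cert i) (nv_pos i)

lemma compl_sub : (edgeUnion B11 fpt)ᶜ ⊆ IntS ∪ ExtS := by
  intro x hx
  by_contra hc
  simp only [Set.mem_union, not_or] at hc
  obtain ⟨hInt, hExt⟩ := hc
  have hall : ∀ i : Fin 10, dot (ptZ (nvZ i)) x ≤ ((cvZ i : ℤ) : ℝ) := by
    intro i
    by_contra hgt
    exact hExt ⟨i, lt_of_not_ge hgt⟩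
  have hex : ∃ i : Fin 10, dot (ptZ (nvZ i)) x = ((cvZ i : ℤ) : ℝ) := by
    by_contra hno
    push_neg at hno
    exact hInt fun i => lt_of_le_of_ne (hall i) (hno i)
  obtain ⟨i, hi⟩ := hex
  exfalso
  apply hx
  fin_cases i
  · exact Set.mem_iUnion.2 ⟨0, Set.mem_iUnion.2 ⟨1, Set.mem_iUnion.2 ⟨by decide, face0 x hi (hall 9) (hall 1)⟩⟩⟩
  · exact Set.mem_iUnion.2 ⟨1, Set.mem_iUnion.2 ⟨2, Set.mem_iUnion.2 ⟨by decide, face1 x hi (hall 0) (hall 2)⟩⟩⟩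
  · exact Set.mem_iUnion.2 ⟨2, Set.mem_iUnion.2 ⟨3, Set.mem_iUnion.2 ⟨by decide, face2 x hi (hall 1) (hall 3)⟩⟩⟩
  · exact Set.mem_iUnion.2 ⟨3, Set.mem_iUnion.2 ⟨4, Set.mem_iUnion.2 ⟨by decide, face3 x hi (hall 2) (hall 4)⟩⟩⟩
  · exact Set.mem_iUnion.2 ⟨4, Set.mem_iUnion.2 ⟨5, Set.mem_iUnion.2 ⟨by decide, face4 x hi (hall 3) (hall 5)⟩⟩⟩
  · exact Set.mem_iUnion.2 ⟨5, Set.mem_iUnion.2 ⟨6, Set.mem_iUnion.2 ⟨by decide, face5 x hi (hall 4) (hall 6)⟩⟩⟩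
  · exact Set.mem_iUnion.2 ⟨6, Set.mem_iUnion.2 ⟨7, Set.mem_iUnion.2 ⟨by decide, face6 x hi (hall 5) (hall 7)⟩⟩⟩
  · exact Set.mem_iUnion.2 ⟨7, Set.mem_iUnion.2 ⟨8, Set.mem_iUnion.2 ⟨by decide, face7 x hi (hall 6) (hall 8)⟩⟩⟩
  · exact Set.mem_iUnion.2 ⟨8, Set.mem_iUnion.2 ⟨9, Set.mem_iUnion.2 ⟨by decide, face8 x hi (hall 7) (hall 9)⟩⟩⟩
  · exact Set.mem_iUnion.2 ⟨9, Set.mem_iUnion.2 ⟨0, Set.mem_iUnion.2 ⟨by decide, face9 x hi (hall 8) (hall 0)⟩⟩⟩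

lemma IntS_bounded : Bornology.IsBounded IntS := by
  apply (Metric.isBounded_closedBall (x := (0 : Plane)) (r := 1000000)).subset
  intro x hx
  have h0 := hx 0
  have h1 := hx 1
  have h4 := hx 4
  have h5 := hx 5
  have h6 := hx 6
  rw [dot_eval] at h0 h1 h4 h5 h6
  have r01 : ptZ (nvZ 0) 0 = ((-1700:ℤ):ℝ) := rfl
  have r02 : ptZ (nvZ 0) 1 = ((6750:ℤ):ℝ) := rfl
  have r03 : ((cvZ 0 : ℤ):ℝ) = ((347227500:ℤ):ℝ) := rfl
  have r11 : ptZ (nvZ 1) 0 = ((-2600:ℤ):ℝ) := rfl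
  have r12 : ptZ (nvZ 1) 1 = ((6450:ℤ):ℝ) := rfl
  have r13 : ((cvZ 1 : ℤ):ℝ) = ((346867500:ℤ):ℝ) := rfl
  have r41 : ptZ (nvZ 4) 0 = ((-86400:ℤ):ℝ) := rfl
  have r42 : ptZ (nvZ 4) 1 = ((-42150:ℤ):ℝ) := rfl
  have r43 : ((cvZ 4 : ℤ):ℝ) = ((1324207500:ℤ):ℝ) := rfl
  have r51 : ptZ (nvZ 5) 0 = ((1700:ℤ):ℝ) := rfl
  have r52 : ptZ (nvZ 5) 1 = ((-6750:ℤ):ℝ) := rfl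
  have r53 : ((cvZ 5 : ℤ):ℝ) = ((347227500:ℤ):ℝ) := rfl
  have r61 : ptZ (nvZ 6) 0 = ((2600:ℤ):ℝ) := rfl
  have r62 : ptZ (nvZ 6) 1 = ((-6450:ℤ):ℝ) := rfl
  have r63 : ((cvZ 6 : ℤ):ℝ) = ((346867500:ℤ):ℝ) := rfl
  rw [r01, r02, r03] at h0
  rw [r11, r12, r13] at h1
  rw [r41, r42, r43] at h4
  rw [r51, r52, r53] at h5
  rw [r61, r62, r63] at h6
  push_cast at h0 h1 h4 h5 h6
  have b1 : x 0 ≤ 695668 := by linarith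
  have b2 : -35999 ≤ x 0 := by linarith
  have b3 : x 1 ≤ 226647 := by linarith
  have b4 : -226647 ≤ x 1 := by linarith
  have hb : ‖x‖^2 ≤ (1000000:ℝ)^2 := by
    rw [norm_sq_eval]
    nlinarith [mul_nonneg (by linarith : (0:ℝ) ≤ 695668 - x 0) (by linarith : (0:ℝ) ≤ x 0 + 35999),
      mul_nonneg (by linarith : (0:ℝ) ≤ 226647 - x 1) (by linarith : (0:ℝ) ≤ x 1 + 226647)]
  have hfin : ‖x‖ ≤ 1000000 := by nlinarith [norm_nonneg x]
  simpa [Metric.mem_closedBall, dist_zero_right] using hfin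

lemma inside : Disjoint C (outsideRegion B11 fpt) := by
  rw [Set.disjoint_left]
  intro x hxC hxO
  obtain ⟨hxc, hub⟩ := hxO
  apply hub
  have hsub : connectedComponentIn (edgeUnion B11 fpt)ᶜ x ⊆ IntS := by
    apply IsPreconnected.subset_left_of_subset_union isOpen_IntS isOpen_ExtS IntExt_disj
      ((connectedComponentIn_subset _ _).trans compl_sub)
      ⟨x, mem_connectedComponentIn hxc, C_sub_IntS hxC⟩
    exact isPreconnected_connectedComponentIn
  exact IntS_bounded.subset hsub

lemma main : IsInsideObstacleRep B11 fpt C :=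
  ⟨⟨fpt_inj, genpos, isOpen_C, isConnected_C, range_disj, adj_iff⟩, inside⟩

end B11X

/-- The graph `B₁₁` has an inside-obstacle representation. -/
theorem B11_hasInsideObstacleRep :
    ∃ (f : Fin 11 → Plane) (C : Set Plane), IsInsideObstacleRep B11 f C := by
  exact ⟨B11X.fpt, B11X.C, B11X.main⟩

end
end

section
/- The complete bipartite graph K_{2,3} has an outside-obstacle representation but no inside-obstacle representation. -/
noncomputable section

namespace K23
open Set Bornology

def pt (x y : ℝ) : Plane := (WithLp.equiv 2 _).symm ![x, y]

@[simp] lemma pt_zero (x y : ℝ) : pt x y 0 = x := rfl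
@[simp] lemma pt_one (x y : ℝ) : pt x y 1 = y := rfl

/-- cross product of two vectors -/
def cross (u v : Plane) : ℝ := u 0 * v 1 - u 1 * v 0

/-- linear functional -/
def F (c0 c1 : ℝ) (q : Plane) : ℝ := c0 * q 0 + c1 * q 1

lemma F_combo (c0 c1 a b : ℝ) (x y : Plane) :
    F c0 c1 (a • x + b • y) = a * F c0 c1 x + b * F c0 c1 y := by
  simp [F]; ring

lemma continuous_F (c0 c1 : ℝ) : Continuous (F c0 c1) := by
  have h0 := (EuclideanSpace.proj (𝕜 := ℝ) (0 : Fin 2)).continuous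
  have h1 := (EuclideanSpace.proj (𝕜 := ℝ) (1 : Fin 2)).continuous
  exact ((continuous_const.mul h0).add (continuous_const.mul h1))

/-- separation of two segments by a line -/
lemma disjoint_seg_of_sep {c0 c1 r : ℝ} {p1 p2 q1 q2 : Plane}
    (h1 : F c0 c1 p1 < r) (h2 : F c0 c1 p2 < r)
    (h3 : r ≤ F c0 c1 q1) (h4 : r ≤ F c0 c1 q2) :
    Disjoint (segment ℝ p1 p2) (segment ℝ q1 q2) := by
  rw [Set.disjoint_left]
  rintro z ⟨a, b, ha, hb, hab, rfl⟩ ⟨a', b', ha', hb', hab', hz⟩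
  have e1 : F c0 c1 (a • p1 + b • p2) = a * F c0 c1 p1 + b * F c0 c1 p2 := F_combo ..
  have e2 : F c0 c1 (a' • q1 + b' • q2) = a' * F c0 c1 q1 + b' * F c0 c1 q2 := F_combo ..
  rw [hz] at e2
  have key : a * F c0 c1 p1 + b * F c0 c1 p2 < r := by
    rcases eq_or_lt_of_le ha with h | h
    · have hb1 : b = 1 := by linarith
      rw [← h, hb1]; nlinarith
    · have hr : a * r + b * r = r := by rw [← add_mul, hab, one_mul]
      linarith [mul_lt_mul_of_pos_left h1 h, mul_le_mul_of_nonneg_left h2.le hb]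
  have key2 : r ≤ a' * F c0 c1 q1 + b' * F c0 c1 q2 := by
    have hr : a' * r + b' * r = r := by rw [← add_mul, hab', one_mul]
    linarith [mul_le_mul_of_nonneg_left h3 ha', mul_le_mul_of_nonneg_left h4 hb']
  linarith [e1, e2]

lemma cross_aff3 (u c y1 y2 y3 : Plane) {α β γ : ℝ} (h : α + β + γ = 1) :
    cross u ((α • y1 + β • y2 + γ • y3) - c)
      = α * cross u (y1 - c) + β * cross u (y2 - c) + γ * cross u (y3 - c) := by
  have hγ : γ = 1 - α - β := by linarith
  subst hγ
  simp only [cross, PiLp.add_apply, PiLp.sub_apply, PiLp.smul_apply, smul_eq_mul]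
  ring

lemma cross_aff2 (u c y1 y2 : Plane) {α β : ℝ} (h : α + β = 1) :
    cross u ((α • y1 + β • y2) - c) = α * cross u (y1 - c) + β * cross u (y2 - c) := by
  have hβ : β = 1 - α := by linarith
  subst hβ
  simp only [cross, PiLp.add_apply, PiLp.sub_apply, PiLp.smul_apply, smul_eq_mul]
  ring

lemma collinear_of_cross {p q r : Plane} (h : cross (q - p) (r - p) = 0) :
    Collinear ℝ ({p, q, r} : Set Plane) := by
  rw [collinear_iff_of_mem (Set.mem_insert p _)]
  have hmem : ∀ v : Plane, ∀ x : Plane, x - p = v → ∃ t : ℝ, x = t • v +ᵥ p := by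
    intro v x hx
    exact ⟨1, by simp [vadd_eq_add, ← hx]⟩
  by_cases h0 : (q - p) 0 = 0 ∧ (q - p) 1 = 0
  · -- q = p
    have hqp : q = p := by
      have : q - p = 0 := by
        ext i; fin_cases i <;> simp [h0.1, h0.2]
      have := sub_eq_zero.mp this; exact this
    refine ⟨r - p, ?_⟩
    rintro x hx
    simp only [Set.mem_insert_iff, Set.mem_singleton_iff] at hx
    rcases hx with rfl | rfl | rfl
    · exact ⟨0, by simp [vadd_eq_add]⟩
    · exact ⟨0, by simp [vadd_eq_add, hqp]⟩
    · exact ⟨1, by simp [vadd_eq_add]⟩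
  · refine ⟨q - p, ?_⟩
    have hrp : ∃ t : ℝ, r - p = t • (q - p) := by
      have hc : (q 0 - p 0) * (r 1 - p 1) - (q 1 - p 1) * (r 0 - p 0) = 0 := by
        simpa [cross, PiLp.sub_apply] using h
      rcases not_and_or.mp h0 with h0 | h0 <;> simp only [PiLp.sub_apply] at h0
      · refine ⟨(r 0 - p 0) / (q 0 - p 0), ?_⟩
        ext i; fin_cases i <;> simp only [PiLp.smul_apply, PiLp.sub_apply, smul_eq_mul, Fin.mk_zero, Fin.mk_one]
        · exact (div_mul_cancel₀ _ h0).symm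
        · rw [div_mul_eq_mul_div, eq_div_iff h0]; linear_combination hc
      · refine ⟨(r 1 - p 1) / (q 1 - p 1), ?_⟩
        ext i; fin_cases i <;> simp only [PiLp.smul_apply, PiLp.sub_apply, smul_eq_mul, Fin.mk_zero, Fin.mk_one]
        · rw [div_mul_eq_mul_div, eq_div_iff h0]; linear_combination (-1 : ℝ) * hc
        · exact (div_mul_cancel₀ _ h0).symm
    obtain ⟨t, ht⟩ := hrp
    rintro x hx
    simp only [Set.mem_insert_iff, Set.mem_singleton_iff] at hx
    rcases hx with rfl | rfl | rfl
    · exact ⟨0, by simp [vadd_eq_add]⟩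
    · exact ⟨1, by simp [vadd_eq_add]⟩
    · exact ⟨t, by rw [← ht]; simp [vadd_eq_add]⟩

lemma not_collinear_of_cross {p q r : Plane} (h : cross (q - p) (r - p) ≠ 0) :
    ¬ Collinear ℝ ({p, q, r} : Set Plane) := by
  intro hc
  rw [collinear_iff_of_mem (Set.mem_insert p _)] at hc
  obtain ⟨v, hv⟩ := hc
  obtain ⟨s, hs⟩ := hv q (by simp)
  obtain ⟨t, ht⟩ := hv r (by simp)
  apply h
  have hq : q - p = s • v := by rw [hs]; simp [vadd_eq_add]
  have hr : r - p = t • v := by rw [ht]; simp [vadd_eq_add]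
  simp only [cross, hq, hr, PiLp.smul_apply, smul_eq_mul]
  ring

lemma norm_eq_sqrt (q : Plane) : ‖q‖ = Real.sqrt (q 0 ^ 2 + q 1 ^ 2) := by
  rw [EuclideanSpace.norm_eq]
  simp [Fin.sum_univ_two, Real.norm_eq_abs, sq_abs]

lemma norm_le_of (q : Plane) (r : ℝ) (hr : 0 ≤ r) (h : q 0 ^ 2 + q 1 ^ 2 ≤ r ^ 2) :
    ‖q‖ ≤ r := by
  rw [norm_eq_sqrt]
  calc Real.sqrt (q 0 ^ 2 + q 1 ^ 2) ≤ Real.sqrt (r ^ 2) := Real.sqrt_le_sqrt h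
    _ = r := Real.sqrt_sq hr

lemma norm_pt_zero (m : ℝ) : ‖pt 0 m‖ = |m| := by
  rw [norm_eq_sqrt]; simp [Real.sqrt_sq_eq_abs]

lemma rank_plane : 1 < Module.rank ℝ Plane := by
  have h : Module.finrank ℝ Plane = 2 := finrank_euclideanSpace_fin
  have h2 : (Module.finrank ℝ Plane : Cardinal) = Module.rank ℝ Plane :=
    Module.finrank_eq_rank ℝ Plane
  rw [← h2, h]
  exact_mod_cast one_lt_two

def W50 : Set Plane := {q : Plane | 50 < ‖q‖}

lemma p0_mem_W50 : pt 0 (-100) ∈ W50 := by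
  simp only [W50, Set.mem_setOf_eq, norm_pt_zero]
  rw [abs_of_nonpos (by norm_num)]; norm_num

lemma sphere100_subset : Metric.sphere (0 : Plane) 100 ⊆ W50 := by
  intro q hq
  rw [mem_sphere_zero_iff_norm] at hq
  simp only [W50, Set.mem_setOf_eq, hq]; norm_num

lemma p0_mem_sphere : pt 0 (-100) ∈ Metric.sphere (0 : Plane) 100 := by
  rw [mem_sphere_zero_iff_norm, norm_pt_zero, abs_of_nonpos (by norm_num)]; norm_num

lemma isPreconnected_W50 : IsPreconnected W50 := by
  have hsph : IsConnected (Metric.sphere (0 : Plane) 100) :=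
    isConnected_sphere rank_plane 0 (by norm_num)
  apply isPreconnected_of_forall (pt 0 (-100))
  intro y hy
  have hy' : (50 : ℝ) < ‖y‖ := hy
  have hy0 : (0 : ℝ) < ‖y‖ := by linarith
  set T : ℝ := 100 / ‖y‖ with hT
  have hT0 : 0 < T := by positivity
  have hTnorm : T * ‖y‖ = 100 := by rw [hT]; field_simp
  refine ⟨(fun s : ℝ => s • y) '' Set.uIcc 1 T ∪ Metric.sphere 0 100, ?_, ?_, ?_, ?_⟩
  · rintro z (⟨s, hs, rfl⟩ | hz)
    · obtain ⟨h1, h2⟩ : min 1 T ≤ s ∧ s ≤ max 1 T := by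
        simpa [Set.uIcc, Set.mem_Icc] using hs
      have hspos : 0 < s := lt_of_lt_of_le (lt_min one_pos hT0) h1
      show (50 : ℝ) < ‖s • y‖
      rw [norm_smul, Real.norm_eq_abs, abs_of_pos hspos]
      rcases le_total T 1 with hc | hc
      · have : T ≤ s := le_trans (by simp [min_eq_right hc]) h1
        nlinarith
      · have : 1 ≤ s := le_trans (by simp [min_eq_left hc]) h1
        nlinarith
    · exact sphere100_subset hz
  · exact Or.inr p0_mem_sphere
  · exact Or.inl ⟨1, Set.left_mem_uIcc, one_smul ℝ y⟩
  · apply IsPreconnected.union (T • y)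
    · exact ⟨T, Set.right_mem_uIcc, rfl⟩
    · rw [mem_sphere_zero_iff_norm, norm_smul, Real.norm_eq_abs, abs_of_pos hT0, hTnorm]
    · exact isPreconnected_uIcc.image _ (continuous_id.smul continuous_const).continuousOn
    · exact hsph.isPreconnected

lemma not_bounded_of_W50_subset {s : Set Plane} (h : W50 ⊆ s) : ¬ IsBounded s := by
  intro hb
  rw [isBounded_iff_forall_norm_le] at hb
  obtain ⟨M, hM⟩ := hb
  have h50 : (50 : ℝ) ≤ max M 50 := le_max_right M 50
  have hpos : (0 : ℝ) ≤ max M 50 + 1 := by linarith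
  have hmem : pt 0 (max M 50 + 1) ∈ W50 := by
    simp only [W50, Set.mem_setOf_eq, norm_pt_zero, abs_of_nonneg hpos]
    linarith
  have hle := hM _ (h hmem)
  rw [norm_pt_zero, abs_of_nonneg hpos] at hle
  have := le_max_left M 50
  linarith

lemma mem_outsideRegion_of {V : Type} {G : SimpleGraph V} {f : V → Plane} {w : Plane}
    {A : Set Plane} (hA : IsPreconnected A) (hwA : w ∈ A)
    (hsub : A ⊆ (edgeUnion G f)ᶜ) (hnb : ¬ IsBounded A) : w ∈ outsideRegion G f :=
  ⟨hsub hwA, fun hb => hnb (hb.subset (hA.subset_connectedComponentIn hwA hsub))⟩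

lemma outside_eq {V : Type} {G : SimpleGraph V} {f : V → Plane}
    (hS : edgeUnion G f ⊆ Metric.closedBall 0 50) :
    outsideRegion G f = connectedComponentIn (edgeUnion G f)ᶜ (pt 0 (-100)) := by
  have hWsub : W50 ⊆ (edgeUnion G f)ᶜ := by
    intro q hq hmem
    have h1 := hS hmem
    rw [Metric.mem_closedBall, dist_zero_right] at h1
    exact absurd h1 (not_le.mpr hq)
  ext q
  constructor
  · rintro ⟨hq, hnb⟩
    have hz : ∃ z ∈ connectedComponentIn (edgeUnion G f)ᶜ q, (50 : ℝ) < ‖z‖ := by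
      by_contra hcon
      push_neg at hcon
      exact hnb ((Metric.isBounded_closedBall (x := (0 : Plane)) (r := 50)).subset
        fun z hz => by
          rw [Metric.mem_closedBall, dist_zero_right]; exact hcon z hz)
    obtain ⟨z, hzc, hz50⟩ := hz
    have hcc : connectedComponentIn (edgeUnion G f)ᶜ q
        = connectedComponentIn (edgeUnion G f)ᶜ z := connectedComponentIn_eq hzc
    have hW : W50 ⊆ connectedComponentIn (edgeUnion G f)ᶜ z :=
      isPreconnected_W50.subset_connectedComponentIn hz50 hWsub
    have hp0 : pt 0 (-100) ∈ connectedComponentIn (edgeUnion G f)ᶜ q := by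
      rw [hcc]; exact hW p0_mem_W50
    rw [← connectedComponentIn_eq hp0]
    exact mem_connectedComponentIn hq
  · intro hq
    refine ⟨connectedComponentIn_subset _ _ hq, ?_⟩
    have hcc : connectedComponentIn (edgeUnion G f)ᶜ (pt 0 (-100))
        = connectedComponentIn (edgeUnion G f)ᶜ q := connectedComponentIn_eq hq
    have hW : W50 ⊆ connectedComponentIn (edgeUnion G f)ᶜ (pt 0 (-100)) :=
      isPreconnected_W50.subset_connectedComponentIn p0_mem_W50 hWsub
    rw [hcc] at hW
    exact not_bounded_of_W50_subset hW

lemma isClosed_edgeUnion {V : Type} [Finite V] (G : SimpleGraph V) (f : V → Plane) :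
    IsClosed (edgeUnion G f) := by
  unfold edgeUnion
  apply isClosed_iUnion_of_finite
  intro u
  apply isClosed_iUnion_of_finite
  intro v
  by_cases h : G.Adj u v
  · simp only [h, Set.iUnion_true]
    rw [← convexHull_pair]
    exact (((Set.finite_singleton (f v)).insert (f u)).isCompact_convexHull ℝ).isClosed
  · simp [h]


/-! ### The explicit outside-obstacle representation of `K_{2,3}` -/

abbrev K : SimpleGraph (Fin 2 ⊕ Fin 3) := completeBipartiteGraph (Fin 2) (Fin 3)

def a1 : Plane := pt (-1) 0
def a2 : Plane := pt 1 0
def b1 : Plane := pt (-4) 4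
def b2 : Plane := pt 0 6
def b3 : Plane := pt 4 4

def fK : Fin 2 ⊕ Fin 3 → Plane := Sum.elim ![a1, a2] ![b1, b2, b3]

@[simp] lemma fK_a1 : fK (Sum.inl 0) = a1 := rfl
@[simp] lemma fK_a2 : fK (Sum.inl 1) = a2 := rfl
@[simp] lemma fK_b1 : fK (Sum.inr 0) = b1 := rfl
@[simp] lemma fK_b2 : fK (Sum.inr 1) = b2 := rfl
@[simp] lemma fK_b3 : fK (Sum.inr 2) = b3 := rfl

lemma adj_lr (i : Fin 2) (j : Fin 3) : K.Adj (Sum.inl i) (Sum.inr j) := by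
  simp [completeBipartiteGraph]

lemma adj_rl (i : Fin 2) (j : Fin 3) : K.Adj (Sum.inr j) (Sum.inl i) := by
  simp [completeBipartiteGraph]

lemma fK_inj : Function.Injective fK := by
  intro u v h
  rcases u with iu | iu <;> rcases v with iv | iv <;> fin_cases iu <;> fin_cases iv <;>
    first
      | rfl
      | (exfalso
         have h0 := congrArg (fun q : Plane => q 0) h
         simp only [fK, Sum.elim_inl, Sum.elim_inr, Matrix.cons_val_zero, Matrix.cons_val_one,
           Matrix.head_cons, Matrix.cons_val_two, Matrix.tail_cons, a1, a2, b1, b2, b3,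
           pt_zero] at h0
         norm_num at h0)

lemma genpos_fK : InGenPos (Set.range fK) := by
  rintro p ⟨u, rfl⟩ q ⟨v, rfl⟩ r ⟨w, rfl⟩ hpq hpr hqr
  apply not_collinear_of_cross
  rcases u with iu | iu <;> rcases v with iv | iv <;> rcases w with iw | iw <;>
    fin_cases iu <;> fin_cases iv <;> fin_cases iw <;>
    first
      | (exact absurd rfl hpq)
      | (exact absurd rfl hpr)
      | (exact absurd rfl hqr)
      | (simp only [fK, Sum.elim_inl, Sum.elim_inr, Matrix.cons_val_zero, Matrix.cons_val_one,
           Matrix.head_cons, Matrix.cons_val_two, Matrix.tail_cons, a1, a2, b1, b2, b3]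
         norm_num [cross, pt, PiLp.sub_apply])

lemma edgeUnion_K_eq :
    edgeUnion K fK = segment ℝ a1 b1 ∪ segment ℝ a1 b2 ∪ segment ℝ a1 b3
      ∪ segment ℝ a2 b1 ∪ segment ℝ a2 b2 ∪ segment ℝ a2 b3 := by
  apply subset_antisymm
  · intro q hq
    simp only [edgeUnion, Set.mem_iUnion] at hq
    obtain ⟨u, v, hadj, hseg⟩ := hq
    rcases u with iu | iu <;> rcases v with iv | iv <;> fin_cases iu <;> fin_cases iv <;>
      try simp only [completeBipartiteGraph_adj, Sum.isLeft_inl, Sum.isRight_inl,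
        Sum.isLeft_inr, Sum.isRight_inr, and_true, true_and, and_false, false_and,
        or_false, false_or, or_self] at hadj
    all_goals
      simp only [fK, Sum.elim_inl, Sum.elim_inr, Matrix.cons_val_zero, Matrix.cons_val_one,
        Matrix.head_cons, Matrix.cons_val_two, Matrix.tail_cons] at hseg
    all_goals simp only [Set.mem_union]
    all_goals first
      | tauto
      | (rw [segment_symm] at hseg; tauto)
  · intro q hq
    simp only [Set.mem_union] at hq
    simp only [edgeUnion, Set.mem_iUnion]
    rcases hq with ((((h | h) | h) | h) | h) | h
    · exact ⟨Sum.inl 0, Sum.inr 0, adj_lr 0 0, h⟩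
    · exact ⟨Sum.inl 0, Sum.inr 1, adj_lr 0 1, h⟩
    · exact ⟨Sum.inl 0, Sum.inr 2, adj_lr 0 2, h⟩
    · exact ⟨Sum.inl 1, Sum.inr 0, adj_lr 1 0, h⟩
    · exact ⟨Sum.inl 1, Sum.inr 1, adj_lr 1 1, h⟩
    · exact ⟨Sum.inl 1, Sum.inr 2, adj_lr 1 2, h⟩

lemma norm_fK_le (v : Fin 2 ⊕ Fin 3) : ‖fK v‖ ≤ 50 := by
  have h : ∀ x y : ℝ, x ^ 2 + y ^ 2 ≤ 50 ^ 2 → ‖pt x y‖ ≤ 50 := fun x y hxy =>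
    norm_le_of _ _ (by norm_num) (by simpa using hxy)
  rcases v with i | i <;> fin_cases i <;>
    · simp only [fK_a1, fK_a2, fK_b1, fK_b2, fK_b3, a1, a2, b1, b2, b3]
      apply h <;> norm_num

lemma hS_K : edgeUnion K fK ⊆ Metric.closedBall 0 50 := by
  intro q hq
  simp only [edgeUnion, Set.mem_iUnion] at hq
  obtain ⟨u, v, hadj, hseg⟩ := hq
  have h1 : fK u ∈ Metric.closedBall (0 : Plane) 50 := by
    rw [Metric.mem_closedBall, dist_zero_right]; exact norm_fK_le u
  have h2 : fK v ∈ Metric.closedBall (0 : Plane) 50 := by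
    rw [Metric.mem_closedBall, dist_zero_right]; exact norm_fK_le v
  exact (convex_closedBall (0 : Plane) 50).segment_subset h1 h2 hseg

lemma mem_W50_of (q : Plane) (h : 50 ^ 2 < q 0 ^ 2 + q 1 ^ 2) : q ∈ W50 := by
  have h0 : (0:ℝ) ≤ q 0 ^ 2 + q 1 ^ 2 := by positivity
  simp only [W50, Set.mem_setOf_eq, norm_eq_sqrt]
  rw [show (50:ℝ) = Real.sqrt (50 ^ 2) by rw [Real.sqrt_sq]; norm_num]
  exact Real.sqrt_lt_sqrt (by norm_num) h

lemma escape_mem {w far : Plane} (hfar : far ∈ W50)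
    (hd : ∀ z ∈ segment ℝ w far, z ∉ edgeUnion K fK) : w ∈ outsideRegion K fK := by
  apply mem_outsideRegion_of (A := segment ℝ w far ∪ W50)
  · exact IsPreconnected.union far (right_mem_segment ℝ w far) hfar
      (convex_segment w far).isPreconnected isPreconnected_W50
  · exact Or.inl (left_mem_segment ℝ w far)
  · rintro z (hz | hz)
    · exact hd z hz
    · intro hmem
      have h1 := hS_K hmem
      rw [Metric.mem_closedBall, dist_zero_right] at h1
      exact absurd h1 (not_le.mpr hz)
  · exact not_bounded_of_W50_subset Set.subset_union_right

lemma sep6 {w far : Plane} {c0 c1 r : ℝ} {e1 e2 : Plane}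
    (h1 : F c0 c1 w < r) (h2 : F c0 c1 far < r) (h3 : r ≤ F c0 c1 e1) (h4 : r ≤ F c0 c1 e2)
    {z : Plane} (hz : z ∈ segment ℝ w far) (hm : z ∈ segment ℝ e1 e2) : False :=
  Set.disjoint_left.mp (disjoint_seg_of_sep h1 h2 h3 h4) hz hm

lemma far_W50 (c : ℝ) : pt c 100 ∈ W50 := by
  apply mem_W50_of; simp; nlinarith [sq_nonneg c]

lemma w1_out : pt 0 0 ∈ outsideRegion K fK := by
  apply escape_mem (far := pt 0 (-100)) p0_mem_W50
  intro z hz hmem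
  rw [edgeUnion_K_eq] at hmem
  rcases hmem with ((((h | h) | h) | h) | h) | h
  · exact sep6 (c0 := -1) (c1 := 0) (r := 1/2) (by norm_num [F]) (by norm_num [F])
      (by norm_num [F, a1]) (by norm_num [F, b1]) hz h
  · exact sep6 (c0 := -6) (c1 := 1) (r := 3) (by norm_num [F]) (by norm_num [F])
      (by norm_num [F, a1]) (by norm_num [F, b2]) hz h
  · exact sep6 (c0 := -4) (c1 := 5) (r := 2) (by norm_num [F]) (by norm_num [F])
      (by norm_num [F, a1]) (by norm_num [F, b3]) hz h
  · exact sep6 (c0 := 4) (c1 := 5) (r := 2) (by norm_num [F]) (by norm_num [F])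
      (by norm_num [F, a2]) (by norm_num [F, b1]) hz h
  · exact sep6 (c0 := 6) (c1 := 1) (r := 3) (by norm_num [F]) (by norm_num [F])
      (by norm_num [F, a2]) (by norm_num [F, b2]) hz h
  · exact sep6 (c0 := 1) (c1 := 0) (r := 1/2) (by norm_num [F]) (by norm_num [F])
      (by norm_num [F, a2]) (by norm_num [F, b3]) hz h

lemma w2_out : pt (-2/5) (29/5) ∈ outsideRegion K fK := by
  apply escape_mem (far := pt (-2/5) 100) (far_W50 _)
  intro z hz hmem
  rw [edgeUnion_K_eq] at hmem
  rcases hmem with ((((h | h) | h) | h) | h) | h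
  · exact sep6 (c0 := -1) (c1 := 0) (r := 1/2) (by norm_num [F]) (by norm_num [F])
      (by norm_num [F, a1]) (by norm_num [F, b1]) hz h
  · exact sep6 (c0 := 6) (c1 := -1) (r := -7) (by norm_num [F]) (by norm_num [F])
      (by norm_num [F, a1]) (by norm_num [F, b2]) hz h
  · exact sep6 (c0 := 4) (c1 := -5) (r := -5) (by norm_num [F]) (by norm_num [F])
      (by norm_num [F, a1]) (by norm_num [F, b3]) hz h
  · exact sep6 (c0 := -4) (c1 := -5) (r := -5) (by norm_num [F]) (by norm_num [F])
      (by norm_num [F, a2]) (by norm_num [F, b1]) hz h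
  · exact sep6 (c0 := 1) (c1 := 0) (r := -1/5) (by norm_num [F]) (by norm_num [F])
      (by norm_num [F, a2]) (by norm_num [F, b2]) hz h
  · exact sep6 (c0 := 1) (c1 := 0) (r := 1/2) (by norm_num [F]) (by norm_num [F])
      (by norm_num [F, a2]) (by norm_num [F, b3]) hz h

lemma w3_out : pt (2/5) (29/5) ∈ outsideRegion K fK := by
  apply escape_mem (far := pt (2/5) 100) (far_W50 _)
  intro z hz hmem
  rw [edgeUnion_K_eq] at hmem
  rcases hmem with ((((h | h) | h) | h) | h) | h
  · exact sep6 (c0 := -1) (c1 := 0) (r := 1/2) (by norm_num [F]) (by norm_num [F])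
      (by norm_num [F, a1]) (by norm_num [F, b1]) hz h
  · exact sep6 (c0 := -1) (c1 := 0) (r := -1/5) (by norm_num [F]) (by norm_num [F])
      (by norm_num [F, a1]) (by norm_num [F, b2]) hz h
  · exact sep6 (c0 := 4) (c1 := -5) (r := -5) (by norm_num [F]) (by norm_num [F])
      (by norm_num [F, a1]) (by norm_num [F, b3]) hz h
  · exact sep6 (c0 := -4) (c1 := -5) (r := -5) (by norm_num [F]) (by norm_num [F])
      (by norm_num [F, a2]) (by norm_num [F, b1]) hz h
  · exact sep6 (c0 := -6) (c1 := -1) (r := -7) (by norm_num [F]) (by norm_num [F])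
      (by norm_num [F, a2]) (by norm_num [F, b2]) hz h
  · exact sep6 (c0 := 1) (c1 := 0) (r := 1/2) (by norm_num [F]) (by norm_num [F])
      (by norm_num [F, a2]) (by norm_num [F, b3]) hz h

lemma w4_out : pt (-18/5) 4 ∈ outsideRegion K fK := by
  apply escape_mem (far := pt (-18/5) 100) (far_W50 _)
  intro z hz hmem
  rw [edgeUnion_K_eq] at hmem
  rcases hmem with ((((h | h) | h) | h) | h) | h
  · exact sep6 (c0 := -4) (c1 := -3) (r := 3) (by norm_num [F]) (by norm_num [F])
      (by norm_num [F, a1]) (by norm_num [F, b1]) hz h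
  · exact sep6 (c0 := 1) (c1 := 0) (r := -2) (by norm_num [F]) (by norm_num [F])
      (by norm_num [F, a1]) (by norm_num [F, b2]) hz h
  · exact sep6 (c0 := 4) (c1 := -5) (r := -5) (by norm_num [F]) (by norm_num [F])
      (by norm_num [F, a1]) (by norm_num [F, b3]) hz h
  · exact sep6 (c0 := -4) (c1 := -5) (r := -5) (by norm_num [F]) (by norm_num [F])
      (by norm_num [F, a2]) (by norm_num [F, b1]) hz h
  · exact sep6 (c0 := 1) (c1 := 0) (r := -1/2) (by norm_num [F]) (by norm_num [F])
      (by norm_num [F, a2]) (by norm_num [F, b2]) hz h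
  · exact sep6 (c0 := 1) (c1 := 0) (r := 1/2) (by norm_num [F]) (by norm_num [F])
      (by norm_num [F, a2]) (by norm_num [F, b3]) hz h

lemma w1_seg : pt 0 0 ∈ segment ℝ a1 a2 := by
  refine ⟨1/2, 1/2, by norm_num, by norm_num, by norm_num, ?_⟩
  ext i; fin_cases i <;>
    simp only [PiLp.add_apply, PiLp.smul_apply, smul_eq_mul, a1, a2, Fin.mk_zero, Fin.mk_one,
      pt_zero, pt_one] <;> norm_num

lemma w2_seg : pt (-2/5) (29/5) ∈ segment ℝ b1 b2 := by
  refine ⟨1/10, 9/10, by norm_num, by norm_num, by norm_num, ?_⟩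
  ext i; fin_cases i <;>
    simp only [PiLp.add_apply, PiLp.smul_apply, smul_eq_mul, b1, b2, Fin.mk_zero, Fin.mk_one,
      pt_zero, pt_one] <;> norm_num

lemma w3_seg : pt (2/5) (29/5) ∈ segment ℝ b2 b3 := by
  refine ⟨9/10, 1/10, by norm_num, by norm_num, by norm_num, ?_⟩
  ext i; fin_cases i <;>
    simp only [PiLp.add_apply, PiLp.smul_apply, smul_eq_mul, b2, b3, Fin.mk_zero, Fin.mk_one,
      pt_zero, pt_one] <;> norm_num

lemma w4_seg : pt (-18/5) 4 ∈ segment ℝ b1 b3 := by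
  refine ⟨19/20, 1/20, by norm_num, by norm_num, by norm_num, ?_⟩
  ext i; fin_cases i <;>
    simp only [PiLp.add_apply, PiLp.smul_apply, smul_eq_mul, b1, b3, Fin.mk_zero, Fin.mk_one,
      pt_zero, pt_one] <;> norm_num

lemma fK_mem_edgeUnion (v : Fin 2 ⊕ Fin 3) : fK v ∈ edgeUnion K fK := by
  simp only [edgeUnion, Set.mem_iUnion]
  rcases v with i | i
  · exact ⟨Sum.inl i, Sum.inr 0, adj_lr i 0, left_mem_segment ℝ _ _⟩
  · exact ⟨Sum.inr i, Sum.inl 0, adj_rl 0 i, left_mem_segment ℝ _ _⟩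

theorem pos_rep : IsOutsideObstacleRep K fK (outsideRegion K fK) := by
  have hC : outsideRegion K fK = connectedComponentIn (edgeUnion K fK)ᶜ (pt 0 (-100)) :=
    outside_eq hS_K
  have hSclosed : IsClosed (edgeUnion K fK) := isClosed_edgeUnion K fK
  have hp0 : pt 0 (-100) ∈ (edgeUnion K fK)ᶜ := by
    intro hmem
    have h1 := hS_K hmem
    rw [Metric.mem_closedBall, dist_zero_right, norm_pt_zero,
      abs_of_nonpos (by norm_num : (-100:ℝ) ≤ 0)] at h1
    norm_num at h1
  refine ⟨⟨fK_inj, genpos_fK, ?_, ?_, ?_, ?_⟩, subset_rfl⟩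
  · rw [hC]; exact hSclosed.isOpen_compl.connectedComponentIn
  · rw [hC]; exact isConnected_connectedComponentIn_iff.mpr hp0
  · rw [Set.disjoint_left]
    rintro c hc ⟨v, rfl⟩
    exact hc.1 (fK_mem_edgeUnion v)
  · intro u v huv
    constructor
    · intro hadj
      rw [Set.disjoint_left]
      intro z hz hzC
      exact hzC.1 (by simp only [edgeUnion, Set.mem_iUnion]; exact ⟨u, v, hadj, hz⟩)
    · intro hdisj
      by_contra hnadj
      rcases u with iu | iu <;> rcases v with iv | iv <;> fin_cases iu <;> fin_cases iv <;>
        simp only [fK, Sum.elim_inl, Sum.elim_inr, Matrix.cons_val_zero, Matrix.cons_val_one,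
          Matrix.head_cons, Matrix.cons_val_two, Matrix.tail_cons] at hdisj <;>
      first
        | exact huv rfl
        | exact absurd (adj_lr _ _) hnadj
        | exact absurd (adj_rl _ _) hnadj
        | exact Set.disjoint_left.mp hdisj w1_seg w1_out
        | exact Set.disjoint_left.mp hdisj w2_seg w2_out
        | exact Set.disjoint_left.mp hdisj w3_seg w3_out
        | exact Set.disjoint_left.mp hdisj w4_seg w4_out
        | (rw [segment_symm] at hdisj
           first
             | exact Set.disjoint_left.mp hdisj w1_seg w1_out
             | exact Set.disjoint_left.mp hdisj w2_seg w2_out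
             | exact Set.disjoint_left.mp hdisj w3_seg w3_out
             | exact Set.disjoint_left.mp hdisj w4_seg w4_out)

/-! barycentric machinery -/

def gfun (A1 A2 q : Plane) : ℝ := cross (A2 - A1) (q - A1)

@[simp] lemma gfun_A1 (A1 A2 : Plane) : gfun A1 A2 A1 = 0 := by
  simp [gfun, cross, PiLp.sub_apply]; try ring
@[simp] lemma gfun_A2 (A1 A2 : Plane) : gfun A1 A2 A2 = 0 := by
  simp [gfun, cross, PiLp.sub_apply]; try ring
lemma gfun_swap (A1 A2 q : Plane) : gfun A2 A1 q = - gfun A1 A2 q := by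
  simp [gfun, cross, PiLp.sub_apply]; try ring

/-- second edge functional: `cross (B - A1) (q - A1)` -/
def kfun (A1 B q : Plane) : ℝ := cross (B - A1) (q - A1)

@[simp] lemma kfun_A1 (A1 B : Plane) : kfun A1 B A1 = 0 := by
  simp [kfun, cross, PiLp.sub_apply]; try ring
@[simp] lemma kfun_B (A1 B : Plane) : kfun A1 B B = 0 := by
  simp [kfun, cross, PiLp.sub_apply]; try ring
lemma kfun_A2 (A1 A2 B : Plane) : kfun A1 B A2 = - gfun A1 A2 B := by
  simp [kfun, gfun, cross, PiLp.sub_apply]; ring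

/-- barycentric coordinates w.r.t. the (nondegenerate) triangle A1 A2 B -/
def wb (A1 A2 B q : Plane) : ℝ := gfun A1 A2 q / gfun A1 A2 B
def w2c (A1 A2 B q : Plane) : ℝ := kfun A1 B q / kfun A1 B A2
def w1c (A1 A2 B q : Plane) : ℝ := 1 - w2c A1 A2 B q - wb A1 A2 B q

lemma tri_repr {A1 A2 B : Plane} (hδ : gfun A1 A2 B ≠ 0) (q : Plane) :
    q = w1c A1 A2 B q • A1 + w2c A1 A2 B q • A2 + wb A1 A2 B q • B := by
  have hδ' : kfun A1 B A2 ≠ 0 := by rw [kfun_A2]; exact neg_ne_zero.mpr hδ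
  obtain ⟨d, hd⟩ : ∃ d, gfun A1 A2 B = d := ⟨_, rfl⟩
  have hd0 : d ≠ 0 := hd ▸ hδ
  unfold w1c w2c wb
  rw [kfun_A2 A1 A2 B, hd]
  unfold gfun cross at hd
  unfold gfun kfun cross
  simp only [PiLp.sub_apply] at hd ⊢
  ext i; fin_cases i <;>
    simp only [PiLp.add_apply, PiLp.smul_apply, smul_eq_mul, Fin.mk_zero, Fin.mk_one] <;>
    field_simp <;> subst hd <;> ring

lemma tri_unique {A1 A2 B : Plane} (hδ : gfun A1 A2 B ≠ 0) {q : Plane} {α β γ : ℝ}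
    (hsum : α + β + γ = 1) (hq : q = α • A1 + β • A2 + γ • B) :
    α = w1c A1 A2 B q ∧ β = w2c A1 A2 B q ∧ γ = wb A1 A2 B q := by
  have hδ' : kfun A1 B A2 ≠ 0 := by rw [kfun_A2]; exact neg_ne_zero.mpr hδ
  have hg : gfun A1 A2 q = γ * gfun A1 A2 B := by
    rw [hq]
    have := cross_aff3 (A2 - A1) A1 A1 A2 B hsum
    simp only [gfun]
    rw [this]
    have e1 : cross (A2 - A1) (A1 - A1) = 0 := by simp [cross, PiLp.sub_apply]; try ring
    have e2 : cross (A2 - A1) (A2 - A1) = 0 := by simp [cross, PiLp.sub_apply]; try ring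
    rw [e1, e2]; ring
  have hk : kfun A1 B q = β * kfun A1 B A2 := by
    rw [hq]
    have := cross_aff3 (B - A1) A1 A1 A2 B hsum
    simp only [kfun]
    rw [this]
    have e1 : cross (B - A1) (A1 - A1) = 0 := by simp [cross, PiLp.sub_apply]; try ring
    have e2 : cross (B - A1) (B - A1) = 0 := by simp [cross, PiLp.sub_apply]; try ring
    rw [e1, e2]; ring
  have h3 : γ = wb A1 A2 B q := by rw [wb, hg]; field_simp
  have h2 : β = w2c A1 A2 B q := by rw [w2c, hk]; field_simp
  refine ⟨?_, h2, h3⟩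
  rw [w1c, ← h2, ← h3]; linarith

lemma continuous_gfun (A1 A2 : Plane) : Continuous (gfun A1 A2) := by
  have : gfun A1 A2 = fun q =>
      F (-(A2 - A1) 1) ((A2 - A1) 0) q + ((A2 - A1) 1 * A1 0 - (A2 - A1) 0 * A1 1) := by
    funext q; simp only [gfun, cross, F, PiLp.sub_apply]; ring
  rw [this]
  exact (continuous_F _ _).add continuous_const

lemma continuous_kfun (A1 B : Plane) : Continuous (kfun A1 B) := by
  have : kfun A1 B = fun q =>
      F (-(B - A1) 1) ((B - A1) 0) q + ((B - A1) 1 * A1 0 - (B - A1) 0 * A1 1) := by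
    funext q; simp only [kfun, cross, F, PiLp.sub_apply]; ring
  rw [this]
  exact (continuous_F _ _).add continuous_const

lemma continuous_wb (A1 A2 B : Plane) : Continuous (wb A1 A2 B) :=
  (continuous_gfun A1 A2).div_const _
lemma continuous_w2c (A1 A2 B : Plane) : Continuous (w2c A1 A2 B) :=
  (continuous_kfun A1 B).div_const _
lemma continuous_w1c (A1 A2 B : Plane) : Continuous (w1c A1 A2 B) :=
  (continuous_const.sub (continuous_w2c A1 A2 B)).sub (continuous_wb A1 A2 B)

/-! open triangle & quadrilateral interior -/

def OpenTri (A1 A2 B : Plane) : Set Plane :=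
  {q | 0 < w1c A1 A2 B q ∧ 0 < w2c A1 A2 B q ∧ 0 < wb A1 A2 B q}

def Dopen (A1 A2 : Plane) : Set Plane :=
  {q | ∃ s t : ℝ, 0 < s ∧ 0 < t ∧ s + t = 1 ∧ q = s • A1 + t • A2}

def IntQ (A1 A2 Bp Bm : Plane) : Set Plane :=
  OpenTri A1 A2 Bp ∪ OpenTri A1 A2 Bm ∪ Dopen A1 A2

lemma isOpen_openTri {A1 A2 B : Plane} : IsOpen (OpenTri A1 A2 B) := by
  have h1 : IsOpen {q : Plane | 0 < w1c A1 A2 B q} :=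
    isOpen_lt continuous_const (continuous_w1c A1 A2 B)
  have h2 : IsOpen {q : Plane | 0 < w2c A1 A2 B q} :=
    isOpen_lt continuous_const (continuous_w2c A1 A2 B)
  have h3 : IsOpen {q : Plane | 0 < wb A1 A2 B q} :=
    isOpen_lt continuous_const (continuous_wb A1 A2 B)
  exact h1.inter (h2.inter h3)

lemma dopen_coords {A1 A2 B : Plane} (hδ : gfun A1 A2 B ≠ 0) {q : Plane}
    (hq : q ∈ Dopen A1 A2) :
    0 < w1c A1 A2 B q ∧ 0 < w2c A1 A2 B q ∧ wb A1 A2 B q = 0 := by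
  obtain ⟨s, t, hs, ht, hst, rfl⟩ := hq
  have hco : s • A1 + t • A2 = s • A1 + t • A2 + (0:ℝ) • B := by
    rw [zero_smul, add_zero]
  obtain ⟨h1, h2, h3⟩ := tri_unique hδ (by linarith : s + t + 0 = 1) hco
  exact ⟨h1 ▸ hs, h2 ▸ ht, h3.symm⟩

lemma mem_dopen_of_coords {A1 A2 B : Plane} (hδ : gfun A1 A2 B ≠ 0) {q : Plane}
    (h1 : 0 < w1c A1 A2 B q) (h2 : 0 < w2c A1 A2 B q) (h3 : wb A1 A2 B q = 0) :
    q ∈ Dopen A1 A2 := by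
  refine ⟨w1c A1 A2 B q, w2c A1 A2 B q, h1, h2, by rw [w1c, h3]; ring, ?_⟩
  have := tri_repr hδ q
  rw [h3, zero_smul, add_zero] at this
  exact this

lemma wb_pos_iff {A1 A2 B : Plane} (hδ : 0 < gfun A1 A2 B) (q : Plane) :
    (0 < wb A1 A2 B q ↔ 0 < gfun A1 A2 q) := by
  rw [wb]; exact div_pos_iff_of_pos_right hδ

lemma isOpen_IntQ {A1 A2 Bp Bm : Plane}
    (hp : 0 < gfun A1 A2 Bp) (hm : gfun A1 A2 Bm < 0) :
    IsOpen (IntQ A1 A2 Bp Bm) := by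
  rw [isOpen_iff_forall_mem_open]
  intro q hq
  rcases hq with (hq | hq) | hq
  · exact ⟨OpenTri A1 A2 Bp, fun y hy => Or.inl (Or.inl hy), isOpen_openTri, hq⟩
  · exact ⟨OpenTri A1 A2 Bm, fun y hy => Or.inl (Or.inr hy), isOpen_openTri, hq⟩
  · -- q on the open diagonal
    obtain ⟨hp1, hp2, hp3⟩ := dopen_coords (ne_of_gt hp) hq
    obtain ⟨hm1, hm2, hm3⟩ := dopen_coords (ne_of_lt hm) hq
    refine ⟨{y | 0 < w1c A1 A2 Bp y} ∩ {y | 0 < w2c A1 A2 Bp y}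
        ∩ ({y | 0 < w1c A1 A2 Bm y} ∩ {y | 0 < w2c A1 A2 Bm y}), ?_, ?_, ?_⟩
    · rintro y ⟨⟨hy1, hy2⟩, hy3, hy4⟩
      rcases lt_trichotomy (gfun A1 A2 y) 0 with hg | hg | hg
      · refine Or.inl (Or.inr ⟨hy3, hy4, ?_⟩)
        rw [wb]
        exact div_pos_of_neg_of_neg hg hm
      · refine Or.inr (mem_dopen_of_coords (ne_of_gt hp) hy1 hy2 ?_)
        rw [wb, hg, zero_div]
      · refine Or.inl (Or.inl ⟨hy1, hy2, ?_⟩)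
        rw [wb]
        exact div_pos hg hp
    · exact ((isOpen_lt continuous_const (continuous_w1c A1 A2 Bp)).inter
        (isOpen_lt continuous_const (continuous_w2c A1 A2 Bp))).inter
        ((isOpen_lt continuous_const (continuous_w1c A1 A2 Bm)).inter
        (isOpen_lt continuous_const (continuous_w2c A1 A2 Bm)))
    · exact ⟨⟨hp1, hp2⟩, hm1, hm2⟩


lemma mem_hull3 {u v w q : Plane} :
    q ∈ convexHull ℝ ({u, v, w} : Set Plane) ↔
      ∃ α β γ : ℝ, 0 ≤ α ∧ 0 ≤ β ∧ 0 ≤ γ ∧ α + β + γ = 1 ∧ q = α • u + β • v + γ • w := by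
  constructor
  · intro hq
    rw [convexHull_insert (by simp : ({v, w} : Set Plane).Nonempty)] at hq
    obtain ⟨z0, hz0, hqz⟩ := Set.mem_iUnion₂.mp hq
    rw [Set.mem_singleton_iff] at hz0
    subst hz0
    obtain ⟨z, hz, hqz2⟩ := Set.mem_iUnion₂.mp hqz
    rw [convexHull_pair] at hz
    obtain ⟨c, d, hc, hd, hcd, hzeq⟩ := hz
    obtain ⟨s, e, hs, he, hse, hqeq⟩ := hqz2
    refine ⟨s, e * c, e * d, hs, by positivity, by positivity, by nlinarith, ?_⟩
    rw [← hqeq, ← hzeq]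
    module
  · rintro ⟨α, β, γ, hα, hβ, hγ, hsum, rfl⟩
    by_cases h : β + γ = 0
    · have hβ0 : β = 0 := by linarith
      have hγ0 : γ = 0 := by linarith
      have hα1 : α = 1 := by linarith
      rw [hβ0, hγ0, hα1, one_smul, zero_smul, zero_smul, add_zero, add_zero]
      exact subset_convexHull ℝ _ (by simp)
    · have hpos : 0 < β + γ := lt_of_le_of_ne (by linarith) (Ne.symm h)
      set z := (β / (β + γ)) • v + (γ / (β + γ)) • w with hzdef
      have hzmem : z ∈ convexHull ℝ ({u, v, w} : Set Plane) := by
        have h1 : v ∈ convexHull ℝ ({u, v, w} : Set Plane) := subset_convexHull ℝ _ (by simp)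
        have h2 : w ∈ convexHull ℝ ({u, v, w} : Set Plane) := subset_convexHull ℝ _ (by simp)
        exact (convex_convexHull ℝ _) h1 h2 (by positivity) (by positivity) (by field_simp)
      have humem : u ∈ convexHull ℝ ({u, v, w} : Set Plane) := subset_convexHull ℝ _ (by simp)
      have key : α • u + β • v + γ • w = α • u + (β + γ) • z := by
        rw [hzdef, smul_add, smul_smul, smul_smul]
        rw [mul_div_cancel₀ _ h, mul_div_cancel₀ _ h, add_assoc]
      rw [key]
      exact (convex_convexHull ℝ _) humem hzmem hα hpos.le (by linarith)

lemma hull3_cases {A1 A2 B q : Plane} (hδ : gfun A1 A2 B ≠ 0)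
    (hq : q ∈ convexHull ℝ ({A1, A2, B} : Set Plane)) :
    q ∈ OpenTri A1 A2 B ∨ q ∈ Dopen A1 A2 ∨ q ∈ segment ℝ A1 B ∨ q ∈ segment ℝ A2 B := by
  obtain ⟨α, β, γ, hα, hβ, hγ, hsum, hqeq⟩ := mem_hull3.mp hq
  rcases eq_or_lt_of_le hγ with hγ0 | hγpos
  · rcases eq_or_lt_of_le hα with hα0 | hαpos
    · -- q = A2 : lies on segment A2 B
      right; right; right
      refine ⟨1, 0, by norm_num, le_refl 0, by norm_num, ?_⟩
      rw [hqeq, ← hα0, ← hγ0, show β = 1 by linarith]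
      module
    · rcases eq_or_lt_of_le hβ with hβ0 | hβpos
      · right; right; left
        refine ⟨1, 0, by norm_num, le_refl 0, by norm_num, ?_⟩
        rw [hqeq, ← hβ0, ← hγ0, show α = 1 by linarith]
        module
      · right; left
        exact ⟨α, β, hαpos, hβpos, by linarith, by
          rw [hqeq, ← hγ0, zero_smul, add_zero]⟩
  · rcases eq_or_lt_of_le hα with hα0 | hαpos
    · right; right; right
      refine ⟨β, γ, hβ, hγ, by linarith, ?_⟩
      rw [hqeq, ← hα0, zero_smul, zero_add]
    · rcases eq_or_lt_of_le hβ with hβ0 | hβpos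
      · right; right; left
        refine ⟨α, γ, hα, hγ, by linarith, ?_⟩
        rw [hqeq, ← hβ0, zero_smul, add_zero]
      · left
        obtain ⟨h1, h2, h3⟩ := tri_unique hδ hsum hqeq
        exact ⟨h1 ▸ hαpos, h2 ▸ hβpos, h3 ▸ hγpos⟩

lemma IntQ_subset_hulls {A1 A2 Bp Bm : Plane}
    (hp : gfun A1 A2 Bp ≠ 0) (hm : gfun A1 A2 Bm ≠ 0) :
    IntQ A1 A2 Bp Bm ⊆ convexHull ℝ ({A1, A2, Bp} : Set Plane)
      ∪ convexHull ℝ ({A1, A2, Bm} : Set Plane) := by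
  rintro q ((hq | hq) | hq)
  · obtain ⟨h1, h2, h3⟩ := hq
    refine Or.inl (mem_hull3.mpr ⟨_, _, _, h1.le, h2.le, h3.le, by rw [w1c]; ring, tri_repr hp q⟩)
  · obtain ⟨h1, h2, h3⟩ := hq
    refine Or.inr (mem_hull3.mpr ⟨_, _, _, h1.le, h2.le, h3.le, by rw [w1c]; ring, tri_repr hm q⟩)
  · obtain ⟨s, t, hs, ht, hst, rfl⟩ := hq
    refine Or.inl (mem_hull3.mpr ⟨s, t, 0, hs.le, ht.le, le_refl 0, by linarith, ?_⟩)
    rw [zero_smul, add_zero]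

lemma wsum (A1 A2 B q : Plane) : w1c A1 A2 B q + w2c A1 A2 B q + wb A1 A2 B q = 1 := by
  rw [w1c]; ring

lemma kfun_antisymm (A1 B1 B2 : Plane) : kfun A1 B2 B1 = -(kfun A1 B1 B2) := by
  simp [kfun, cross, PiLp.sub_apply]; ring

lemma trap {A1 A2 Bp Bm : Plane} {C : Set Plane} (hC : IsPreconnected C)
    (hgp : 0 < gfun A1 A2 Bp) (hgm : gfun A1 A2 Bm < 0)
    (hd1 : ∀ z ∈ C, z ∉ segment ℝ A1 Bp) (hd2 : ∀ z ∈ C, z ∉ segment ℝ A2 Bp)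
    (hd3 : ∀ z ∈ C, z ∉ segment ℝ A1 Bm) (hd4 : ∀ z ∈ C, z ∉ segment ℝ A2 Bm)
    {x : Plane} (hxC : x ∈ C) (hxD : x ∈ Dopen A1 A2) :
    C ⊆ IntQ A1 A2 Bp Bm := by
  have hop := isOpen_IntQ hgp hgm
  set Q := convexHull ℝ ({A1, A2, Bp} : Set Plane)
      ∪ convexHull ℝ ({A1, A2, Bm} : Set Plane) with hQ
  have hQclosed : IsClosed Q := by
    apply IsClosed.union <;>
      exact ((((Set.finite_singleton _).insert _).insert _).isCompact_convexHull ℝ).isClosed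
  have hsub : C ⊆ IntQ A1 A2 Bp Bm ∪ Qᶜ := by
    intro z hz
    by_cases hzQ : z ∈ Q
    · left
      rcases hzQ with h | h
      · rcases hull3_cases (ne_of_gt hgp) h with h' | h' | h' | h'
        · exact Or.inl (Or.inl h')
        · exact Or.inr h'
        · exact absurd h' (hd1 z hz)
        · exact absurd h' (hd2 z hz)
      · rcases hull3_cases (ne_of_lt hgm) h with h' | h' | h' | h'
        · exact Or.inl (Or.inr h')
        · exact Or.inr h'
        · exact absurd h' (hd3 z hz)
        · exact absurd h' (hd4 z hz)
    · exact Or.inr hzQ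
  have hdisj : Disjoint (IntQ A1 A2 Bp Bm) Qᶜ := by
    rw [Set.disjoint_left]
    intro z hzI hzQc
    exact hzQc (IntQ_subset_hulls (ne_of_gt hgp) (ne_of_lt hgm) hzI)
  exact IsPreconnected.subset_left_of_subset_union hop hQclosed.isOpen_compl hdisj hsub
    ⟨x, hxC, Or.inr hxD⟩ hC

lemma seg_strict {u v x : Plane} (hx : x ∈ segment ℝ u v) (h1 : x ≠ u) (h2 : x ≠ v) :
    ∃ s t : ℝ, 0 < s ∧ 0 < t ∧ s + t = 1 ∧ x = s • u + t • v := by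
  obtain ⟨s, t, hs, ht, hst, hxe⟩ := hx
  rcases eq_or_lt_of_le hs with hs0 | hs0
  · exfalso
    apply h2
    rw [← hxe, ← hs0, zero_smul, zero_add, show t = 1 by linarith, one_smul]
  · rcases eq_or_lt_of_le ht with ht0 | ht0
    · exfalso
      apply h1
      rw [← hxe, ← ht0, zero_smul, add_zero, show s = 1 by linarith, one_smul]
    · exact ⟨s, t, hs0, ht0, hst, hxe.symm⟩

lemma quad_case {A1 A2 B1 B2 B3 : Plane} {C : Set Plane} (hC : IsPreconnected C)
    (hg1 : 0 < gfun A1 A2 B1) (hg2 : 0 < gfun A1 A2 B2) (hg3 : gfun A1 A2 B3 < 0)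
    (hd11 : ∀ z ∈ C, z ∉ segment ℝ A1 B1) (hd21 : ∀ z ∈ C, z ∉ segment ℝ A2 B1)
    (hd12 : ∀ z ∈ C, z ∉ segment ℝ A1 B2) (hd22 : ∀ z ∈ C, z ∉ segment ℝ A2 B2)
    (hd13 : ∀ z ∈ C, z ∉ segment ℝ A1 B3) (hd23 : ∀ z ∈ C, z ∉ segment ℝ A2 B3)
    {x p : Plane} (hxC : x ∈ C) (hxseg : x ∈ segment ℝ A1 A2) (hxA1 : x ≠ A1) (hxA2 : x ≠ A2)
    (hpC : p ∈ C) (hpseg : p ∈ segment ℝ B1 B2) (hpB1 : p ≠ B1) (hpB2 : p ≠ B2) : False := by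
  obtain ⟨sx, tx, hsx, htx, hstx, hxeq⟩ := seg_strict hxseg hxA1 hxA2
  have hxD : x ∈ Dopen A1 A2 := ⟨sx, tx, hsx, htx, hstx, hxeq⟩
  have htrap1 := trap hC hg1 hg3 hd11 hd21 hd13 hd23 hxC hxD
  have htrap2 := trap hC hg2 hg3 hd12 hd22 hd13 hd23 hxC hxD
  obtain ⟨s, t, hs, ht, hst, hpeq⟩ := seg_strict hpseg hpB1 hpB2
  have hgp_eq : gfun A1 A2 p = s * gfun A1 A2 B1 + t * gfun A1 A2 B2 := by
    rw [hpeq]; exact cross_aff2 _ _ _ _ hst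
  have hgp : 0 < gfun A1 A2 p := by
    rw [hgp_eq]
    have := mul_pos hs hg1
    have := mul_pos ht hg2
    linarith
  have hgether : ∀ Bp : Plane, 0 < gfun A1 A2 Bp → C ⊆ IntQ A1 A2 Bp B3 →
      p ∈ OpenTri A1 A2 Bp := by
    intro Bp hgBp htrap
    rcases htrap hpC with (h | h) | h
    · exact h
    · exfalso
      obtain ⟨_, _, h3⟩ := h
      rw [wb] at h3
      rcases div_pos_iff.mp h3 with ⟨_, h'⟩ | ⟨h', _⟩
      · linarith
      · linarith
    · exfalso
      obtain ⟨s', t', _, _, hst', hpe'⟩ := h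
      have : gfun A1 A2 p = s' * gfun A1 A2 A1 + t' * gfun A1 A2 A2 := by
        rw [hpe']; exact cross_aff2 _ _ _ _ hst'
      rw [gfun_A1, gfun_A2] at this
      have : gfun A1 A2 p = 0 := by linarith
      linarith
  have hp1 : p ∈ OpenTri A1 A2 B1 := hgether B1 hg1 htrap1
  have hp2 : p ∈ OpenTri A1 A2 B2 := hgether B2 hg2 htrap2
  -- evaluate the edge functionals in two ways
  have e1 : p = w1c A1 A2 B1 p • A1 + w2c A1 A2 B1 p • A2 + wb A1 A2 B1 p • B1 :=
    tri_repr (ne_of_gt hg1) p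
  have e2 : p = w1c A1 A2 B2 p • A1 + w2c A1 A2 B2 p • A2 + wb A1 A2 B2 p • B2 :=
    tri_repr (ne_of_gt hg2) p
  have k1a : kfun A1 B1 p = w2c A1 A2 B1 p * kfun A1 B1 A2 := by
    conv_lhs => rw [e1]
    rw [show kfun A1 B1 (w1c A1 A2 B1 p • A1 + w2c A1 A2 B1 p • A2 + wb A1 A2 B1 p • B1)
        = w1c A1 A2 B1 p * kfun A1 B1 A1 + w2c A1 A2 B1 p * kfun A1 B1 A2
          + wb A1 A2 B1 p * kfun A1 B1 B1 from cross_aff3 _ _ _ _ _ (wsum A1 A2 B1 p)]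
    rw [kfun_A1, kfun_B]; ring
  have k1b : kfun A1 B1 p = t * kfun A1 B1 B2 := by
    conv_lhs => rw [hpeq]
    rw [show kfun A1 B1 (s • B1 + t • B2) = s * kfun A1 B1 B1 + t * kfun A1 B1 B2 from
      cross_aff2 _ _ _ _ hst]
    rw [kfun_B]; ring
  have k2a : kfun A1 B2 p = w2c A1 A2 B2 p * kfun A1 B2 A2 := by
    conv_lhs => rw [e2]
    rw [show kfun A1 B2 (w1c A1 A2 B2 p • A1 + w2c A1 A2 B2 p • A2 + wb A1 A2 B2 p • B2)
        = w1c A1 A2 B2 p * kfun A1 B2 A1 + w2c A1 A2 B2 p * kfun A1 B2 A2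
          + wb A1 A2 B2 p * kfun A1 B2 B2 from cross_aff3 _ _ _ _ _ (wsum A1 A2 B2 p)]
    rw [kfun_A1, kfun_B]; ring
  have k2b : kfun A1 B2 p = s * kfun A1 B2 B1 := by
    conv_lhs => rw [hpeq]
    rw [show kfun A1 B2 (s • B1 + t • B2) = s * kfun A1 B2 B1 + t * kfun A1 B2 B2 from
      cross_aff2 _ _ _ _ hst]
    rw [kfun_B]; ring
  have hKA2_1 : kfun A1 B1 A2 = - gfun A1 A2 B1 := kfun_A2 A1 A2 B1
  have hKA2_2 : kfun A1 B2 A2 = - gfun A1 A2 B2 := kfun_A2 A1 A2 B2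
  have hanti : kfun A1 B2 B1 = -(kfun A1 B1 B2) := kfun_antisymm A1 B1 B2
  obtain ⟨_, hβ1, _⟩ := hp1
  obtain ⟨_, hβ2, _⟩ := hp2
  -- K := kfun A1 B1 B2 must be both negative and positive
  have hKneg : kfun A1 B1 B2 < 0 := by
    have h1 : t * kfun A1 B1 B2 = w2c A1 A2 B1 p * (- gfun A1 A2 B1) := by
      rw [← hKA2_1, ← k1a, k1b]
    nlinarith [mul_pos hβ1 hg1]
  have hKpos : 0 < kfun A1 B1 B2 := by
    have h2 : s * (-(kfun A1 B1 B2)) = w2c A1 A2 B2 p * (- gfun A1 A2 B2) := by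
      rw [← hanti, ← hKA2_2, ← k2a, k2b]
    nlinarith [mul_pos hβ2 hg2]
  linarith

lemma convex_neg_half (A1 A2 : Plane) : Convex ℝ {q : Plane | gfun A1 A2 q < 0} := by
  intro q1 h1 q2 h2 a b ha hb hab
  simp only [Set.mem_setOf_eq] at h1 h2 ⊢
  have he : gfun A1 A2 (a • q1 + b • q2) = a * gfun A1 A2 q1 + b * gfun A1 A2 q2 :=
    cross_aff2 _ _ _ _ hab
  rw [he]
  rcases eq_or_lt_of_le ha with h | h
  · rw [← h, show b = 1 by linarith]; linarith
  · nlinarith [mul_lt_mul_of_pos_left h1 h, mul_le_mul_of_nonneg_left h2.le hb]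

lemma half_case {V : Type} {G : SimpleGraph V} {f : V → Plane} {C : Set Plane} {A1 A2 : Plane}
    (hCopen : IsOpen C) (hdisjU : Disjoint C (outsideRegion G f))
    (hvert : ∀ q ∈ edgeUnion G f, 0 ≤ gfun A1 A2 q)
    (hA : A1 ≠ A2) {x : Plane} (hxC : x ∈ C) (hx : gfun A1 A2 x = 0) : False := by
  have hune : ¬((A2 - A1) 0 = 0 ∧ (A2 - A1) 1 = 0) := by
    rintro ⟨h0, h1⟩
    apply hA
    have hzero : A2 - A1 = 0 := by
      ext i; fin_cases i <;> simp only [PiLp.zero_apply, Fin.mk_zero, Fin.mk_one] <;>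
        assumption
    exact (sub_eq_zero.mp hzero).symm
  have hcuv : 0 < (A2 - A1) 0 ^ 2 + (A2 - A1) 1 ^ 2 := by
    rcases not_and_or.mp hune with h | h
    · have h' := lt_of_le_of_ne (sq_nonneg ((A2 - A1) 0)) (Ne.symm (pow_ne_zero 2 h))
      nlinarith [sq_nonneg ((A2 - A1) 1)]
    · have h' := lt_of_le_of_ne (sq_nonneg ((A2 - A1) 1)) (Ne.symm (pow_ne_zero 2 h))
      nlinarith [sq_nonneg ((A2 - A1) 0)]
  set v : Plane := pt ((A2 - A1) 1) (-((A2 - A1) 0)) with hv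
  have hcross : cross (A2 - A1) v = -((A2 - A1) 0 ^ 2 + (A2 - A1) 1 ^ 2) := by
    simp only [cross, hv, pt_zero, pt_one]; ring
  have hvne : v ≠ 0 := by
    intro h
    apply hune
    constructor
    · have h0 := congrArg (fun q : Plane => q 1) h
      simp only [hv, pt_one, PiLp.zero_apply, neg_eq_zero] at h0
      exact h0
    · have h0 := congrArg (fun q : Plane => q 0) h
      simp only [hv, pt_zero, PiLp.zero_apply] at h0
      exact h0
  have hvnorm : 0 < ‖v‖ := norm_pos_iff.mpr hvne
  obtain ⟨ε, hε, hball⟩ := Metric.isOpen_iff.mp hCopen x hxC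
  have hcpos : 0 < ε / (2 * ‖v‖) := by positivity
  have hglin : ∀ (z w : Plane) (d : ℝ),
      gfun A1 A2 (z + d • w) = gfun A1 A2 z + d * cross (A2 - A1) w := by
    intro z w d
    simp only [gfun, cross, PiLp.add_apply, PiLp.sub_apply, PiLp.smul_apply, smul_eq_mul]
    ring
  set y := x + (ε / (2 * ‖v‖)) • v with hy
  have hyC : y ∈ C := by
    apply hball
    rw [Metric.mem_ball, dist_eq_norm]
    have h1 : y - x = (ε / (2 * ‖v‖)) • v := by rw [hy]; abel
    rw [h1, norm_smul, Real.norm_eq_abs, abs_of_pos hcpos]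
    have h2 : ε / (2 * ‖v‖) * ‖v‖ = ε / 2 := by field_simp
    rw [h2]; linarith
  have hgy : gfun A1 A2 y < 0 := by
    rw [hy, hglin, hx, hcross]
    nlinarith [mul_pos hcpos hcuv]
  have hHsub : {q : Plane | gfun A1 A2 q < 0} ⊆ (edgeUnion G f)ᶜ :=
    fun q hq hmem => absurd (hvert q hmem) (not_le.mpr hq)
  have hHconn : IsPreconnected {q : Plane | gfun A1 A2 q < 0} :=
    (convex_neg_half A1 A2).isPreconnected
  have hHunb : ¬ IsBounded {q : Plane | gfun A1 A2 q < 0} := by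
    intro hb
    rw [isBounded_iff_forall_norm_le] at hb
    obtain ⟨M, hM⟩ := hb
    have hnpos : 0 < (|M| + ‖y‖ + 1) / ‖v‖ := by positivity
    have hmem : y + ((|M| + ‖y‖ + 1) / ‖v‖) • v ∈ {q : Plane | gfun A1 A2 q < 0} := by
      simp only [Set.mem_setOf_eq]
      rw [hglin, hcross]
      nlinarith [mul_pos hnpos hcuv]
    have h1 := hM _ hmem
    have h2 : ‖((|M| + ‖y‖ + 1) / ‖v‖) • v‖ ≤ ‖y + ((|M| + ‖y‖ + 1) / ‖v‖) • v‖ + ‖y‖ := by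
      have h2' := norm_sub_le (y + ((|M| + ‖y‖ + 1) / ‖v‖) • v) y
      have h3 : y + ((|M| + ‖y‖ + 1) / ‖v‖) • v - y = ((|M| + ‖y‖ + 1) / ‖v‖) • v := by abel
      rw [h3] at h2'
      exact h2'

    rw [norm_smul, Real.norm_eq_abs, abs_of_pos hnpos,
      div_mul_cancel₀ _ (ne_of_gt hvnorm)] at h2
    have h4 := abs_nonneg M
    have h5 := le_abs_self M
    linarith
  exact Set.disjoint_left.mp hdisjU hyC (mem_outsideRegion_of hHconn hgy hHsub hHunb)

theorem no_inside :
    ¬ ∃ (f : Fin 2 ⊕ Fin 3 → Plane) (C : Set Plane), IsInsideObstacleRep K f C := by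
  rintro ⟨f, C, ⟨⟨hinj, hgen, hCopen, hCconn, hCrange, hiff⟩, hdisjU⟩⟩
  have hCne : ∀ z ∈ C, ∀ v, z ≠ f v := fun z hz v h =>
    Set.disjoint_left.mp hCrange hz ⟨v, h.symm⟩
  -- nondegeneracy facts
  have hcrossB : ∀ j : Fin 3, gfun (f (Sum.inl 0)) (f (Sum.inl 1)) (f (Sum.inr j)) ≠ 0 := by
    intro j h
    refine hgen _ ⟨Sum.inl 0, rfl⟩ _ ⟨Sum.inl 1, rfl⟩ _ ⟨Sum.inr j, rfl⟩
      (fun he => by simpa using hinj he) (fun he => by simpa using hinj he)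
      (fun he => by simpa using hinj he) (collinear_of_cross h)
  -- C avoids all edges
  have hedge : ∀ (i : Fin 2) (j : Fin 3), ∀ z ∈ C,
      z ∉ segment ℝ (f (Sum.inl i)) (f (Sum.inr j)) := by
    intro i j z hz hm
    exact Set.disjoint_right.mp ((hiff (Sum.inl i) (Sum.inr j) (by simp)).mp (adj_lr i j)) hz hm
  -- point of C on the segment A1 A2
  have hnd : ¬ Disjoint (segment ℝ (f (Sum.inl 0)) (f (Sum.inl 1))) C := by
    intro hd
    have h := (hiff (Sum.inl 0) (Sum.inl 1) (by simp)).mpr hd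
    simpa [completeBipartiteGraph] using h
  obtain ⟨x, hxseg, hxC⟩ := Set.not_disjoint_iff.mp hnd
  have hx0 : gfun (f (Sum.inl 0)) (f (Sum.inl 1)) x = 0 := by
    obtain ⟨a, b, ha, hb, hab, hxe⟩ := hxseg
    have h := cross_aff2 (f (Sum.inl 1) - f (Sum.inl 0)) (f (Sum.inl 0))
      (f (Sum.inl 0)) (f (Sum.inl 1)) hab
    have h2 : gfun (f (Sum.inl 0)) (f (Sum.inl 1)) x
        = a * gfun (f (Sum.inl 0)) (f (Sum.inl 1)) (f (Sum.inl 0))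
          + b * gfun (f (Sum.inl 0)) (f (Sum.inl 1)) (f (Sum.inl 1)) := by
      rw [← hxe]; exact h
    rw [gfun_A1, gfun_A2] at h2; linarith
  -- points of C on the segments between the B's
  have hbpair : ∀ i j : Fin 3, i ≠ j →
      ∃ p, p ∈ C ∧ p ∈ segment ℝ (f (Sum.inr i)) (f (Sum.inr j)) := by
    intro i j hij
    have hnd2 : ¬ Disjoint (segment ℝ (f (Sum.inr i)) (f (Sum.inr j))) C := by
      intro hd
      have h := (hiff (Sum.inr i) (Sum.inr j) (by simpa using hij)).mpr hd
      simpa [completeBipartiteGraph] using h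
    obtain ⟨p, h1, h2⟩ := Set.not_disjoint_iff.mp hnd2
    exact ⟨p, h2, h1⟩
  -- the two ways to derive a contradiction
  have hQnorm : ∀ (i j k : Fin 3), i ≠ j →
      0 < gfun (f (Sum.inl 0)) (f (Sum.inl 1)) (f (Sum.inr i)) →
      0 < gfun (f (Sum.inl 0)) (f (Sum.inl 1)) (f (Sum.inr j)) →
      gfun (f (Sum.inl 0)) (f (Sum.inl 1)) (f (Sum.inr k)) < 0 → False := by
    intro i j k hij hgi hgj hgk
    obtain ⟨p, hpC, hpseg⟩ := hbpair i j hij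
    exact quad_case hCconn.isPreconnected hgi hgj hgk
      (hedge 0 i) (hedge 1 i) (hedge 0 j) (hedge 1 j) (hedge 0 k) (hedge 1 k)
      hxC hxseg (hCne x hxC _) (hCne x hxC _) hpC hpseg (hCne p hpC _) (hCne p hpC _)
  have hQswap : ∀ (i j k : Fin 3), i ≠ j →
      gfun (f (Sum.inl 0)) (f (Sum.inl 1)) (f (Sum.inr i)) < 0 →
      gfun (f (Sum.inl 0)) (f (Sum.inl 1)) (f (Sum.inr j)) < 0 →
      0 < gfun (f (Sum.inl 0)) (f (Sum.inl 1)) (f (Sum.inr k)) → False := by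
    intro i j k hij hgi hgj hgk
    obtain ⟨p, hpC, hpseg⟩ := hbpair i j hij
    have hxseg' : x ∈ segment ℝ (f (Sum.inl 1)) (f (Sum.inl 0)) := by
      rw [segment_symm]; exact hxseg
    refine quad_case hCconn.isPreconnected (B1 := f (Sum.inr i)) (B2 := f (Sum.inr j))
      (B3 := f (Sum.inr k)) ?_ ?_ ?_
      (hedge 1 i) (hedge 0 i) (hedge 1 j) (hedge 0 j) (hedge 1 k) (hedge 0 k)
      hxC hxseg' (hCne x hxC _) (hCne x hxC _) hpC hpseg (hCne p hpC _) (hCne p hpC _)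
    · rw [gfun_swap]; linarith
    · rw [gfun_swap]; linarith
    · rw [gfun_swap]; linarith
  have hHnorm : (∀ j : Fin 3, 0 < gfun (f (Sum.inl 0)) (f (Sum.inl 1)) (f (Sum.inr j))) →
      False := by
    intro hall
    apply half_case (G := K) (f := f) hCopen hdisjU ?_
      (fun h => by simpa using hinj h) hxC hx0
    intro q hq
    simp only [edgeUnion, Set.mem_iUnion] at hq
    obtain ⟨u', v', _, hseg⟩ := hq
    obtain ⟨a, b, ha, hb, hab, hqe⟩ := hseg
    have hvx : ∀ v : Fin 2 ⊕ Fin 3, 0 ≤ gfun (f (Sum.inl 0)) (f (Sum.inl 1)) (f v) := by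
      rintro (i | i) <;> fin_cases i
      · show (0:ℝ) ≤ gfun (f (Sum.inl 0)) (f (Sum.inl 1)) (f (Sum.inl 0))
        rw [gfun_A1]
      · show (0:ℝ) ≤ gfun (f (Sum.inl 0)) (f (Sum.inl 1)) (f (Sum.inl 1))
        rw [gfun_A2]
      · exact (hall 0).le
      · exact (hall 1).le
      · exact (hall 2).le
    have h2 : gfun (f (Sum.inl 0)) (f (Sum.inl 1)) q
        = a * gfun (f (Sum.inl 0)) (f (Sum.inl 1)) (f u')
          + b * gfun (f (Sum.inl 0)) (f (Sum.inl 1)) (f v') := by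
      rw [← hqe]; exact cross_aff2 _ _ _ _ hab
    rw [h2]
    nlinarith [mul_nonneg ha (hvx u'), mul_nonneg hb (hvx v')]
  have hHswap : (∀ j : Fin 3, gfun (f (Sum.inl 0)) (f (Sum.inl 1)) (f (Sum.inr j)) < 0) →
      False := by
    intro hall
    apply half_case (G := K) (f := f) (A1 := f (Sum.inl 1)) (A2 := f (Sum.inl 0))
      hCopen hdisjU ?_ (fun h => by simpa using hinj h) hxC (by rw [gfun_swap, hx0, neg_zero])
    intro q hq
    simp only [edgeUnion, Set.mem_iUnion] at hq
    obtain ⟨u', v', _, hseg⟩ := hq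
    obtain ⟨a, b, ha, hb, hab, hqe⟩ := hseg
    have hvx : ∀ v : Fin 2 ⊕ Fin 3, 0 ≤ gfun (f (Sum.inl 1)) (f (Sum.inl 0)) (f v) := by
      rintro (i | i) <;> fin_cases i
      · show (0:ℝ) ≤ gfun (f (Sum.inl 1)) (f (Sum.inl 0)) (f (Sum.inl 0))
        rw [gfun_A2]
      · show (0:ℝ) ≤ gfun (f (Sum.inl 1)) (f (Sum.inl 0)) (f (Sum.inl 1))
        rw [gfun_A1]
      · show (0:ℝ) ≤ gfun (f (Sum.inl 1)) (f (Sum.inl 0)) (f (Sum.inr 0))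
        rw [gfun_swap]; linarith [hall 0]
      · show (0:ℝ) ≤ gfun (f (Sum.inl 1)) (f (Sum.inl 0)) (f (Sum.inr 1))
        rw [gfun_swap]; linarith [hall 1]
      · show (0:ℝ) ≤ gfun (f (Sum.inl 1)) (f (Sum.inl 0)) (f (Sum.inr 2))
        rw [gfun_swap]; linarith [hall 2]
    have h2 : gfun (f (Sum.inl 1)) (f (Sum.inl 0)) q
        = a * gfun (f (Sum.inl 1)) (f (Sum.inl 0)) (f u')
          + b * gfun (f (Sum.inl 1)) (f (Sum.inl 0)) (f v') := by
      rw [← hqe]; exact cross_aff2 _ _ _ _ hab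
    rw [h2]
    nlinarith [mul_nonneg ha (hvx u'), mul_nonneg hb (hvx v')]
  -- case analysis on the signs
  rcases (hcrossB 0).lt_or_gt with h0 | h0 <;>
    rcases (hcrossB 1).lt_or_gt with h1 | h1 <;>
    rcases (hcrossB 2).lt_or_gt with h2 | h2
  · exact hHswap (by intro j; fin_cases j <;> assumption)
  · exact hQswap 0 1 2 (by simp) h0 h1 h2
  · exact hQswap 0 2 1 (by simp) h0 h2 h1
  · exact hQnorm 1 2 0 (by simp) h1 h2 h0
  · exact hQswap 1 2 0 (by simp) h1 h2 h0
  · exact hQnorm 0 2 1 (by simp) h0 h2 h1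
  · exact hQnorm 0 1 2 (by simp) h0 h1 h2
  · exact hHnorm (by intro j; fin_cases j <;> assumption)

end K23

/-- `K_{2,3}` has an outside-obstacle representation but no
inside-obstacle representation. -/
theorem K23_outside_not_inside :
    (∃ (f : Fin 2 ⊕ Fin 3 → Plane) (C : Set Plane),
      IsOutsideObstacleRep (completeBipartiteGraph (Fin 2) (Fin 3)) f C) ∧
    ¬ ∃ (f : Fin 2 ⊕ Fin 3 → Plane) (C : Set Plane),
      IsInsideObstacleRep (completeBipartiteGraph (Fin 2) (Fin 3)) f C := by
  constructor
  · exact ⟨K23.fK, outsideRegion (completeBipartiteGraph (Fin 2) (Fin 3)) K23.fK, K23.pos_rep⟩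
  · exact K23.no_inside

end
end

section
/- If finite simple graphs G and H (on disjoint vertex sets) each have an outside-obstacle representation, then their disjoint union G ⊔ H has an outside-obstacle representation. -/
noncomputable section

/-- The disjoint union of two simple graphs. -/
def sumGraph {V W : Type} (G : SimpleGraph V) (H : SimpleGraph W) : SimpleGraph (V ⊕ W) where
  Adj x y :=
    match x, y with
    | Sum.inl a, Sum.inl b => G.Adj a b
    | Sum.inr a, Sum.inr b => H.Adj a b
    | _, _ => False
  symm := by
    constructor
    rintro (a | a) (b | b) h
    · exact h.symm
    · exact h.elim
    · exact h.elim
    · exact h.symm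
  loopless := by
    constructor
    rintro (a | a) h
    · exact G.irrefl h
    · exact H.irrefl h

open Set Metric MeasureTheory Bornology

namespace Obst

lemma rank_plane : 1 < Module.rank ℝ Plane := by
  have h : Module.rank ℝ Plane = (2 : ℕ) := by
    rw [← Module.finrank_eq_rank ℝ Plane, finrank_euclideanSpace_fin]
  rw [h]; norm_num

lemma abs_coord_le (x : Plane) (i : Fin 2) : |x i| ≤ ‖x‖ := by
  have h := EuclideanSpace.norm_eq x
  rw [h]
  have h1 : |x i| = Real.sqrt (‖x i‖ ^ 2) := by
    rw [Real.sqrt_sq_eq_abs]; simp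
  rw [h1]
  apply Real.sqrt_le_sqrt
  exact Finset.single_le_sum (f := fun j => ‖x j‖ ^ 2) (fun j _ => by positivity) (Finset.mem_univ i)

lemma continuous_coord (i : Fin 2) : Continuous fun x : Plane => x i :=
  (continuous_apply i).comp (PiLp.continuous_ofLp 2 (fun _ : Fin 2 => ℝ))

/-- e₁ direction -/
def e1 : Plane := EuclideanSpace.single (0 : Fin 2) (1 : ℝ)

lemma norm_e1 : ‖e1‖ = 1 := by simp [e1, EuclideanSpace.norm_single]

lemma e1_apply0 : e1 0 = 1 := by simp [e1, EuclideanSpace.single_apply]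

lemma smul_apply0 (a : ℝ) (x : Plane) : (a • x) 0 = a * x 0 := rfl

lemma add_apply0 (x y : Plane) : (x + y) 0 = x 0 + y 0 := rfl

lemma mem_line_iff (a b x : Plane) : x ∈ line[ℝ, a, b] ↔ ∃ r : ℝ, r • (a - b) = x - a := by
  rw [← AffineSubspace.vsub_right_mem_direction_iff_mem (left_mem_affineSpan_pair ℝ a b),
    direction_affineSpan, mem_vectorSpan_pair]
  simp [vsub_eq_sub]

lemma mem_line_translate (a b x t : Plane) :
    x + t ∈ line[ℝ, a + t, b + t] ↔ x ∈ line[ℝ, a, b] := by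
  rw [mem_line_iff, mem_line_iff]
  constructor <;> rintro ⟨r, hr⟩ <;> exact ⟨r, by abel_nf at hr ⊢; linear_combination (norm := module) hr⟩

lemma span_pair_null (p q : Plane) :
    volume ((affineSpan ℝ ({p, q} : Set Plane) : Set Plane)) = 0 := by
  apply Measure.addHaar_affineSubspace
  intro h
  have hd := congrArg AffineSubspace.direction h
  rw [direction_affineSpan, AffineSubspace.direction_top, vectorSpan_pair] at hd
  have h1 : Module.rank ℝ (Submodule.span ℝ ({p -ᵥ q} : Set Plane)) ≤ 1 := by
    simpa using rank_span_le (R := ℝ) ({p -ᵥ q} : Set Plane)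
  rw [hd] at h1
  rw [rank_top] at h1
  exact absurd (lt_of_lt_of_le rank_plane h1) (lt_irrefl _)

lemma collinear_translate {s : Set Plane} (t : Plane)
    (h : Collinear ℝ ((fun x => x + t) '' s)) : Collinear ℝ s := by
  rcases s.eq_empty_or_nonempty with rfl | ⟨p₀, hp₀⟩
  · exact collinear_empty ℝ _
  rw [collinear_iff_of_mem (Set.mem_image_of_mem _ hp₀)] at h
  obtain ⟨v, hv⟩ := h
  rw [collinear_iff_of_mem hp₀]
  refine ⟨v, fun p hp => ?_⟩
  obtain ⟨r, hr⟩ := hv (p + t) (Set.mem_image_of_mem _ hp)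
  refine ⟨r, ?_⟩
  have : p + t = r • v + (p₀ + t) := by simpa [vadd_eq_add] using hr
  have h3 : p + t = (r • v + p₀) + t := by rw [this]; abel
  have h2 : p = r • v + p₀ := add_right_cancel h3
  simpa [vadd_eq_add] using h2



lemma joinedIn_outside {R : ℝ} {x y : Plane} (hx : R < ‖x‖) (hy : R < ‖y‖) :
    JoinedIn {p : Plane | R < ‖p‖} x y := by
  rcases lt_or_ge R 0 with hR | hR
  · have huniv : {p : Plane | R < ‖p‖} = Set.univ := by
      ext p; simp only [mem_setOf_eq, mem_univ, iff_true]
      exact lt_of_lt_of_le hR (norm_nonneg p)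
    rw [huniv, joinedIn_univ]
    exact PathConnectedSpace.joined x y
  · set ρ : ℝ := max ‖x‖ ‖y‖ with hρ
    have hρR : R < ρ := lt_of_lt_of_le hx (le_max_left _ _)
    have hρ0 : 0 < ρ := lt_of_le_of_lt hR hρR
    have key : ∀ z : Plane, R < ‖z‖ → ‖z‖ ≤ ρ →
        JoinedIn {p : Plane | R < ‖p‖} z ((ρ / ‖z‖) • z) := by
      intro z hz hzρ
      have hz0 : 0 < ‖z‖ := lt_of_le_of_lt hR hz
      apply JoinedIn.of_segment_subset
      intro w hw
      rw [segment_eq_image'] at hw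
      obtain ⟨θ, hθ, rfl⟩ := hw
      have hform : z + θ • ((ρ / ‖z‖) • z - z) = (1 + θ * (ρ / ‖z‖ - 1)) • z := by
        module
      have hk : (1 : ℝ) ≤ ρ / ‖z‖ := (one_le_div hz0).mpr hzρ
      have hc : (1 : ℝ) ≤ 1 + θ * (ρ / ‖z‖ - 1) := by nlinarith [hθ.1, hθ.2]
      simp only [Set.mem_setOf_eq]
      rw [hform, norm_smul, Real.norm_eq_abs, abs_of_pos (by linarith)]
      nlinarith
    have hx' : JoinedIn {p : Plane | R < ‖p‖} x ((ρ / ‖x‖) • x) :=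
      key x hx (le_max_left _ _)
    have hy' : JoinedIn {p : Plane | R < ‖p‖} y ((ρ / ‖y‖) • y) :=
      key y hy (le_max_right _ _)
    have hsph : IsPathConnected (sphere (0 : Plane) ρ) :=
      isPathConnected_sphere rank_plane 0 hρ0.le
    have hsub : sphere (0 : Plane) ρ ⊆ {p : Plane | R < ‖p‖} := by
      intro p hp
      rw [mem_sphere_iff_norm, sub_zero] at hp
      simpa [hp] using hρR
    have hms : ∀ z : Plane, R < ‖z‖ → (ρ / ‖z‖) • z ∈ sphere (0 : Plane) ρ := by
      intro z hz
      have hz0 : 0 < ‖z‖ := lt_of_le_of_lt hR hz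
      rw [mem_sphere_iff_norm, sub_zero, norm_smul, Real.norm_eq_abs,
        abs_of_pos (by positivity), div_mul_cancel₀ _ hz0.ne']
    have hmid : JoinedIn {p : Plane | R < ‖p‖} ((ρ / ‖x‖) • x) ((ρ / ‖y‖) • y) :=
      (hsph.joinedIn _ (hms x hx) _ (hms y hy)).mono hsub
    exact (hx'.trans hmid).trans hy'.symm

lemma isPreconnected_thickening {K : Set Plane} (hK : IsPreconnected K)
    (hne : K.Nonempty) {δ : ℝ} (hδ : 0 < δ) :
    IsPreconnected (Metric.thickening δ K) := by
  obtain ⟨k₀, hk₀⟩ := hne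
  have heq : Metric.thickening δ K = ⋃₀ ((fun k => K ∪ ball k δ) '' K) := by
    apply Subset.antisymm
    · intro p hp
      rw [Metric.mem_thickening_iff] at hp
      obtain ⟨k, hk, hdk⟩ := hp
      exact ⟨K ∪ ball k δ, ⟨k, hk, rfl⟩, Or.inr (Metric.mem_ball.mpr hdk)⟩
    · rintro p ⟨S, ⟨k, hk, rfl⟩, hp⟩
      rcases hp with hp | hp
      · exact Metric.self_subset_thickening hδ _ hp
      · rw [Metric.mem_thickening_iff]
        exact ⟨k, hk, Metric.mem_ball.mp hp⟩
  rw [heq]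
  apply isPreconnected_sUnion k₀
  · rintro S ⟨k, hk, rfl⟩; exact Or.inl hk₀
  · rintro S ⟨k, hk, rfl⟩
    exact IsPreconnected.union k hk (mem_ball_self hδ) hK (convex_ball k δ).isPreconnected

lemma mem_span_of_mem_segment {x z f : Plane} (h : f ∈ segment ℝ x z) (hfx : f ≠ x) :
    z ∈ (line[ℝ, x, f] : Set Plane) := by
  obtain ⟨a, b, ha, hb, hab, H⟩ := h
  have hb0 : b ≠ 0 := by
    rintro rfl
    apply hfx
    rw [← H]
    have : a = 1 := by linarith
    simp [this]
  have hfz : f - x = b • (z - x) := by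
    have ha' : a = 1 - b := by linarith
    rw [← H, ha']
    module
  have hz : z = x + b⁻¹ • (f - x) := by
    rw [hfz, smul_smul, inv_mul_cancel₀ hb0, one_smul]; abel
  have : z = AffineMap.lineMap x f (b⁻¹ : ℝ) := by
    rw [AffineMap.lineMap_apply]
    simpa [vsub_eq_sub, vadd_eq_add] using by rw [hz]; abel
  rw [this]
  exact AffineMap.lineMap_mem_affineSpan_pair _ _ _

lemma joinedIn_convex_diff_finite {B F : Set Plane} (hB : Convex ℝ B) (hBo : IsOpen B)
    (hF : F.Finite) {x y : Plane} (hx : x ∈ B \ F) (hy : y ∈ B \ F) :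
    JoinedIn (B \ F) x y := by
  classical
  set bad : Set Plane := ⋃ f ∈ F, ((line[ℝ, x, f] : Set Plane) ∪ (line[ℝ, y, f] : Set Plane))
    with hbad
  have hnull : volume bad = 0 := by
    rw [hbad]
    refine (measure_biUnion_null_iff hF.countable).mpr (fun f _ => ?_)
    refine le_antisymm ?_ zero_le
    calc volume ((line[ℝ, x, f] : Set Plane) ∪ (line[ℝ, y, f] : Set Plane))
        ≤ volume (line[ℝ, x, f] : Set Plane) + volume (line[ℝ, y, f] : Set Plane) :=
          measure_union_le _ _
      _ = 0 := by rw [span_pair_null, span_pair_null]; simp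
  have hpos : 0 < volume B := hBo.measure_pos volume ⟨x, hx.1⟩
  have hzex : ∃ z, z ∈ B ∧ z ∉ bad := by
    by_contra hcon
    push_neg at hcon
    have : B ⊆ bad := fun z hz => hcon z hz
    exact absurd (le_trans (measure_mono this) (le_of_eq hnull)) (not_le.mpr hpos)
  obtain ⟨z, hzB, hzbad⟩ := hzex
  have hseg1 : segment ℝ x z ⊆ B \ F := by
    intro w hw
    refine ⟨hB.segment_subset hx.1 hzB hw, fun hwF => ?_⟩
    apply hzbad
    have hwx : w ≠ x := fun h => hx.2 (h ▸ hwF)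
    exact Set.mem_biUnion hwF (Or.inl (mem_span_of_mem_segment hw hwx))
  have hseg2 : segment ℝ z y ⊆ B \ F := by
    intro w hw
    rw [segment_symm] at hw
    refine ⟨hB.segment_subset hy.1 hzB hw, fun hwF => ?_⟩
    apply hzbad
    have hwy : w ≠ y := fun h => hy.2 (h ▸ hwF)
    exact Set.mem_biUnion hwF (Or.inr (mem_span_of_mem_segment hw hwy))
  exact (JoinedIn.of_segment_subset hseg1).trans (JoinedIn.of_segment_subset hseg2)

lemma nonempty_diff_finite {W F : Set Plane} (hW : IsOpen W) (hne : W.Nonempty)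
    (hF : F.Finite) : (W \ F).Nonempty := by
  by_contra hcon
  rw [Set.not_nonempty_iff_eq_empty, Set.diff_eq_empty] at hcon
  have h1 : volume W = 0 :=
    le_antisymm (le_trans (measure_mono hcon) (le_of_eq (hF.measure_zero volume))) zero_le
  exact absurd h1 (ne_of_gt (hW.measure_pos volume hne))

lemma joinedIn_open_preconnected_diff_finite {U F : Set Plane} (hU : IsOpen U)
    (hUc : IsPreconnected U) (hF : F.Finite) {x y : Plane}
    (hx : x ∈ U \ F) (hy : y ∈ U \ F) : JoinedIn (U \ F) x y := by
  classical
  have hrad : ∀ p : Plane, p ∈ U → ∃ r : ℝ, 0 < r ∧ ball p r ⊆ U := by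
    intro p hp
    obtain ⟨r, hr, hball⟩ := Metric.isOpen_iff.1 hU p hp
    exact ⟨r, hr, hball⟩
  choose! rad hrad0 hradball using hrad
  set good : Plane → Prop :=
    fun p => ∃ q, q ∈ (ball p (rad p) \ F) ∧ JoinedIn (U \ F) x q with hgood
  have key : ∀ p ∈ U, good p → ∀ p' ∈ U,
      (ball p (rad p) ∩ ball p' (rad p')).Nonempty → good p' := by
    intro p hp ⟨q, hq, hjq⟩ p' hp' hball
    have hWopen : IsOpen (ball p (rad p) ∩ ball p' (rad p')) :=
      isOpen_ball.inter isOpen_ball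
    obtain ⟨w, hwW, hwF⟩ := nonempty_diff_finite hWopen hball hF
    have hjqw : JoinedIn (ball p (rad p) \ F) q w :=
      joinedIn_convex_diff_finite (convex_ball p (rad p)) isOpen_ball hF hq
        ⟨hwW.1, hwF⟩
    have hmono : ball p (rad p) \ F ⊆ U \ F :=
      Set.diff_subset_diff_left (hradball p hp)
    exact ⟨w, ⟨hwW.2, hwF⟩, hjq.trans (hjqw.mono hmono)⟩
  set S : Set Plane := ⋃ p ∈ {p ∈ U | good p}, ball p (rad p) with hS
  set T : Set Plane := ⋃ p ∈ {p ∈ U | ¬ good p}, ball p (rad p) with hT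
  have hgoodall : ∀ p ∈ U, good p := by
    by_contra hcon
    push_neg at hcon
    obtain ⟨p₁, hp₁U, hp₁⟩ := hcon
    have hSopen : IsOpen S := isOpen_biUnion (fun _ _ => isOpen_ball)
    have hTopen : IsOpen T := isOpen_biUnion (fun _ _ => isOpen_ball)
    have hcover : U ⊆ S ∪ T := by
      intro p hp
      by_cases hg : good p
      · exact Or.inl (Set.mem_biUnion ⟨hp, hg⟩ (mem_ball_self (hrad0 p hp)))
      · exact Or.inr (Set.mem_biUnion ⟨hp, hg⟩ (mem_ball_self (hrad0 p hp)))
    have hxgood : good x := ⟨x, ⟨mem_ball_self (hrad0 x hx.1), hx.2⟩, JoinedIn.refl hx⟩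
    have hUS : (U ∩ S).Nonempty :=
      ⟨x, hx.1, Set.mem_biUnion ⟨hx.1, hxgood⟩ (mem_ball_self (hrad0 x hx.1))⟩
    have hUT : (U ∩ T).Nonempty :=
      ⟨p₁, hp₁U, Set.mem_biUnion ⟨hp₁U, hp₁⟩ (mem_ball_self (hrad0 p₁ hp₁U))⟩
    obtain ⟨w, hwU, hwS, hwT⟩ := hUc S T hSopen hTopen hcover hUS hUT
    obtain ⟨p, hpmem, hwp⟩ := Set.mem_iUnion₂.mp hwS
    obtain ⟨p', hp'mem, hwp'⟩ := Set.mem_iUnion₂.mp hwT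
    exact hp'mem.2 (key p hpmem.1 hpmem.2 p' hp'mem.1 ⟨w, hwp, hwp'⟩)
  obtain ⟨q, hq, hjq⟩ := hgoodall y hy.1
  have hjqy : JoinedIn (ball y (rad y) \ F) q y :=
    joinedIn_convex_diff_finite (convex_ball y (rad y)) isOpen_ball hF hq
      ⟨mem_ball_self (hrad0 y hy.1), hy.2⟩
  exact hjq.trans (hjqy.mono (Set.diff_subset_diff_left (hradball y hy.1)))



lemma segment_subset_edgeUnion {V : Type} {G : SimpleGraph V} {f : V → Plane} {u v : V}
    (h : G.Adj u v) : segment ℝ (f u) (f v) ⊆ edgeUnion G f := by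
  intro p hp
  exact Set.mem_iUnion.mpr ⟨u, Set.mem_iUnion.mpr ⟨v, Set.mem_iUnion.mpr ⟨h, hp⟩⟩⟩

lemma edgeUnion_subset_ball {V : Type} {G : SimpleGraph V} {f : V → Plane} {R : ℝ}
    (h : ∀ v, ‖f v‖ < R) : edgeUnion G f ⊆ ball (0 : Plane) R := by
  intro p hp
  simp only [edgeUnion, Set.mem_iUnion] at hp
  obtain ⟨u, v, _, hseg⟩ := hp
  have hconv : segment ℝ (f u) (f v) ⊆ ball (0 : Plane) R :=
    (convex_ball _ _).segment_subset (mem_ball_zero_iff.mpr (h u)) (mem_ball_zero_iff.mpr (h v))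
  exact hconv hseg

lemma isCompact_seg (a b : Plane) : IsCompact (segment ℝ a b) := by
  rw [segment_eq_image']
  exact isCompact_Icc.image (continuous_const.add (continuous_id.smul continuous_const))

lemma isClosed_edgeUnion {V : Type} [Fintype V] (G : SimpleGraph V) (f : V → Plane) :
    IsClosed (edgeUnion G f) := by
  apply isClosed_iUnion_of_finite
  intro u
  apply isClosed_iUnion_of_finite
  intro v
  by_cases h : G.Adj u v
  · have heq : (⋃ _ : G.Adj u v, segment ℝ (f u) (f v)) = segment ℝ (f u) (f v) := by
      simp [h]
    rw [heq]
    exact (isCompact_seg _ _).isClosed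
  · simp [h]

lemma exists_vertex_bound {V : Type} [Fintype V] (f : V → Plane) :
    ∃ R : ℝ, 0 < R ∧ ∀ v, ‖f v‖ < R := by
  obtain ⟨M, hM⟩ := (Set.finite_range fun v => ‖f v‖).bddAbove
  exact ⟨max M 0 + 1, by positivity, fun v =>
    lt_of_le_of_lt (le_trans (hM ⟨v, rfl⟩) (le_max_left _ _)) (by linarith)⟩

lemma mem_segment_add (a b x t : Plane) :
    x + t ∈ segment ℝ (a + t) (b + t) ↔ x ∈ segment ℝ a b := by
  rw [add_comm x t, add_comm a t, add_comm b t]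
  exact mem_segment_translate ℝ t

lemma edgeUnion_sum {V W : Type} (G : SimpleGraph V) (H : SimpleGraph W)
    (f : V → Plane) (g : W → Plane) :
    edgeUnion (sumGraph G H) (Sum.elim f g) = edgeUnion G f ∪ edgeUnion H g := by
  apply Subset.antisymm
  · intro p hp
    simp only [edgeUnion, Set.mem_iUnion] at hp
    obtain ⟨u, v, huv, hseg⟩ := hp
    rcases u with u | u <;> rcases v with v | v
    · exact Or.inl (segment_subset_edgeUnion (show G.Adj u v from huv) hseg)
    · exact absurd huv (by simp [sumGraph])
    · exact absurd huv (by simp [sumGraph])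
    · exact Or.inr (segment_subset_edgeUnion (show H.Adj u v from huv) hseg)
  · intro p hp
    rcases hp with hp | hp <;> simp only [edgeUnion, Set.mem_iUnion] at hp ⊢
    · obtain ⟨u, v, huv, hseg⟩ := hp
      exact ⟨Sum.inl u, Sum.inl v, huv, hseg⟩
    · obtain ⟨u, v, huv, hseg⟩ := hp
      exact ⟨Sum.inr u, Sum.inr v, huv, hseg⟩

lemma prep {V : Type} [Fintype V] {G : SimpleGraph V} {f : V → Plane} {C : Set Plane}
    (h : IsOutsideObstacleRep G f C) (d : Plane) (hd : ‖d‖ = 1) :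
    ∃ (D : Set Plane) (R σ ε ρ : ℝ),
      IsOpen D ∧ IsConnected D ∧
      Disjoint D (edgeUnion G f) ∧ Disjoint D (Set.range f) ∧
      (∀ u v : V, u ≠ v → ¬ G.Adj u v → (segment ℝ (f u) (f v) ∩ D).Nonempty) ∧
      (∀ v, ‖f v‖ < R) ∧ 0 < R ∧
      R + 1 ≤ σ ∧ 0 < ε ∧ ε ≤ 1 ∧ ball (σ • d) ε ⊆ D ∧
      D ⊆ ball 0 ρ ∧ R < ρ ∧ σ + 1 ≤ ρ := by
  classical
  obtain ⟨⟨hinj, hgen, hCopen, hCconn, hCdisj, hiff⟩, hCout⟩ := h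
  obtain ⟨x₀, hx₀⟩ := hCconn.nonempty
  have hx₀out := hCout hx₀
  have hx₀c : x₀ ∈ (edgeUnion G f)ᶜ := hx₀out.1
  have hx₀unb : ¬ IsBounded (connectedComponentIn (edgeUnion G f)ᶜ x₀) := hx₀out.2
  obtain ⟨R, hR0, hRv⟩ := exists_vertex_bound f
  have hedge : edgeUnion G f ⊆ ball (0 : Plane) R := edgeUnion_subset_ball hRv
  set Ω : Set Plane := (edgeUnion G f)ᶜ \ Set.range f with hΩ
  have hΩopen : IsOpen Ω :=
    IsOpen.sdiff (isClosed_edgeUnion G f).isOpen_compl (Set.finite_range f).isClosed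
  have hCsubΩ : C ⊆ Ω := fun p hp => ⟨(hCout hp).1, Set.disjoint_left.mp hCdisj hp⟩
  set U : Set Plane := connectedComponentIn (edgeUnion G f)ᶜ x₀ with hU
  have hUopen : IsOpen U := (isClosed_edgeUnion G f).isOpen_compl.connectedComponentIn
  have hUconn : IsConnected U := isConnected_connectedComponentIn_iff.mpr hx₀c
  obtain ⟨z, hzU, hzR⟩ : ∃ z ∈ U, R < ‖z‖ := by
    by_contra hcon
    push_neg at hcon
    exact hx₀unb (Metric.isBounded_closedBall.subset
      (fun p hp => mem_closedBall_zero_iff.mpr (hcon p hp)))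
  have hznr : z ∉ Set.range f := by
    rintro ⟨v, rfl⟩; exact absurd hzR (not_lt.mpr (hRv v).le)
  have hx₀nr : x₀ ∉ Set.range f := Set.disjoint_left.mp hCdisj hx₀
  have path1 : JoinedIn (U \ Set.range f) x₀ z :=
    joinedIn_open_preconnected_diff_finite hUopen hUconn.isPreconnected
      (Set.finite_range f) ⟨mem_connectedComponentIn hx₀c, hx₀nr⟩ ⟨hzU, hznr⟩
  set σ : ℝ := max ‖z‖ R + 1 with hσ
  have hRσ : R + 1 ≤ σ := by
    have := le_max_right ‖z‖ R; simp only [hσ]; linarith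
  set w : Plane := σ • d with hw
  have hσ0 : 0 < σ := by have := norm_nonneg z; have := le_max_left ‖z‖ R; linarith
  have hnw : ‖w‖ = σ := by rw [hw, norm_smul, hd, Real.norm_eq_abs, abs_of_pos hσ0, mul_one]
  have path2 : JoinedIn {p : Plane | R < ‖p‖} z w :=
    joinedIn_outside hzR (by rw [hnw]; linarith)
  have hΩsub1 : U \ Set.range f ⊆ Ω :=
    Set.diff_subset_diff_left (connectedComponentIn_subset _ _)
  have hΩsub2 : {p : Plane | R < ‖p‖} ⊆ Ω := by
    intro p hp
    refine ⟨fun hmem => ?_, fun hmem => ?_⟩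
    · exact absurd (mem_ball_zero_iff.mp (hedge hmem)) (not_lt.mpr (le_of_lt hp))
    · obtain ⟨v, rfl⟩ := hmem; exact absurd (hRv v) (not_lt.mpr (le_of_lt hp))
  have pathA : JoinedIn Ω x₀ w := (path1.mono hΩsub1).trans (path2.mono hΩsub2)
  have hpt : ∀ u v : V, u ≠ v → ¬ G.Adj u v →
      ∃ p, p ∈ segment ℝ (f u) (f v) ∩ C := by
    intro u v hne hna
    have hnd : ¬ Disjoint (segment ℝ (f u) (f v)) C :=
      fun hdis => hna ((hiff u v hne).mpr hdis)
    obtain ⟨p, hp1, hp2⟩ := Set.not_disjoint_iff.mp hnd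
    exact ⟨p, hp1, hp2⟩
  choose! pt hptm using hpt
  have hCpc : IsPathConnected C := (hCopen.isConnected_iff_isPathConnected).mp hCconn
  set targets : Set Plane :=
    insert w {p | ∃ u v : V, u ≠ v ∧ ¬ G.Adj u v ∧ p = pt u v} with htargets
  have htfin : targets.Finite := by
    apply Set.Finite.insert
    apply Set.Finite.subset (Set.finite_range fun uv : V × V => pt uv.1 uv.2)
    rintro p ⟨u, v, _, _, rfl⟩
    exact ⟨(u, v), rfl⟩
  have hjoin : ∀ p ∈ targets, JoinedIn Ω x₀ p := by
    intro p hp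
    rcases hp with rfl | ⟨u, v, hne, hna, rfl⟩
    · exact pathA
    · exact (hCpc.joinedIn x₀ hx₀ _ (hptm u v hne hna).2).mono hCsubΩ
  set Rp : Plane → Set Plane :=
    fun p => if hp : p ∈ targets then Set.range (hjoin p hp).somePath else {x₀} with hRp
  have hRpx₀ : ∀ p, x₀ ∈ Rp p := by
    intro p
    by_cases hp : p ∈ targets
    · simp only [hRp, dif_pos hp]
      exact ⟨0, (hjoin p hp).somePath.source⟩
    · simp [hRp, dif_neg hp]
  have hRpΩ : ∀ p, Rp p ⊆ Ω := by
    intro p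
    by_cases hp : p ∈ targets
    · simp only [hRp, dif_pos hp]
      rintro q ⟨t, rfl⟩
      exact (hjoin p hp).somePath_mem t
    · simp only [hRp, dif_neg hp]
      intro q hq
      rw [Set.mem_singleton_iff] at hq
      subst hq
      exact hCsubΩ hx₀
  have hRppre : ∀ p, IsPreconnected (Rp p) := by
    intro p
    by_cases hp : p ∈ targets
    · simp only [hRp, dif_pos hp]
      exact isPreconnected_range (hjoin p hp).somePath.continuous
    · simp only [hRp, dif_neg hp]
      exact isPreconnected_singleton
  have hRpcpt : ∀ p, IsCompact (Rp p) := by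
    intro p
    by_cases hp : p ∈ targets
    · simp only [hRp, dif_pos hp]
      exact isCompact_range (hjoin p hp).somePath.continuous
    · simp only [hRp, dif_neg hp]
      exact isCompact_singleton
  have hRpmem : ∀ p (hp : p ∈ targets), p ∈ Rp p := by
    intro p hp
    simp only [hRp, dif_pos hp]
    exact ⟨1, (hjoin p hp).somePath.target⟩
  set K : Set Plane := {x₀} ∪ ⋃ p ∈ targets, Rp p with hK
  have hKcpt : IsCompact K :=
    isCompact_singleton.union (htfin.isCompact_biUnion fun p _ => hRpcpt p)
  have hKpre : IsPreconnected K := by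
    have heq : K = ⋃₀ (insert {x₀} (Rp '' targets)) := by
      rw [Set.sUnion_insert, Set.sUnion_image]
    rw [heq]
    apply isPreconnected_sUnion x₀
    · rintro S (rfl | ⟨p, hp, rfl⟩)
      · exact rfl
      · exact hRpx₀ p
    · rintro S (rfl | ⟨p, hp, rfl⟩)
      · exact isPreconnected_singleton
      · exact hRppre p
  have hKΩ : K ⊆ Ω := by
    rintro p (rfl | hp)
    · exact hCsubΩ hx₀
    · obtain ⟨q, hq, hpq⟩ := Set.mem_iUnion₂.mp hp
      exact hRpΩ q hpq
  have hKx₀ : x₀ ∈ K := Or.inl rfl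
  have hKw : w ∈ K := Or.inr (Set.mem_biUnion (Set.mem_insert _ _) (hRpmem w (Set.mem_insert _ _)))
  obtain ⟨δ, hδ0, hδsub⟩ := hKcpt.exists_thickening_subset_open hΩopen hKΩ
  set ε : ℝ := min δ 1 with hε
  have hε0 : 0 < ε := lt_min hδ0 one_pos
  set D : Set Plane := Metric.thickening ε K with hD
  have hDΩ : D ⊆ Ω :=
    le_trans (Metric.thickening_mono (min_le_left δ 1) K) hδsub
  have hDopen : IsOpen D := Metric.isOpen_thickening
  have hDconn : IsConnected D :=
    ⟨⟨x₀, Metric.self_subset_thickening hε0 K hKx₀⟩,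
      isPreconnected_thickening hKpre ⟨x₀, hKx₀⟩ hε0⟩
  obtain ⟨r, hr⟩ := (hKcpt.isBounded.thickening (δ := ε)).subset_closedBall 0
  set ρ : ℝ := max r (max R σ) + 1 with hρ
  refine ⟨D, R, σ, ε, ρ, hDopen, hDconn, ?_, ?_, ?_, hRv, hR0, hRσ, hε0, min_le_right _ _,
    ?_, ?_, ?_, ?_⟩
  · exact Set.disjoint_left.mpr fun p hp => (hDΩ hp).1
  · exact Set.disjoint_left.mpr fun p hp => (hDΩ hp).2
  · intro u v hne hna
    refine ⟨pt u v, (hptm u v hne hna).1, ?_⟩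
    exact Metric.self_subset_thickening hε0 K
      (Or.inr (Set.mem_biUnion (Set.mem_insert_of_mem _ ⟨u, v, hne, hna, rfl⟩)
        (hRpmem _ (Set.mem_insert_of_mem _ ⟨u, v, hne, hna, rfl⟩))))
  · exact Metric.ball_subset_thickening hKw ε
  · intro p hp
    rw [mem_ball_zero_iff]
    have h1 : ‖p‖ ≤ r := mem_closedBall_zero_iff.mp (hr hp)
    have := le_max_left r (max R σ)
    simp only [hρ]; linarith
  · have h1 := le_max_left R σ; have h2 := le_max_right r (max R σ)
    simp only [hρ]; linarith
  · have h1 := le_max_right R σ; have h2 := le_max_right r (max R σ)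
    simp only [hρ]; linarith

def e2 : Plane := EuclideanSpace.single (1 : Fin 2) (1 : ℝ)

lemma e2_apply0 : e2 0 = 0 := by simp [e2, EuclideanSpace.single_apply]

lemma e2_apply1 : e2 1 = 1 := by simp [e2, EuclideanSpace.single_apply]

lemma sub_apply0 (x y : Plane) : (x - y) 0 = x 0 - y 0 := rfl

lemma add_apply1 (x y : Plane) : (x + y) 1 = x 1 + y 1 := rfl

lemma smul_apply1 (a : ℝ) (x : Plane) : (a • x) 1 = a * x 1 := rfl

lemma neg_apply0 (x : Plane) : (-x) 0 = -(x 0) := rfl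

lemma exists_translation {V W : Type} [Fintype V] [Fintype W] (f : V → Plane) (g : W → Plane)
    (M : ℝ) :
    ∃ t : Plane, M < t 0 ∧
      (∀ v w, f v ≠ g w + t) ∧
      (∀ v v' : V, ∀ w : W, g w + t ∉ line[ℝ, f v, f v']) ∧
      (∀ w w' : W, ∀ v : V, f v ∉ line[ℝ, g w + t, g w' + t]) := by
  classical
  set B1 : Set Plane := ⋃ (v : V) (w : W), {f v - g w} with hB1
  set B2 : Set Plane := ⋃ (v : V) (v' : V) (w : W),
    (fun s : Plane => g w + s) ⁻¹' (line[ℝ, f v, f v'] : Set Plane) with hB2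
  set B3 : Set Plane := ⋃ (w : W) (w' : W) (v : V),
    (fun s : Plane => f v - s) ⁻¹' (line[ℝ, g w, g w'] : Set Plane) with hB3
  have hnull1 : volume B1 = 0 := by
    rw [hB1]
    refine measure_iUnion_null fun v => measure_iUnion_null fun w => ?_
    exact measure_singleton _
  have hnull2 : volume B2 = 0 := by
    rw [hB2]
    refine measure_iUnion_null fun v => measure_iUnion_null fun v' =>
      measure_iUnion_null fun w => ?_
    rw [measure_preimage_add]
    exact span_pair_null _ _
  have hnull3 : volume B3 = 0 := by
    rw [hB3]
    refine measure_iUnion_null fun w => measure_iUnion_null fun w' =>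
      measure_iUnion_null fun v => ?_
    have hcomp : (fun s : Plane => f v - s) = (fun s : Plane => f v + s) ∘ (Neg.neg) := by
      funext s; simp [sub_eq_add_neg]
    rw [hcomp, Set.preimage_comp, Measure.measure_preimage_neg, measure_preimage_add]
    exact span_pair_null _ _
  set c : Plane := (M + 2) • e1 with hc
  have hposball : 0 < volume (ball c 1) := measure_ball_pos volume c one_pos
  have hex : ∃ t, t ∈ ball c 1 ∧ t ∉ B1 ∪ B2 ∪ B3 := by
    by_contra hcon
    push_neg at hcon
    have hsub : ball c 1 ⊆ B1 ∪ B2 ∪ B3 := fun t ht => hcon t ht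
    have : volume (ball c 1) = 0 := by
      refine le_antisymm (le_trans (measure_mono hsub) ?_) zero_le
      rw [measure_union_null (measure_union_null hnull1 hnull2) hnull3]
    exact absurd this (ne_of_gt hposball)
  obtain ⟨t, htball, htbad⟩ := hex
  rw [Set.mem_union, Set.mem_union] at htbad
  push_neg at htbad
  obtain ⟨⟨ht1, ht2⟩, ht3⟩ := htbad
  refine ⟨t, ?_, ?_, ?_, ?_⟩
  · have h1 : |(t - c) 0| ≤ ‖t - c‖ := abs_coord_le _ _
    have h2 : ‖t - c‖ < 1 := by rwa [mem_ball, dist_eq_norm] at htball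
    have h3 : (t - c) 0 = t 0 - (M + 2) := by
      rw [sub_apply0, hc, smul_apply0, e1_apply0, mul_one]
    rw [h3] at h1
    have := abs_lt.mp (lt_of_le_of_lt h1 h2)
    linarith [this.1]
  · intro v w heq
    apply ht1
    rw [hB1]
    refine Set.mem_iUnion.mpr ⟨v, Set.mem_iUnion.mpr ⟨w, ?_⟩⟩
    rw [Set.mem_singleton_iff, heq]
    abel
  · intro v v' w hmem
    apply ht2
    rw [hB2]
    exact Set.mem_iUnion.mpr ⟨v, Set.mem_iUnion.mpr ⟨v', Set.mem_iUnion.mpr ⟨w, hmem⟩⟩⟩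
  · intro w w' v hmem
    apply ht3
    rw [hB3]
    refine Set.mem_iUnion.mpr ⟨w, Set.mem_iUnion.mpr ⟨w', Set.mem_iUnion.mpr ⟨v, ?_⟩⟩⟩
    show f v - t ∈ (line[ℝ, g w, g w'] : Set Plane)
    have := (mem_line_translate (g w) (g w') (f v - t) t).mp
    simp only [sub_add_cancel] at this
    exact this hmem

lemma edgeUnion_translate {W : Type} (H : SimpleGraph W) (g : W → Plane) (t : Plane) :
    edgeUnion H (fun w => g w + t) = (fun x => x + t) '' edgeUnion H g := by
  ext x
  simp only [edgeUnion, Set.mem_iUnion, Set.mem_image]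
  constructor
  · rintro ⟨u, v, huv, hx⟩
    refine ⟨x - t, ⟨u, v, huv, ?_⟩, sub_add_cancel x t⟩
    have h2 : (x - t) + t ∈ segment ℝ (g u + t) (g v + t) := by rwa [sub_add_cancel]
    exact (mem_segment_add _ _ _ _).mp h2
  · rintro ⟨y, ⟨u, v, huv, hy⟩, rfl⟩
    exact ⟨u, v, huv, (mem_segment_add _ _ _ _).mpr hy⟩

lemma e1_apply1 : e1 1 = 0 := by simp [e1, EuclideanSpace.single_apply]

lemma cross_segment_meets {a b : Plane} {lo hi : ℝ} (hlo : a 0 < lo) (hhi : hi < b 0)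
    (hlh : lo < hi) : ∃ x ∈ segment ℝ a b, lo < x 0 ∧ x 0 < hi := by
  set φ : ℝ → ℝ := fun s => (1 - s) * a 0 + s * b 0 with hφ
  have hφcont : Continuous φ := by fun_prop
  have hφ0 : φ 0 = a 0 := by simp [hφ]
  have hφ1 : φ 1 = b 0 := by simp [hφ]
  have hc : (lo + hi) / 2 ∈ Set.Icc (φ 0) (φ 1) := by
    rw [hφ0, hφ1]; constructor <;> [linarith; linarith]
  have hiv := intermediate_value_Icc (zero_le_one) hφcont.continuousOn hc
  obtain ⟨s, hs01, hsc⟩ := hiv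
  refine ⟨(1 - s) • a + s • b, ?_, ?_, ?_⟩
  · rw [segment_eq_image]
    exact ⟨s, hs01, rfl⟩
  · have : ((1 - s) • a + s • b) 0 = φ s := by
      rw [add_apply0, smul_apply0, smul_apply0]
    rw [this, hsc]; linarith
  · have : ((1 - s) • a + s • b) 0 = φ s := by
      rw [add_apply0, smul_apply0, smul_apply0]
    rw [this, hsc]; linarith

end Obst

/-- If finite simple graphs `G` and `H` each have an outside-obstacle
representation, then their disjoint union has an outside-obstacle representation. -/
theorem sumGraph_hasOutsideObstacleRep
    {V W : Type} [Fintype V] [Fintype W] (G : SimpleGraph V) (H : SimpleGraph W)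
    (hG : ∃ (f : V → Plane) (C : Set Plane), IsOutsideObstacleRep G f C)
    (hH : ∃ (f : W → Plane) (C : Set Plane), IsOutsideObstacleRep H f C) :
    ∃ (f : V ⊕ W → Plane) (C : Set Plane), IsOutsideObstacleRep (sumGraph G H) f C := by
  classical
  open Obst Set Metric Bornology in
  obtain ⟨f, CG, hGrep⟩ := hG
  obtain ⟨g, CH, hHrep⟩ := hH
  obtain ⟨DG, RG, σG, εG, ρG, hDGopen, hDGconn, hDGedge, hDGrange, hDGpt, hRGv, hRG0,
    hRσG, hεG0, hεG1, hballG, hDGρ, hRρG, hσρG⟩ := Obst.prep hGrep Obst.e1 Obst.norm_e1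
  obtain ⟨DH, RH, σH, εH, ρH, hDHopen, hDHconn, hDHedge, hDHrange, hDHpt, hRHv, hRH0,
    hRσH, hεH0, hεH1, hballH, hDHρ, hRρH, hσρH⟩ :=
    Obst.prep hHrep (-Obst.e1) (by rw [norm_neg, Obst.norm_e1])
  obtain ⟨t, ht0, ht1, ht2, ht3⟩ :=
    Obst.exists_translation f g (ρG + ρH + σG + σH + RG + RH + 5)
  set g' : W → Plane := fun w => g w + t with hg'
  set F : V ⊕ W → Plane := Sum.elim f g' with hF
  set S : Set Plane := {x : Plane | σG < x 0 ∧ x 0 < t 0 - RH} with hSdef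
  set DH' : Set Plane := (fun x => x + t) '' DH with hDH'def
  set C : Set Plane := (DG ∪ S) ∪ DH' with hCdef
  have hσG0 : 0 < σG := by linarith
  have hσH0 : 0 < σH := by linarith
  have hρG0 : 0 < ρG := by linarith
  have hρH0 : 0 < ρH := by linarith
  have hfv0 : ∀ v : V, |f v 0| < RG := fun v => lt_of_le_of_lt (Obst.abs_coord_le _ _) (hRGv v)
  have hgw0 : ∀ w : W, |g w 0| < RH := fun w => lt_of_le_of_lt (Obst.abs_coord_le _ _) (hRHv w)
  have hg'w0 : ∀ w : W, t 0 - RH < g' w 0 := by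
    intro w
    have h1 := (abs_lt.mp (hgw0 w)).1
    have h2 : g' w 0 = g w 0 + t 0 := Obst.add_apply0 _ _
    linarith
  have hDG0 : ∀ x ∈ DG, |x 0| < ρG := fun x hx =>
    lt_of_le_of_lt (Obst.abs_coord_le _ _) (mem_ball_zero_iff.mp (hDGρ hx))
  have hDH'0 : ∀ x ∈ DH', t 0 - ρH < x 0 := by
    rintro x ⟨y, hy, rfl⟩
    have h1 := (abs_lt.mp (lt_of_le_of_lt (Obst.abs_coord_le y 0)
      (mem_ball_zero_iff.mp (hDHρ hy)))).1
    have h2 : (y + t) 0 = y 0 + t 0 := Obst.add_apply0 _ _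
    linarith
  have hEG0 : ∀ x ∈ edgeUnion G f, |x 0| < RG := fun x hx =>
    lt_of_le_of_lt (Obst.abs_coord_le _ _)
      (mem_ball_zero_iff.mp (Obst.edgeUnion_subset_ball hRGv hx))
  have hEH'0 : ∀ x ∈ edgeUnion H g', t 0 - RH < x 0 := by
    intro x hx
    rw [hg', Obst.edgeUnion_translate] at hx
    obtain ⟨y, hy, rfl⟩ := hx
    have h1 := (abs_lt.mp (lt_of_le_of_lt (Obst.abs_coord_le y 0)
      (mem_ball_zero_iff.mp (Obst.edgeUnion_subset_ball hRHv hy)))).1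
    have h2 : (y + t) 0 = y 0 + t 0 := Obst.add_apply0 _ _
    linarith
  -- entry points
  set pG : Plane := (σG + εG / 2) • Obst.e1 with hpGdef
  have hpGDG : pG ∈ DG := by
    apply hballG
    rw [mem_ball, dist_eq_norm]
    have heq : pG - σG • Obst.e1 = (εG / 2) • Obst.e1 := by rw [hpGdef]; module
    rw [heq, norm_smul, Obst.norm_e1, Real.norm_eq_abs, abs_of_pos (by linarith), mul_one]
    linarith
  have hpG0 : pG 0 = σG + εG / 2 := by
    rw [hpGdef, Obst.smul_apply0, Obst.e1_apply0, mul_one]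
  have hpGS : pG ∈ S := by
    refine ⟨?_, ?_⟩ <;> rw [hpG0] <;> linarith
  set pH : Plane := (-(σH + εH / 2)) • Obst.e1 + t with hpHdef
  have hpHDH' : pH ∈ DH' := by
    refine ⟨(-(σH + εH / 2)) • Obst.e1, ?_, rfl⟩
    apply hballH
    rw [mem_ball, dist_eq_norm]
    have heq : (-(σH + εH / 2)) • Obst.e1 - σH • (-Obst.e1) = (-(εH / 2)) • Obst.e1 := by
      module
    rw [heq, norm_smul, Obst.norm_e1, Real.norm_eq_abs, abs_of_neg (by linarith), mul_one]
    linarith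
  have hpH0 : pH 0 = -(σH + εH / 2) + t 0 := by
    rw [hpHdef, Obst.add_apply0, Obst.smul_apply0, Obst.e1_apply0, mul_one]
  have hpHS : pH ∈ S := by
    refine ⟨?_, ?_⟩ <;> rw [hpH0] <;> linarith
  -- openness and connectivity of C
  have hSpre : S = (fun x : Plane => x 0) ⁻¹' (Set.Ioo σG (t 0 - RH)) := rfl
  have hSopen : IsOpen S := by
    rw [hSpre]; exact (isOpen_Ioo).preimage (Obst.continuous_coord 0)
  have hSconv : Convex ℝ S := by
    rw [hSpre]
    exact (convex_Ioo σG (t 0 - RH)).is_linear_preimage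
      ⟨fun x y => Obst.add_apply0 x y, fun c x => Obst.smul_apply0 c x⟩
  have hSconn : IsConnected S := ⟨⟨pG, hpGS⟩, hSconv.isPreconnected⟩
  have hDH'open : IsOpen DH' := (Homeomorph.addRight t).isOpenMap DH hDHopen
  have hDH'conn : IsConnected DH' :=
    hDHconn.image _ (continuous_id.add continuous_const).continuousOn
  have hCopen : IsOpen C := (hDGopen.union hSopen).union hDH'open
  have hCconn : IsConnected C :=
    ((hDGconn.union ⟨pG, hpGDG, hpGS⟩ hSconn).union ⟨pH, Or.inr hpHS, hpHDH'⟩ hDH'conn)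
  -- disjointness from edges
  have hCedge : Disjoint C (edgeUnion (sumGraph G H) F) := by
    rw [Set.disjoint_left]
    intro x hxC hxE
    rw [hF, Obst.edgeUnion_sum] at hxE
    rcases hxE with hxE | hxE
    · have h1 := abs_lt.mp (hEG0 x hxE)
      rcases hxC with (hxC | hxC) | hxC
      · exact Set.disjoint_left.mp hDGedge hxC hxE
      · have h2 := hxC.1
        linarith [h1.2]
      · have h2 := hDH'0 x hxC
        linarith [h1.2]
    · have h1 := hEH'0 x hxE
      rcases hxC with (hxC | hxC) | hxC
      · have h2 := (abs_lt.mp (hDG0 x hxC)).2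
        linarith
      · have h2 := hxC.2
        linarith
      · obtain ⟨y, hy, rfl⟩ := hxC
        rw [hg', Obst.edgeUnion_translate] at hxE
        obtain ⟨z, hz, hzeq⟩ := hxE
        have hzy : z = y := add_right_cancel hzeq
        subst hzy
        exact Set.disjoint_left.mp hDHedge hy hz
  -- disjointness from vertices
  have hCrange : Disjoint C (Set.range F) := by
    rw [Set.disjoint_right]
    rintro x hxr hxC
    rw [hF, Sum.elim_range] at hxr
    rcases hxr with ⟨v, rfl⟩ | ⟨w, rfl⟩
    · have h0 := abs_lt.mp (hfv0 v)
      rcases hxC with (hxC | hxC) | hxC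
      · exact Set.disjoint_left.mp hDGrange hxC ⟨v, rfl⟩
      · have := hxC.1; linarith [h0.2]
      · have := hDH'0 _ hxC; linarith [h0.2]
    · have h0 := hg'w0 w
      rcases hxC with (hxC | hxC) | hxC
      · have := (abs_lt.mp (hDG0 _ hxC)).2; linarith
      · have := hxC.2; linarith
      · obtain ⟨y, hy, heq⟩ := hxC
        have hyg : y = g w := by
          apply add_right_cancel (b := t)
          exact heq
        subst hyg
        exact Set.disjoint_left.mp hDHrange hy ⟨w, rfl⟩
  -- the outside condition
  have hCout : C ⊆ outsideRegion (sumGraph G H) F := by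
    intro p hp
    refine ⟨Set.disjoint_left.mp hCedge hp, ?_⟩
    intro hbd
    have hCcomp : C ⊆ connectedComponentIn (edgeUnion (sumGraph G H) F)ᶜ p :=
      hCconn.isPreconnected.subset_connectedComponentIn hp
        (fun q hq => Set.disjoint_left.mp hCedge hq)
    have hSsub : S ⊆ connectedComponentIn (edgeUnion (sumGraph G H) F)ᶜ p :=
      fun q hq => hCcomp (Or.inl (Or.inr hq))
    have hSbd : Bornology.IsBounded S := hbd.subset hSsub
    obtain ⟨r, hr⟩ := hSbd.subset_closedBall 0
    set y : Plane := ((σG + (t 0 - RH)) / 2) • Obst.e1 + (|r| + 1) • Obst.e2 with hydef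
    have hy0 : y 0 = (σG + (t 0 - RH)) / 2 := by
      rw [hydef, Obst.add_apply0, Obst.smul_apply0, Obst.smul_apply0,
        Obst.e1_apply0, Obst.e2_apply0]
      ring
    have hy1 : y 1 = |r| + 1 := by
      rw [hydef, Obst.add_apply1, Obst.smul_apply1, Obst.smul_apply1,
        Obst.e1_apply1, Obst.e2_apply1]
      ring
    have hyS : y ∈ S := by
      refine ⟨?_, ?_⟩ <;> rw [hy0] <;> linarith
    have hynorm : ‖y‖ ≤ r := mem_closedBall_zero_iff.mp (hr hyS)
    have habs : |y 1| ≤ ‖y‖ := Obst.abs_coord_le y 1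
    rw [hy1] at habs
    have : |r| + 1 ≤ |(|r| + 1)| := le_abs_self _
    have hrabs : r ≤ |r| := le_abs_self r
    have h2 : |(|r| + 1)| = |r| + 1 := abs_of_pos (by positivity)
    rw [h2] at habs
    linarith
  -- injectivity
  have hFinj : Function.Injective F := by
    rintro (u | u) (v | v) heq
    · exact congrArg Sum.inl (hGrep.1.1 heq)
    · exact absurd heq (ht1 u v)
    · exact absurd heq.symm (ht1 v u)
    · refine congrArg Sum.inr (hHrep.1.1 ?_)
      exact add_right_cancel (b := t) heq
  -- general position
  have hgen : InGenPos (Set.range F) := by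
    intro p hp q hq r hr hpq hpr hqr hcol
    rw [hF, Sum.elim_range] at hp hq hr
    have hm1 : p ∈ ({p, q, r} : Set Plane) := Set.mem_insert p _
    have hm2 : q ∈ ({p, q, r} : Set Plane) := Set.mem_insert_of_mem _ (Set.mem_insert q _)
    have hm3 : r ∈ ({p, q, r} : Set Plane) :=
      Set.mem_insert_of_mem _ (Set.mem_insert_of_mem _ rfl)
    have hmix2 : ∀ p₁ q₁ : Plane, p₁ ∈ Set.range f → q₁ ∈ Set.range f →
        ∀ x, x ∈ Set.range g' → x ∈ line[ℝ, p₁, q₁] → False := by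
      rintro p₁ q₁ ⟨v1, rfl⟩ ⟨v2, rfl⟩ x ⟨w, rfl⟩ hmem
      exact ht2 v1 v2 w hmem
    have hmix1 : ∀ x ∈ Set.range f, ∀ a b : Plane, a ∈ Set.range g' → b ∈ Set.range g' →
        x ∈ line[ℝ, a, b] → False := by
      rintro x ⟨v, rfl⟩ a b ⟨w1, rfl⟩ ⟨w2, rfl⟩ hmem
      exact ht3 w1 w2 v hmem
    rcases hp with hpf | hpg <;> rcases hq with hqf | hqg <;> rcases hr with hrf | hrg
    · exact hGrep.1.2.1 p hpf q hqf r hrf hpq hpr hqr hcol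
    · exact hmix2 p q hpf hqf r hrg (hcol.mem_affineSpan_of_mem_of_ne hm1 hm2 hm3 hpq)
    · exact hmix2 p r hpf hrf q hqg (hcol.mem_affineSpan_of_mem_of_ne hm1 hm3 hm2 hpr)
    · exact hmix1 p hpf q r hqg hrg (hcol.mem_affineSpan_of_mem_of_ne hm2 hm3 hm1 hqr)
    · exact hmix2 q r hqf hrf p hpg (hcol.mem_affineSpan_of_mem_of_ne hm2 hm3 hm1 hqr)
    · exact hmix1 q hqf p r hpg hrg (hcol.mem_affineSpan_of_mem_of_ne hm1 hm3 hm2 hpr)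
    · exact hmix1 r hrf p q hpg hqg (hcol.mem_affineSpan_of_mem_of_ne hm1 hm2 hm3 hpq)
    · obtain ⟨w1, rfl⟩ := hpg
      obtain ⟨w2, rfl⟩ := hqg
      obtain ⟨w3, rfl⟩ := hrg
      have himg : ({g' w1, g' w2, g' w3} : Set Plane) = (fun x => x + t) '' {g w1, g w2, g w3} := by
        rw [hg']
        simp [Set.image_insert_eq]
      rw [himg] at hcol
      have hcol' := Obst.collinear_translate t hcol
      have h12 : g w1 ≠ g w2 := fun h => hpq (by rw [hg']; simp only; rw [h])
      have h13 : g w1 ≠ g w3 := fun h => hpr (by rw [hg']; simp only; rw [h])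
      have h23 : g w2 ≠ g w3 := fun h => hqr (by rw [hg']; simp only; rw [h])
      exact hHrep.1.2.1 (g w1) ⟨w1, rfl⟩ (g w2) ⟨w2, rfl⟩ (g w3) ⟨w3, rfl⟩ h12 h13 h23 hcol'
  -- the adjacency characterization
  have hAdj : ∀ a b : V ⊕ W, a ≠ b →
      ((sumGraph G H).Adj a b ↔ Disjoint (segment ℝ (F a) (F b)) C) := by
    rintro (u | u) (v | v) hne
    · have hne' : u ≠ v := fun h => hne (by rw [h])
      constructor
      · intro hadj
        have hadj' : G.Adj u v := hadj
        rw [Set.disjoint_left]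
        intro x hxseg hxC
        have hxseg' : x ∈ segment ℝ (f u) (f v) := hxseg
        have hxE : x ∈ edgeUnion G f := Obst.segment_subset_edgeUnion hadj' hxseg'
        have h0 := abs_lt.mp (hEG0 x hxE)
        rcases hxC with (hxC | hxC) | hxC
        · exact Set.disjoint_left.mp hDGedge hxC hxE
        · have := hxC.1; linarith [h0.2]
        · have := hDH'0 x hxC; linarith [h0.2]
      · intro hdis
        by_contra hna
        have hna' : ¬ G.Adj u v := hna
        obtain ⟨x, hx1, hx2⟩ := hDGpt u v hne' hna'
        exact Set.disjoint_left.mp hdis hx1 (Or.inl (Or.inl hx2))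
    · constructor
      · intro hadj
        exact ((hadj : False)).elim
      · intro hdis
        exfalso
        have hfu : f u 0 < σG := by have := (abs_lt.mp (hfv0 u)).2; linarith
        have hgv : t 0 - RH < g' v 0 := hg'w0 v
        obtain ⟨x, hxseg, hx1, hx2⟩ := Obst.cross_segment_meets hfu hgv (by linarith)
        exact Set.disjoint_left.mp hdis hxseg (Or.inl (Or.inr ⟨hx1, hx2⟩))
    · constructor
      · intro hadj
        exact ((hadj : False)).elim
      · intro hdis
        exfalso
        have hfv' : f v 0 < σG := by have := (abs_lt.mp (hfv0 v)).2; linarith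
        have hgu : t 0 - RH < g' u 0 := hg'w0 u
        obtain ⟨x, hxseg, hx1, hx2⟩ := Obst.cross_segment_meets hfv' hgu (by linarith)
        have hxseg2 : x ∈ segment ℝ (g' u) (f v) := by rwa [segment_symm]
        exact Set.disjoint_left.mp hdis hxseg2 (Or.inl (Or.inr ⟨hx1, hx2⟩))
    · have hne' : u ≠ v := fun h => hne (by rw [h])
      constructor
      · intro hadj
        have hadj' : H.Adj u v := hadj
        rw [Set.disjoint_left]
        intro x hxseg hxC
        have hxseg' : x ∈ segment ℝ (g u + t) (g v + t) := hxseg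
        have hxE : x ∈ edgeUnion H g' := Obst.segment_subset_edgeUnion (f := g') hadj' hxseg
        have h0 := hEH'0 x hxE
        rcases hxC with (hxC | hxC) | hxC
        · have := (abs_lt.mp (hDG0 x hxC)).2; linarith
        · have := hxC.2; linarith
        · obtain ⟨y, hy, rfl⟩ := hxC
          have hyseg : y ∈ segment ℝ (g u) (g v) := (Obst.mem_segment_add _ _ _ _).mp hxseg'
          exact Set.disjoint_left.mp hDHedge hy (Obst.segment_subset_edgeUnion hadj' hyseg)
      · intro hdis
        by_contra hna
        have hna' : ¬ H.Adj u v := hna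
        obtain ⟨x, hx1, hx2⟩ := hDHpt u v hne' hna'
        have hxt : x + t ∈ segment ℝ (g u + t) (g v + t) := (Obst.mem_segment_add _ _ _ _).mpr hx1
        exact Set.disjoint_left.mp hdis hxt (Or.inr ⟨x, hx2, rfl⟩)
  exact ⟨F, C, ⟨hFinj, hgen, hCopen, hCconn, hCrange, hAdj⟩, hCout⟩


end
end

section
/- In every outside-obstacle representation (f, C) of a finite simple graph G, for every clique Z of G the convex hull of the point set f(Z) is disjoint from the obstacle C. -/
noncomputable section

/-- Aux: a point of a triangle (affine basis hull) not in the interior lies on an edge. -/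
lemma triangle_boundary (b : AffineBasis (Fin 3) ℝ Plane) {x : Plane}
    (hx : x ∈ convexHull ℝ (Set.range ⇑b)) (hx' : x ∉ interior (convexHull ℝ (Set.range ⇑b))) :
    ∃ i j : Fin 3, i ≠ j ∧ x ∈ segment ℝ (b i) (b j) := by
  have hnn : ∀ i, 0 ≤ b.coord i x := by
    rw [b.convexHull_eq_nonneg_coord] at hx; exact hx
  rw [b.interior_convexHull] at hx'
  simp only [Set.mem_setOf_eq, not_forall, not_lt] at hx'
  obtain ⟨i, hi⟩ := hx'
  have hz : b.coord i x = 0 := le_antisymm hi (hnn i)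
  have hsum := b.sum_coord_apply_eq_one x
  have hcomb := b.linear_combination_coord_eq_self x
  rw [Fin.sum_univ_three] at hsum hcomb
  have hi3 : i = 0 ∨ i = 1 ∨ i = 2 := by fin_cases i <;> simp
  rcases hi3 with rfl | rfl | rfl
  · exact ⟨1, 2, by decide, b.coord 1 x, b.coord 2 x, hnn 1, hnn 2,
      by rw [hz] at hsum; linarith, by rw [hz, zero_smul, zero_add] at hcomb; exact hcomb⟩
  · exact ⟨0, 2, by decide, b.coord 0 x, b.coord 2 x, hnn 0, hnn 2,
      by rw [hz] at hsum; linarith, by rw [hz, zero_smul, add_zero] at hcomb; exact hcomb⟩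
  · exact ⟨0, 1, by decide, b.coord 0 x, b.coord 1 x, hnn 0, hnn 1,
      by rw [hz] at hsum; linarith, by rw [hz, zero_smul, add_zero] at hcomb; exact hcomb⟩

/-- In every outside-obstacle representation of a finite simple graph,
the convex hull of the point set of any clique is disjoint from the obstacle. -/
theorem clique_convexHull_disjoint_obstacle
    {V : Type} [Fintype V] (G : SimpleGraph V) (f : V → Plane) (C : Set Plane)
    (hrep : IsOutsideObstacleRep G f C) (Z : Set V) (hZ : Z.Pairwise G.Adj) :
    Disjoint (convexHull ℝ (f '' Z)) C := by
  classical
  obtain ⟨⟨hinj, hgp, hCopen, hCconn, hCdisj, hiff⟩, hout⟩ := hrep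
  rw [Set.disjoint_right]
  intro c hc2 hc1
  rw [convexHull_eq_union] at hc1
  simp only [Set.mem_iUnion] at hc1
  obtain ⟨t, hts, hai, hct⟩ := hc1
  have hcard : t.card ≤ 3 := by
    have h1 := hai.card_le_finrank_succ
    have h2 : Module.finrank ℝ (vectorSpan ℝ (Set.range ((↑) : t → Plane))) ≤
        Module.finrank ℝ Plane := Submodule.finrank_le _
    have h3 : Module.finrank ℝ Plane = 2 := finrank_euclideanSpace_fin
    simp only [Fintype.card_coe] at h1
    omega
  have hc0 : t.card ≠ 0 := by
    rintro h
    rw [Finset.card_eq_zero] at h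
    subst h
    simp at hct
  have h123 : t.card = 1 ∨ t.card = 2 ∨ t.card = 3 := by omega
  rcases h123 with h | h | h
  · obtain ⟨a, rfl⟩ := Finset.card_eq_one.mp h
    simp only [Finset.coe_singleton, convexHull_singleton, Set.mem_singleton_iff] at hct
    subst hct
    have : c ∈ f '' Z := hts (by simp)
    exact Set.disjoint_left.mp hCdisj hc2 ⟨this.choose, this.choose_spec.2⟩
  · obtain ⟨a, d, had, ht2⟩ := Finset.card_eq_two.mp h
    rw [ht2] at hts hct
    have ha : a ∈ f '' Z := hts (by simp)
    have hd : d ∈ f '' Z := hts (by simp)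
    obtain ⟨u, hu, rfl⟩ := ha
    obtain ⟨v, hv, rfl⟩ := hd
    have huv : u ≠ v := fun h' => had (by rw [h'])
    have hdisj := (hiff u v huv).mp (hZ hu hv huv)
    rw [Finset.coe_insert, Finset.coe_singleton, convexHull_pair] at hct
    exact Set.disjoint_left.mp hdisj hct hc2
  · -- triangle case
    set e : Fin 3 ≃ t := (t.equivFinOfCardEq h).symm with he
    set p : Fin 3 → Plane := fun i => ↑(e i) with hp
    have hindp : AffineIndependent ℝ p := hai.comp_embedding e.toEmbedding
    have hrange : Set.range p = (↑t : Set Plane) := by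
      have : Set.range p = ((↑) : t → Plane) '' (Set.range e) := by
        rw [← Set.range_comp]; rfl
      rw [this, Equiv.range_eq_univ, Set.image_univ]
      exact Subtype.range_coe
    have htot : affineSpan ℝ (Set.range p) = ⊤ := by
      rw [hindp.affineSpan_eq_top_iff_card_eq_finrank_add_one]
      simp [finrank_euclideanSpace_fin]
    set b : AffineBasis (Fin 3) ℝ Plane := ⟨p, hindp, htot⟩ with hb
    have hbcoe : ⇑b = p := rfl
    have hchull : c ∈ convexHull ℝ (Set.range ⇑b) := by
      rw [hbcoe, hrange]; exact hct
    have hseg : ∀ i j : Fin 3, i ≠ j →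
        segment ℝ (p i) (p j) ⊆ edgeUnion G f ∧ Disjoint (segment ℝ (p i) (p j)) C := by
      intro i j hij
      have hi : p i ∈ f '' Z := hts (by rw [← hrange]; exact ⟨i, rfl⟩)
      have hj : p j ∈ f '' Z := hts (by rw [← hrange]; exact ⟨j, rfl⟩)
      obtain ⟨u, hu, hui⟩ := hi
      obtain ⟨v, hv, hvj⟩ := hj
      have hne : p i ≠ p j := hindp.injective.ne hij
      have huv : u ≠ v := fun h' => hne (by rw [← hui, ← hvj, h'])
      have hadj := hZ hu hv huv
      constructor
      · rw [← hui, ← hvj]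
        exact fun x hx => Set.mem_iUnion.mpr ⟨u, Set.mem_iUnion.mpr ⟨v,
          Set.mem_iUnion.mpr ⟨hadj, hx⟩⟩⟩
      · rw [← hui, ← hvj]
        exact (hiff u v huv).mp hadj
    set T : Set Plane := convexHull ℝ (Set.range ⇑b) with hT
    by_cases hin : c ∈ interior T
    · have hcout := hout hc2
      obtain ⟨hcc, hcb⟩ := hcout
      apply hcb
      have hTcompact : IsCompact T := (Set.finite_range ⇑b).isCompact_convexHull (𝕜 := ℝ)
      have hTclosed : IsClosed T := hTcompact.isClosed
      have hKsub : connectedComponentIn (edgeUnion G f)ᶜ c ⊆ interior T ∪ Tᶜ := by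
        intro x hx
        have hxc : x ∈ (edgeUnion G f)ᶜ := connectedComponentIn_subset _ _ hx
        by_cases hxT : x ∈ T
        · left
          by_contra hxi
          obtain ⟨i, j, hij, hxseg⟩ := triangle_boundary b hxT hxi
          exact hxc ((hseg i j hij).1 hxseg)
        · right; exact hxT
      have hKint : connectedComponentIn (edgeUnion G f)ᶜ c ⊆ interior T :=
        IsPreconnected.subset_left_of_subset_union isOpen_interior hTclosed.isOpen_compl
          (Set.disjoint_compl_right_iff_subset.mpr interior_subset) hKsub
          ⟨c, mem_connectedComponentIn hcc, hin⟩ isPreconnected_connectedComponentIn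
      have hTbound : Bornology.IsBounded T :=
        isBounded_convexHull.mpr (Set.finite_range ⇑b).isBounded
      exact hTbound.subset (hKint.trans interior_subset)
    · obtain ⟨i, j, hij, hcseg⟩ := triangle_boundary b hchull hin
      exact Set.disjoint_left.mp (hseg i j hij).2 hcseg hc2


end
end
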